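/- arXiv:2210.07943 — 13 statements merged into one kernel-verified Lean document; each statement's English description precedes it below -/
import Mathlib

section
/- For the Leslie–Gower competition map with positive parameters, suppose X ∈ (0, K₁), Y > 0, and h(X) < k(X). Then the next-iterate operator L_h(X, h(X)) = G(X, h(X)) − h(F(X, h(X))) is strictly positive. -/
noncomputable def F (r₁ K₁ α₁ X Y : ℝ) : ℝ := (1 + r₁) * X / (1 + r₁ / K₁ * X + α₁ * Y)
noncomputable def G (r₂ K₂ α₂ X Y : ℝ) : ℝ := (1 + r₂) * Y / (1 + r₂ / K₂ * Y + α₂ * X)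
noncomputable def h (r₁ K₁ α₁ X : ℝ) : ℝ := r₁ / (α₁ * K₁) * (K₁ - X)
noncomputable def k (r₂ K₂ α₂ X : ℝ) : ℝ := K₂ / r₂ * (r₂ - α₂ * X)

theorem stmt5 (r₁ r₂ K₁ K₂ α₁ α₂ : ℝ)
    (hr₁ : 0 < r₁) (hr₂ : 0 < r₂) (hK₁ : 0 < K₁) (hK₂ : 0 < K₂)
    (hα₁ : 0 < α₁) (hα₂ : 0 < α₂)
    (X Y : ℝ) (hX : X ∈ Set.Ioo 0 K₁) (hY : 0 < Y)
    (hhk : h r₁ K₁ α₁ X < k r₂ K₂ α₂ X) :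
    0 < G r₂ K₂ α₂ X (h r₁ K₁ α₁ X) -
        h r₁ K₁ α₁ (F r₁ K₁ α₁ X (h r₁ K₁ α₁ X)) := by
  obtain ⟨hX0, hXK⟩ := hX
  have hFX : F r₁ K₁ α₁ X (h r₁ K₁ α₁ X) = X := by
    unfold F h
    have hd : 1 + r₁ / K₁ * X + α₁ * (r₁ / (α₁ * K₁) * (K₁ - X)) = 1 + r₁ := by
      field_simp
      ring
    rw [hd]
    field_simp
  rw [hFX]
  have hh0 : 0 < h r₁ K₁ α₁ X := by
    unfold h
    have : 0 < K₁ - X := by linarith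
    positivity
  set Z := h r₁ K₁ α₁ X with hZ
  have hden : 0 < 1 + r₂ / K₂ * Z + α₂ * X := by positivity
  have hnum : (1 + r₂ / K₂ * Z + α₂ * X) * Z < (1 + r₂) * Z := by
    have : r₂ / K₂ * Z + α₂ * X < r₂ := by
      have hk' : Z < K₂ / r₂ * (r₂ - α₂ * X) := hhk
      have h1 : r₂ / K₂ * Z < r₂ / K₂ * (K₂ / r₂ * (r₂ - α₂ * X)) := by
        apply mul_lt_mul_of_pos_left hk'
        positivity
      have h2 : r₂ / K₂ * (K₂ / r₂ * (r₂ - α₂ * X)) = r₂ - α₂ * X := by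
        field_simp
      linarith
    nlinarith
  have hG : Z < G r₂ K₂ α₂ X Z := by
    unfold G
    rw [lt_div_iff₀ hden]
    linarith [hnum]
  linarith
end

section
/- For the Leslie–Gower competition map with positive parameters, suppose X ∈ (0, r₂/α₂) and h(X) < k(X). Then L_k(X, k(X)) = G(X, k(X)) − k(F(X, k(X))) is strictly negative. -/
theorem stmt6 (r₁ r₂ K₁ K₂ α₁ α₂ : ℝ)
    (hr₁ : 0 < r₁) (hr₂ : 0 < r₂) (hK₁ : 0 < K₁) (hK₂ : 0 < K₂)
    (hα₁ : 0 < α₁) (hα₂ : 0 < α₂)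
    (X : ℝ) (hX : X ∈ Set.Ioo 0 (r₂ / α₂))
    (hhk : h r₁ K₁ α₁ X < k r₂ K₂ α₂ X) :
    G r₂ K₂ α₂ X (k r₂ K₂ α₂ X) -
      k r₂ K₂ α₂ (F r₁ K₁ α₁ X (k r₂ K₂ α₂ X)) < 0 := by
  obtain ⟨hX0, hXr⟩ := hX
  set Y : ℝ := k r₂ K₂ α₂ X with hY
  have hY0 : 0 < Y := by
    have : α₂ * X < r₂ := by rw [mul_comm]; exact (lt_div_iff₀ hα₂).mp hXr
    have : 0 < r₂ - α₂ * X := by linarith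
    exact mul_pos (div_pos hK₂ hr₂) this
  -- G(X, k X) = Y
  have hG : G r₂ K₂ α₂ X Y = Y := by
    have hden : 1 + r₂ / K₂ * Y + α₂ * X = 1 + r₂ := by
      rw [hY]; unfold k; field_simp; ring
    unfold G
    rw [hden]
    rw [mul_comm, mul_div_assoc, div_self (by positivity), mul_one]
  -- F(X, Y) < X
  have hhY : h r₁ K₁ α₁ X < Y := hhk
  have hαh : α₁ * h r₁ K₁ α₁ X = r₁ - r₁ / K₁ * X := by
    unfold h; field_simp
  have hD1 : 1 + r₁ < 1 + r₁ / K₁ * X + α₁ * Y := by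
    have := mul_lt_mul_of_pos_left hhY hα₁
    rw [hαh] at this
    linarith
  have hD1pos : 0 < 1 + r₁ / K₁ * X + α₁ * Y := by
    have : (0:ℝ) < 1 + r₁ := by linarith
    linarith
  have hF : F r₁ K₁ α₁ X Y < X := by
    unfold F
    rw [div_lt_iff₀ hD1pos]
    nlinarith
  -- k(F) > k(X) = Y, since k is decreasing
  have hkFY : Y < k r₂ K₂ α₂ (F r₁ K₁ α₁ X Y) := by
    have hYeq : Y = K₂ / r₂ * (r₂ - α₂ * X) := rfl
    have h1 : 0 < K₂ / r₂ := by positivity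
    have h2 : α₂ * F r₁ K₁ α₁ X Y < α₂ * X := mul_lt_mul_of_pos_left hF hα₂
    have h3 : K₂ / r₂ * (r₂ - α₂ * X) < K₂ / r₂ * (r₂ - α₂ * F r₁ K₁ α₁ X Y) := by
      nlinarith
    calc Y = K₂ / r₂ * (r₂ - α₂ * X) := hYeq
      _ < K₂ / r₂ * (r₂ - α₂ * F r₁ K₁ α₁ X Y) := h3
      _ = k r₂ K₂ α₂ (F r₁ K₁ α₁ X Y) := rfl
  rw [hG]
  linarith
end

section
/- For the Leslie–Gower competition map with positive parameters, suppose X ∈ (0, K₁), Y > 0, and k(X) < h(X). Then L_h(X, h(X)) < 0 and, if additionally X ∈ (0, r₂/α₂), L_k(X, k(X)) > 0. -/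
theorem stmt7 (r₁ r₂ K₁ K₂ α₁ α₂ : ℝ)
    (hr₁ : 0 < r₁) (hr₂ : 0 < r₂) (hK₁ : 0 < K₁) (hK₂ : 0 < K₂)
    (hα₁ : 0 < α₁) (hα₂ : 0 < α₂)
    (X Y : ℝ) (hX : X ∈ Set.Ioo 0 K₁) (hY : 0 < Y)
    (hkh : k r₂ K₂ α₂ X < h r₁ K₁ α₁ X) :
    (G r₂ K₂ α₂ X (h r₁ K₁ α₁ X) -
        h r₁ K₁ α₁ (F r₁ K₁ α₁ X (h r₁ K₁ α₁ X)) < 0) ∧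
    (X < r₂ / α₂ →
      0 < G r₂ K₂ α₂ X (k r₂ K₂ α₂ X) -
          k r₂ K₂ α₂ (F r₁ K₁ α₁ X (k r₂ K₂ α₂ X))) := by
  obtain ⟨hX0, hXK⟩ := hX
  have hh : 0 < h r₁ K₁ α₁ X := by
    unfold h
    have : 0 < K₁ - X := by linarith
    positivity
  have hkh' : K₂ / r₂ * (r₂ - α₂ * X) < h r₁ K₁ α₁ X := hkh
  have hkey : (r₂ - α₂ * X) * K₂ < r₂ * h r₁ K₁ α₁ X := by
    have := mul_lt_mul_of_pos_left hkh' hr₂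
    calc (r₂ - α₂ * X) * K₂ = r₂ * (K₂ / r₂ * (r₂ - α₂ * X)) := by
          field_simp
      _ < r₂ * h r₁ K₁ α₁ X := this
  constructor
  · have hF : F r₁ K₁ α₁ X (h r₁ K₁ α₁ X) = X := by
      unfold F h
      have hd : 1 + r₁ / K₁ * X + α₁ * (r₁ / (α₁ * K₁) * (K₁ - X)) = 1 + r₁ := by
        field_simp; ring
      rw [hd]
      have : (0:ℝ) < 1 + r₁ := by linarith
      field_simp
    rw [hF]
    have hD : 0 < 1 + r₂ / K₂ * h r₁ K₁ α₁ X + α₂ * X := by positivity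
    have hG : G r₂ K₂ α₂ X (h r₁ K₁ α₁ X) < h r₁ K₁ α₁ X := by
      unfold G
      rw [div_lt_iff₀ hD]
      have h1 : r₂ / K₂ * h r₁ K₁ α₁ X * K₂ = r₂ * h r₁ K₁ α₁ X := by
        field_simp
      nlinarith [mul_pos hh (sub_pos.mpr hkey), mul_pos hh hK₂]
    linarith
  · intro hXr
    have hk0 : 0 < k r₂ K₂ α₂ X := by
      unfold k
      have : 0 < r₂ - α₂ * X := by
        nlinarith [(lt_div_iff₀ hα₂).mp hXr]
      positivity
    have hD₁ : 0 < 1 + r₁ / K₁ * X + α₁ * k r₂ K₂ α₂ X := by positivity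
    have hGk : G r₂ K₂ α₂ X (k r₂ K₂ α₂ X) = k r₂ K₂ α₂ X := by
      unfold G k
      have hd : 1 + r₂ / K₂ * (K₂ / r₂ * (r₂ - α₂ * X)) + α₂ * X = 1 + r₂ := by
        field_simp
        ring
      rw [hd]
      have : (0:ℝ) < 1 + r₂ := by linarith
      field_simp
    rw [hGk]
    have hFX : X < F r₁ K₁ α₁ X (k r₂ K₂ α₂ X) := by
      unfold F
      rw [lt_div_iff₀ hD₁]
      -- need X * (1 + r₁/K₁*X + α₁*k) < (1+r₁)*X, i.e. r₁/K₁*X + α₁*k < r₁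
      have hhk : α₁ * k r₂ K₂ α₂ X < α₁ * h r₁ K₁ α₁ X :=
        mul_lt_mul_of_pos_left hkh hα₁
      have hhval : α₁ * h r₁ K₁ α₁ X = r₁ - r₁ / K₁ * X := by
        unfold h; field_simp
      rw [hhval] at hhk
      nlinarith [mul_pos hX0 (sub_pos.mpr hhk)]
    set Fv := F r₁ K₁ α₁ X (k r₂ K₂ α₂ X) with hFv
    have : k r₂ K₂ α₂ Fv < k r₂ K₂ α₂ X := by
      unfold k
      have hc : 0 < K₂ / r₂ * α₂ := by positivity
      nlinarith [mul_lt_mul_of_pos_left hFX hc]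
    linarith
end

section
/- For the Leslie–Gower competition map with positive parameters, if r₁/α₁ < K₂ and r₂/α₂ > K₁ (i.e., C₁₂ < 0 < C₂₁), then the region R₂ = {(X,Y) : X > 0, Y > 0, h(X) ≤ Y ≤ k(X)} is positively invariant: if (X,Y) ∈ R₂ then (F(X,Y), G(X,Y)) ∈ R₂. -/
set_option maxHeartbeats 1000000 in
theorem stmt8 (r₁ r₂ K₁ K₂ α₁ α₂ : ℝ)
    (hr₁ : 0 < r₁) (hr₂ : 0 < r₂) (hK₁ : 0 < K₁) (hK₂ : 0 < K₂)
    (hα₁ : 0 < α₁) (hα₂ : 0 < α₂)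
    (hC12 : r₁ / α₁ < K₂) (hC21 : K₁ < r₂ / α₂)
    (X Y : ℝ) (hX : 0 < X) (hY : 0 < Y)
    (h1 : h r₁ K₁ α₁ X ≤ Y) (h2 : Y ≤ k r₂ K₂ α₂ X) :
    0 < F r₁ K₁ α₁ X Y ∧ 0 < G r₂ K₂ α₂ X Y ∧
      h r₁ K₁ α₁ (F r₁ K₁ α₁ X Y) ≤ G r₂ K₂ α₂ X Y ∧
      G r₂ K₂ α₂ X Y ≤ k r₂ K₂ α₂ (F r₁ K₁ α₁ X Y) := by
  unfold F G h k at *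
  have hD1 : (0:ℝ) < 1 + r₁ / K₁ * X + α₁ * Y := by positivity
  have hD2 : (0:ℝ) < 1 + r₂ / K₂ * Y + α₂ * X := by positivity
  -- clear divisions in hypotheses
  have a1 : r₁ * (K₁ - X) ≤ α₁ * K₁ * Y := by
    rw [div_mul_eq_mul_div, div_le_iff₀ (by positivity)] at h1
    nlinarith [h1]
  have a2 : r₂ * Y ≤ K₂ * (r₂ - α₂ * X) := by
    rw [div_mul_eq_mul_div, le_div_iff₀ hr₂] at h2
    nlinarith [h2]
  have hM : 0 < r₂ - α₂ * X := by nlinarith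
  have hD1ge : 1 + r₁ ≤ 1 + r₁ / K₁ * X + α₁ * Y := by
    have : r₁ / K₁ * X = r₁ * X / K₁ := by ring
    rw [this]
    rw [show (1:ℝ) + r₁ * X / K₁ + α₁ * Y = (K₁ + r₁ * X + α₁ * Y * K₁) / K₁ by
      field_simp]
    rw [le_div_iff₀ hK₁]
    nlinarith
  have hD2le : 1 + r₂ / K₂ * Y + α₂ * X ≤ 1 + r₂ := by
    have : r₂ / K₂ * Y = r₂ * Y / K₂ := by ring
    rw [this]
    have : r₂ * Y / K₂ ≤ r₂ - α₂ * X := by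
      rw [div_le_iff₀ hK₂]; nlinarith
    linarith
  -- F positive, F ≤ X
  have hFpos : 0 < (1 + r₁) * X / (1 + r₁ / K₁ * X + α₁ * Y) := by positivity
  have hFle : (1 + r₁) * X / (1 + r₁ / K₁ * X + α₁ * Y) ≤ X := by
    rw [div_le_iff₀ hD1]; nlinarith
  -- G positive, G ≥ Y
  have hGpos : 0 < (1 + r₂) * Y / (1 + r₂ / K₂ * Y + α₂ * X) := by positivity
  have hGge : Y ≤ (1 + r₂) * Y / (1 + r₂ / K₂ * Y + α₂ * X) := by
    rw [le_div_iff₀ hD2]; nlinarith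
  refine ⟨hFpos, hGpos, ?_, ?_⟩
  · -- h(F) ≤ Y ≤ G
    have hhF : r₁ / (α₁ * K₁) * (K₁ - (1 + r₁) * X / (1 + r₁ / K₁ * X + α₁ * Y)) ≤ Y := by
      rw [div_mul_eq_mul_div, div_le_iff₀ (by positivity)]
      rw [show K₁ - (1 + r₁) * X / (1 + r₁ / K₁ * X + α₁ * Y)
          = (K₁ - X + α₁ * K₁ * Y) / (1 + r₁ / K₁ * X + α₁ * Y) by
        field_simp; ring]
      rw [← mul_div_assoc, div_le_iff₀ hD1]
      -- goal: r₁ * (K₁ - X + α₁ * K₁ * Y) ≤ Y * (α₁ * K₁) * (1 + r₁/K₁*X + α₁*Y)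
      nlinarith [mul_le_mul_of_nonneg_left hD1ge (by positivity : (0:ℝ) ≤ α₁ * K₁ * Y)]
    linarith
  · -- G ≤ k(X) ≤ k(F)
    have hGk : (1 + r₂) * Y / (1 + r₂ / K₂ * Y + α₂ * X) ≤ K₂ / r₂ * (r₂ - α₂ * X) := by
      rw [div_le_iff₀ hD2, div_mul_eq_mul_div, div_mul_eq_mul_div, le_div_iff₀ hr₂]
      have e : K₂ * (r₂ - α₂ * X) * (1 + r₂ / K₂ * Y + α₂ * X)
          = K₂ * (r₂ - α₂ * X) * (1 + α₂ * X) + (r₂ - α₂ * X) * (r₂ * Y) := by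
        field_simp; ring
      rw [e]
      nlinarith [mul_le_mul_of_nonneg_right a2
        (by positivity : (0:ℝ) ≤ 1 + α₂ * X)]
    have hkmono : K₂ / r₂ * (r₂ - α₂ * X)
        ≤ K₂ / r₂ * (r₂ - α₂ * ((1 + r₁) * X / (1 + r₁ / K₁ * X + α₁ * Y))) := by
      have h3 : α₂ * ((1 + r₁) * X / (1 + r₁ / K₁ * X + α₁ * Y)) ≤ α₂ * X :=
        mul_le_mul_of_nonneg_left hFle hα₂.le
      have hpos : (0:ℝ) ≤ K₂ / r₂ := by positivity
      exact mul_le_mul_of_nonneg_left (by linarith) hpos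
    linarith
end

section
/- For the Leslie–Gower competition map, if C₁₂ < 0 and C₂₁ > 0 (i.e., r₁/α₁ < K₂ and r₂/α₂ > K₁), then L_h(X,Y) > 0 for all (X,Y) with X, Y > 0 and Y ≥ h(X), i.e., on R₂ ∪ R₃ where R₂ = {h(X) ≤ Y ≤ k(X)} and R₃ = {Y > k(X)} (intersected with the open first quadrant). -/
theorem stmt9 (r₁ r₂ K₁ K₂ α₁ α₂ : ℝ)
    (hr₁ : 0 < r₁) (hr₂ : 0 < r₂) (hK₁ : 0 < K₁) (hK₂ : 0 < K₂)
    (hα₁ : 0 < α₁) (hα₂ : 0 < α₂)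
    (hC12 : r₁ / α₁ < K₂) (hC21 : K₁ < r₂ / α₂)
    (X Y : ℝ) (hX : 0 < X) (hY : 0 < Y)
    (hreg : h r₁ K₁ α₁ X ≤ Y) :
    0 < G r₂ K₂ α₂ X Y - h r₁ K₁ α₁ (F r₁ K₁ α₁ X Y) := by
  have hD1 : 0 < 1 + r₁ / K₁ * X + α₁ * Y := by positivity
  have hD2 : 0 < 1 + r₂ / K₂ * Y + α₂ * X := by positivity
  have H1 : r₁ * (K₁ - X) ≤ α₁ * K₁ * Y := by
    have := hreg
    unfold h at this
    rw [div_mul_eq_mul_div, div_le_iff₀ (by positivity)] at this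
    linarith
  have H2 : r₁ < α₁ * K₂ := by
    rw [div_lt_iff₀ hα₁] at hC12; linarith
  have H3 : α₂ * K₁ < r₂ := by
    rw [lt_div_iff₀ hα₂] at hC21; linarith
  have hu : 0 < α₁ * K₂ - r₁ := by linarith
  have hv : 0 < r₂ - α₂ * K₁ := by linarith
  have hm : 0 < α₁ * K₁ * Y := by positivity
  have hw : 0 ≤ α₁ * K₁ * Y - r₁ * (K₁ - X) := by linarith
  have hAm2 : 0 < (α₁ * K₂ + r₂ * (α₁ * K₂ - r₁)) * ((α₁ * K₁ * Y) * (α₁ * K₁ * Y)) := by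
    have hA : 0 < α₁ * K₂ + r₂ * (α₁ * K₂ - r₁) := by
      nlinarith [mul_pos hr₂ hu, mul_pos hα₁ hK₂]
    exact mul_pos hA (mul_pos hm hm)
  have hBm : 0 < ((1 + r₁) * K₁ * (α₁ * K₂) * (r₂ - α₂ * K₁)) * (α₁ * K₁ * Y) := by
    have : 0 < (1 + r₁) * K₁ * (α₁ * K₂) * (r₂ - α₂ * K₁) := by
      have h1 : (0:ℝ) < 1 + r₁ := by linarith
      have h2 : 0 < α₁ * K₂ := by positivity
      exact mul_pos (mul_pos (mul_pos h1 hK₁) h2) hv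
    exact mul_pos this hm
  -- the key quadratic form positivity
  have hQ : 0 < (α₁ * K₂ + r₂ * (α₁ * K₂ - r₁)) * ((α₁ * K₁ * Y) * (α₁ * K₁ * Y))
      + ((1 + r₁) * K₁ * (α₁ * K₂) * (r₂ - α₂ * K₁)) * (α₁ * K₁ * Y)
      - (r₁ * (α₁ * K₂) * (1 + r₂ - α₂ * K₁) + r₁ * r₂ - α₁ * α₂ * K₁ * K₂)
          * (α₁ * K₁ * Y) * (K₁ - X)
      + α₁ * K₁ * K₂ * (α₁ * K₁ * Y - r₁ * (K₁ - X)) * (1 + α₂ * X) := by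
    have hW : 0 ≤ α₁ * K₁ * K₂ * (α₁ * K₁ * Y - r₁ * (K₁ - X)) * (1 + α₂ * X) := by
      have : 0 ≤ (1:ℝ) + α₂ * X := by positivity
      exact mul_nonneg (mul_nonneg (by positivity) hw) this
    rcases le_or_gt (r₁ * (α₁ * K₂) * (1 + r₂ - α₂ * K₁) + r₁ * r₂ - α₁ * α₂ * K₁ * K₂) 0 with hE | hE
    · rcases le_or_gt (K₁ - X) 0 with hc | hc
      · -- E ≤ 0, c ≤ 0
        have t1 : 0 ≤ ((r₁ * (α₁ * K₂) * (1 + r₂ - α₂ * K₁) + r₁ * r₂ - α₁ * α₂ * K₁ * K₂)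
            + α₁ * α₂ * K₁ * K₂) * ((α₁ * K₁ * Y) * (-(K₁ - X))) := by
          have hEl : 0 ≤ (r₁ * (α₁ * K₂) * (1 + r₂ - α₂ * K₁) + r₁ * r₂ - α₁ * α₂ * K₁ * K₂)
              + α₁ * α₂ * K₁ * K₂ := by
            linarith [mul_pos hr₁ hr₂,
              mul_pos (mul_pos hr₁ (mul_pos hα₁ hK₂)) (show (0:ℝ) < 1 + r₂ - α₂ * K₁ by linarith)]
          exact mul_nonneg hEl (mul_nonneg hm.le (by linarith))
        have t2 : 0 ≤ (α₁ * α₂ * K₁ * K₂) * (r₁ * (-(K₁ - X)) * X) := by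
          have : 0 ≤ r₁ * (-(K₁ - X)) * X := by
            exact mul_nonneg (mul_nonneg hr₁.le (by linarith)) hX.le
          exact mul_nonneg (by positivity) this
        have t3 : 0 ≤ (α₁ * α₂ * K₁ * K₂) * ((α₁ * K₁ * Y) * K₁) :=
          le_of_lt (mul_pos (by positivity) (mul_pos hm hK₁))
        have t4 : 0 ≤ (α₁ * K₁ * K₂) * (α₁ * K₁ * Y - r₁ * (K₁ - X)) :=
          mul_nonneg (by positivity) hw
        linarith [hAm2, hBm, t1, t2, t3, t4]
      · -- E ≤ 0, c > 0
        have t1 : 0 ≤ (-(r₁ * (α₁ * K₂) * (1 + r₂ - α₂ * K₁) + r₁ * r₂ - α₁ * α₂ * K₁ * K₂))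
            * ((α₁ * K₁ * Y) * (K₁ - X)) := by
          exact mul_nonneg (by linarith) (mul_nonneg hm.le hc.le)
        linarith [hAm2, hBm, t1, hW]
    · rcases le_or_gt (K₁ - X) 0 with hc | hc
      · -- E > 0, c ≤ 0
        have t1 : 0 ≤ (r₁ * (α₁ * K₂) * (1 + r₂ - α₂ * K₁) + r₁ * r₂ - α₁ * α₂ * K₁ * K₂)
            * ((α₁ * K₁ * Y) * (-(K₁ - X))) :=
          mul_nonneg hE.le (mul_nonneg hm.le (by linarith))
        linarith [hAm2, hBm, t1, hW]
      · -- E > 0, c > 0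
        rcases le_or_gt (r₁ * (α₁ * K₂) * (1 + r₂ - α₂ * K₁) + r₁ * r₂ - α₁ * α₂ * K₁ * K₂)
            (r₁ * (α₁ * K₂ + r₂ * (α₁ * K₂ - r₁))) with hd | hd
        · -- E ≤ r₁ * A :  r₁*Q = (r₁A-E) m² + r₁ B m + E m w + r₁ W
          have s1 : 0 ≤ (r₁ * (α₁ * K₂ + r₂ * (α₁ * K₂ - r₁))
              - (r₁ * (α₁ * K₂) * (1 + r₂ - α₂ * K₁) + r₁ * r₂ - α₁ * α₂ * K₁ * K₂))
              * ((α₁ * K₁ * Y) * (α₁ * K₁ * Y)) :=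
            mul_nonneg (by linarith) (mul_nonneg hm.le hm.le)
          have s2 : 0 ≤ (r₁ * (α₁ * K₂) * (1 + r₂ - α₂ * K₁) + r₁ * r₂ - α₁ * α₂ * K₁ * K₂)
              * ((α₁ * K₁ * Y) * (α₁ * K₁ * Y - r₁ * (K₁ - X))) :=
            mul_nonneg hE.le (mul_nonneg hm.le hw)
          have s3 : 0 < r₁ * (((1 + r₁) * K₁ * (α₁ * K₂) * (r₂ - α₂ * K₁)) * (α₁ * K₁ * Y)) :=
            mul_pos hr₁ hBm
          have s4 : 0 ≤ r₁ * (α₁ * K₁ * K₂ * (α₁ * K₁ * Y - r₁ * (K₁ - X)) * (1 + α₂ * X)) :=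
            mul_nonneg hr₁.le hW
          by_contra hng
          push_neg at hng
          have hng2 : 0 ≤ r₁ * (-((α₁ * K₂ + r₂ * (α₁ * K₂ - r₁)) * ((α₁ * K₁ * Y) * (α₁ * K₁ * Y))
            + ((1 + r₁) * K₁ * (α₁ * K₂) * (r₂ - α₂ * K₁)) * (α₁ * K₁ * Y)
            - (r₁ * (α₁ * K₂) * (1 + r₂ - α₂ * K₁) + r₁ * r₂ - α₁ * α₂ * K₁ * K₂)
                * (α₁ * K₁ * Y) * (K₁ - X)
            + α₁ * K₁ * K₂ * (α₁ * K₁ * Y - r₁ * (K₁ - X)) * (1 + α₂ * X))) :=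
            mul_nonneg hr₁.le (by linarith)
          linarith [s1, s2, s3, s4, hng2]
        · -- E > r₁ * A : Q = m*V + (E - r₁A) m X + A m w + W
          have s1 : 0 ≤ ((r₁ * (α₁ * K₂) * (1 + r₂ - α₂ * K₁) + r₁ * r₂ - α₁ * α₂ * K₁ * K₂)
              - r₁ * (α₁ * K₂ + r₂ * (α₁ * K₂ - r₁)))
              * ((α₁ * K₁ * Y) * X) :=
            mul_nonneg (by linarith) (mul_nonneg hm.le hX.le)
          have s2 : 0 ≤ (α₁ * K₂ + r₂ * (α₁ * K₂ - r₁))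
              * ((α₁ * K₁ * Y) * (α₁ * K₁ * Y - r₁ * (K₁ - X))) := by
            have hA : 0 ≤ α₁ * K₂ + r₂ * (α₁ * K₂ - r₁) := by
              linarith [mul_pos hr₂ hu, mul_pos hα₁ hK₂]
            exact mul_nonneg hA (mul_nonneg hm.le hw)
          have s3 : 0 < (α₁ * K₁ * Y) * (K₁ * (1 + r₁) * r₂ * (α₁ * K₂ - r₁)) := by
            have : (0:ℝ) < 1 + r₁ := by linarith
            exact mul_pos hm (mul_pos (mul_pos (mul_pos hK₁ this) hr₂) hu)
          linarith [s1, s2, s3, hW]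
  have key : G r₂ K₂ α₂ X Y - h r₁ K₁ α₁ (F r₁ K₁ α₁ X Y)
      = ((1+r₂)*α₁*K₂*Y*(K₁+r₁*X+α₁*K₁*Y)
        - r₁*(K₁-X+α₁*K₁*Y)*(K₂+r₂*Y+α₂*K₂*X))
        / (α₁*K₁*K₂*(1 + r₁ / K₁ * X + α₁ * Y)*(1 + r₂ / K₂ * Y + α₂ * X)) := by
    unfold G h F
    field_simp
    ring
  have hid : α₁ * K₁ * ((1+r₂)*α₁*K₂*Y*(K₁+r₁*X+α₁*K₁*Y)
        - r₁*(K₁-X+α₁*K₁*Y)*(K₂+r₂*Y+α₂*K₂*X))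
      = (α₁ * K₂ + r₂ * (α₁ * K₂ - r₁)) * ((α₁ * K₁ * Y) * (α₁ * K₁ * Y))
      + ((1 + r₁) * K₁ * (α₁ * K₂) * (r₂ - α₂ * K₁)) * (α₁ * K₁ * Y)
      - (r₁ * (α₁ * K₂) * (1 + r₂ - α₂ * K₁) + r₁ * r₂ - α₁ * α₂ * K₁ * K₂)
          * (α₁ * K₁ * Y) * (K₁ - X)
      + α₁ * K₁ * K₂ * (α₁ * K₁ * Y - r₁ * (K₁ - X)) * (1 + α₂ * X) := by
    ring
  have hP : 0 < (1+r₂)*α₁*K₂*Y*(K₁+r₁*X+α₁*K₁*Y)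
      - r₁*(K₁-X+α₁*K₁*Y)*(K₂+r₂*Y+α₂*K₂*X) := by
    by_contra hng
    push_neg at hng
    have hng2 : 0 ≤ α₁ * K₁ * (-((1+r₂)*α₁*K₂*Y*(K₁+r₁*X+α₁*K₁*Y)
        - r₁*(K₁-X+α₁*K₁*Y)*(K₂+r₂*Y+α₂*K₂*X))) :=
      mul_nonneg (by positivity) (by linarith)
    linarith [hQ, hid, hng2]
  rw [key]
  exact div_pos hP (by positivity)
end

section
/- For the Leslie–Gower competition map, if C₁₂ < 0 and C₂₁ > 0, then L_k(X,Y) < 0 for all (X,Y) in the open first quadrant with Y ≤ k(X), i.e., on R₁ ∪ R₂ where R₁ = {Y < h(X)} and R₂ = {h(X) ≤ Y ≤ k(X)}. -/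
set_option maxHeartbeats 1000000 in
theorem stmt10 (r₁ r₂ K₁ K₂ α₁ α₂ : ℝ)
    (hr₁ : 0 < r₁) (hr₂ : 0 < r₂) (hK₁ : 0 < K₁) (hK₂ : 0 < K₂)
    (hα₁ : 0 < α₁) (hα₂ : 0 < α₂)
    (hC12 : r₁ / α₁ < K₂) (hC21 : K₁ < r₂ / α₂)
    (X Y : ℝ) (hX : 0 < X) (hY : 0 < Y)
    (hreg : Y ≤ k r₂ K₂ α₂ X) :
    G r₂ K₂ α₂ X Y - k r₂ K₂ α₂ (F r₁ K₁ α₁ X Y) < 0 := by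
  have hD₁ : (0:ℝ) < 1 + r₁ / K₁ * X + α₁ * Y := by positivity
  have hD₂ : (0:ℝ) < 1 + r₂ / K₂ * Y + α₂ * X := by positivity
  have hp : r₁ < α₁ * K₂ := by
    rw [div_lt_iff₀ hα₁] at hC12; linarith [hC12]
  have hq : α₂ * K₁ < r₂ := by
    rw [lt_div_iff₀ hα₂] at hC21; linarith [hC21]
  have hs : 0 ≤ K₂ * r₂ - r₂ * Y - K₂ * α₂ * X := by
    unfold k at hreg
    have h2 : r₂ * Y ≤ K₂ * (r₂ - α₂ * X) := by
      have := mul_le_mul_of_nonneg_left hreg (le_of_lt hr₂)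
      calc r₂ * Y ≤ r₂ * (K₂ / r₂ * (r₂ - α₂ * X)) := this
        _ = K₂ * (r₂ - α₂ * X) := by field_simp
    nlinarith [h2]
  set D₁ := 1 + r₁ / K₁ * X + α₁ * Y with hD₁def
  set D₂ := 1 + r₂ / K₂ * Y + α₂ * X with hD₂def
  have key : 0 < K₂ * r₂ * D₁ * D₂ - K₂ * α₂ * ((1 + r₁) * X) * D₂
      - r₂ * ((1 + r₂) * Y) * D₁ := by
    have h1 : 0 ≤ (K₂ * r₂ - r₂ * Y - K₂ * α₂ * X) *
        (r₂ * K₁ + r₂ * K₁ * α₁ * Y + X * (r₁ * (r₂ - α₂ * K₁) + K₁ * α₂ * r₂)) := by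
      apply mul_nonneg hs
      have : 0 < r₁ * (r₂ - α₂ * K₁) := by nlinarith
      positivity
    have h2 : 0 < r₂ * α₂ * X * Y * (1 + r₂) * K₁ * (α₁ * K₂ - r₁) := by
      have : 0 < α₁ * K₂ - r₁ := by linarith
      positivity
    have h3 : 0 < K₂ * α₂ * X ^ 2 * (1 + r₂) * r₁ * (r₂ - α₂ * K₁) := by
      have : 0 < r₂ - α₂ * K₁ := by linarith
      positivity
    have hident : r₂ * K₁ * (K₂ * r₂ * D₁ * D₂ - K₂ * α₂ * ((1 + r₁) * X) * D₂
        - r₂ * ((1 + r₂) * Y) * D₁) =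
        (K₂ * r₂ - r₂ * Y - K₂ * α₂ * X) *
          (r₂ * K₁ + r₂ * K₁ * α₁ * Y + X * (r₁ * (r₂ - α₂ * K₁) + K₁ * α₂ * r₂))
        + r₂ * α₂ * X * Y * (1 + r₂) * K₁ * (α₁ * K₂ - r₁)
        + K₂ * α₂ * X ^ 2 * (1 + r₂) * r₁ * (r₂ - α₂ * K₁) := by
      rw [hD₁def, hD₂def]; field_simp; ring
    have hpos : 0 < r₂ * K₁ := by positivity
    nlinarith [hident, h1, h2, h3, hpos]
  have hgoal : G r₂ K₂ α₂ X Y - k r₂ K₂ α₂ (F r₁ K₁ α₁ X Y) =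
      -((K₂ * r₂ * D₁ * D₂ - K₂ * α₂ * ((1 + r₁) * X) * D₂
        - r₂ * ((1 + r₂) * Y) * D₁) / (r₂ * D₁ * D₂)) := by
    unfold G k F
    rw [hD₁def, hD₂def]
    field_simp
    ring
  rw [hgoal, neg_lt_zero]
  exact div_pos key (by positivity)
end

section
/- For the Leslie–Gower competition map with C₁₂ < 0 and C₂₁ > 0, every orbit with initial condition X₀ > 0, Y₀ > 0 converges to the boundary equilibrium E₂ = (0, K₂) as t → ∞. -/
noncomputable def T (r₁ r₂ K₁ K₂ α₁ α₂ : ℝ) (p : ℝ × ℝ) : ℝ × ℝ :=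
  (F r₁ K₁ α₁ p.1 p.2, G r₂ K₂ α₂ p.1 p.2)

namespace LGaux

open Filter Topology

lemma den_pos {r K α X Y : ℝ} (hr : 0 < r) (hK : 0 < K) (hα : 0 < α)
    (hX : 0 ≤ X) (hY : 0 ≤ Y) : 0 < 1 + r / K * X + α * Y := by positivity

lemma F_nonneg {r K α X Y : ℝ} (hr : 0 < r) (hK : 0 < K) (hα : 0 < α)
    (hX : 0 ≤ X) (hY : 0 ≤ Y) : 0 ≤ F r K α X Y := by
  unfold F
  exact div_nonneg (by nlinarith) (den_pos hr hK hα hX hY).le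

lemma F_pos {r K α X Y : ℝ} (hr : 0 < r) (hK : 0 < K) (hα : 0 < α)
    (hX : 0 < X) (hY : 0 ≤ Y) : 0 < F r K α X Y := by
  unfold F
  exact div_pos (by nlinarith) (den_pos hr hK hα hX.le hY)

lemma F_mono {r K α x₁ x₂ y₁ y₂ : ℝ} (hr : 0 < r) (hK : 0 < K) (hα : 0 < α)
    (hx₁ : 0 ≤ x₁) (hx : x₁ ≤ x₂) (hy₂ : 0 ≤ y₂) (hy : y₂ ≤ y₁) :
    F r K α x₁ y₁ ≤ F r K α x₂ y₂ := by
  unfold F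
  rw [div_le_div_iff₀ (den_pos hr hK hα hx₁ (hy₂.trans hy)) (den_pos hr hK hα (hx₁.trans hx) hy₂)]
  have h1 : x₁ * y₂ ≤ x₂ * y₁ := mul_le_mul hx hy hy₂ (hx₁.trans hx)
  have h2 : (0:ℝ) ≤ r / K := by positivity
  nlinarith [mul_nonneg h2 (sub_nonneg.2 hx), mul_nonneg hα.le (sub_nonneg.2 h1),
    mul_nonneg (mul_nonneg hr.le h2) (sub_nonneg.2 hx),
    mul_nonneg (mul_nonneg hr.le hα.le) (sub_nonneg.2 h1)]

lemma F_le_of_le {r K α X Y ε : ℝ} (hr : 0 < r) (hK : 0 < K) (hα : 0 < α) (hε : 0 < ε)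
    (hX0 : 0 ≤ X) (hX : X ≤ K + ε) (hY : 0 ≤ Y) : F r K α X Y ≤ K + ε := by
  have hs : r / K * K = r := div_mul_cancel₀ r hK.ne'
  have hsp : (0:ℝ) ≤ r / K := by positivity
  unfold F
  rw [div_le_iff₀ (den_pos hr hK hα hX0 hY)]
  nlinarith [mul_nonneg (mul_nonneg hα.le hY) (by linarith : (0:ℝ) ≤ K + ε),
    mul_nonneg (mul_nonneg hsp hX0) hε.le,
    mul_nonneg hsp (mul_nonneg hX0 hε.le)]

lemma F_contract {r K α X Y ε : ℝ} (hr : 0 < r) (hK : 0 < K) (hα : 0 < α) (hε : 0 < ε)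
    (hX : K + ε ≤ X) (hY : 0 ≤ Y) :
    F r K α X Y ≤ (1 + r) / (1 + r + r * ε / K) * X := by
  have hs : r / K * K = r := div_mul_cancel₀ r hK.ne'
  have hsp : (0:ℝ) < r / K := by positivity
  have hX0 : 0 ≤ X := le_trans (by positivity) hX
  have hd' : (0:ℝ) < 1 + r + r * ε / K := by positivity
  have hden : 1 + r + r * ε / K ≤ 1 + r / K * X + α * Y := by
    have : r / K * (K + ε) ≤ r / K * X := mul_le_mul_of_nonneg_left hX hsp.le
    have hre : r * ε / K = r / K * ε := by ring
    nlinarith [mul_nonneg hα.le hY]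
  calc F r K α X Y = (1 + r) * X / (1 + r / K * X + α * Y) := rfl
    _ ≤ (1 + r) * X / (1 + r + r * ε / K) := by
        apply div_le_div_of_nonneg_left (by nlinarith) hd' hden
    _ = (1 + r) / (1 + r + r * ε / K) * X := by ring

lemma F_bound {r K α X Y : ℝ} (hr : 0 < r) (hK : 0 < K) (hα : 0 < α)
    (hX : 0 ≤ X) (hY : 0 ≤ Y) : F r K α X Y ≤ K * (1 + r) / r := by
  have hs : r / K * K = r := div_mul_cancel₀ r hK.ne'
  have hsp : (0:ℝ) ≤ r / K := by positivity
  unfold F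
  rw [div_le_div_iff₀ (den_pos hr hK hα hX hY) hr]
  have hkey : K * (1 + r) * (r / K * X) = (1 + r) * X * r := by
    linear_combination ((1 + r) * X) * hs
  nlinarith [hkey, mul_nonneg (mul_nonneg hK.le (by linarith : (0:ℝ) ≤ 1 + r)) (mul_nonneg hα.le hY),
    mul_nonneg hK.le (by linarith : (0:ℝ) ≤ 1 + r)]

lemma F_le_self {r K α X Y : ℝ} (hr : 0 < r) (hK : 0 < K) (hα : 0 < α)
    (hX : K ≤ X) (hY : 0 ≤ Y) : F r K α X Y ≤ X := by
  have hs : r / K * K = r := div_mul_cancel₀ r hK.ne'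
  have hsp : (0:ℝ) < r / K := by positivity
  have hX0 : 0 ≤ X := le_trans hK.le hX
  unfold F
  rw [div_le_iff₀ (den_pos hr hK hα hX0 hY)]
  have h1 : r / K * K ≤ r / K * X := mul_le_mul_of_nonneg_left hX hsp.le
  nlinarith [mul_nonneg (mul_nonneg hα.le hY) hX0,
    mul_nonneg hX0 (sub_nonneg.2 h1)]

lemma F_ge_self {r K α X Y : ℝ} (hr : 0 < r) (hK : 0 < K) (hα : 0 < α)
    (hX : 0 ≤ X) (hY : 0 ≤ Y) (hcond : r / K * X + α * Y ≤ r) :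
    X ≤ F r K α X Y := by
  unfold F
  rw [le_div_iff₀ (den_pos hr hK hα hX hY)]
  nlinarith [mul_nonneg hX (sub_nonneg.2 hcond)]

lemma eventually_le {r K α : ℝ} (hr : 0 < r) (hK : 0 < K) (hα : 0 < α)
    {x y : ℕ → ℝ} (hx : ∀ t, 0 ≤ x t) (hy : ∀ t, 0 ≤ y t)
    (hrec : ∀ t, x (t + 1) = F r K α (x t) (y t)) {ε : ℝ} (hε : 0 < ε) :
    ∀ᶠ t in atTop, x t ≤ K + ε := by
  set lam : ℝ := (1 + r) / (1 + r + r * ε / K) with hlamdef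
  have hd' : (0:ℝ) < 1 + r + r * ε / K := by positivity
  have hlam0 : (0:ℝ) ≤ lam := by positivity
  have hlam1 : lam < 1 := by
    rw [hlamdef, div_lt_one hd']
    have : (0:ℝ) < r * ε / K := by positivity
    linarith
  have hex : ∃ t₁, x t₁ ≤ K + ε := by
    by_contra hcon
    push_neg at hcon
    have hgeo : ∀ t, x t ≤ lam ^ t * x 0 := by
      intro t
      induction t with
      | zero => simp
      | succ n ih =>
        have h1 : x (n + 1) ≤ lam * x n := by
          rw [hrec n]
          exact F_contract hr hK hα hε (hcon n).le (hy n)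
        calc x (n + 1) ≤ lam * x n := h1
          _ ≤ lam * (lam ^ n * x 0) := mul_le_mul_of_nonneg_left ih hlam0
          _ = lam ^ (n + 1) * x 0 := by ring
    have htend : Tendsto (fun t => lam ^ t * x 0) atTop (𝓝 0) := by
      have := (tendsto_pow_atTop_nhds_zero_of_lt_one hlam0 hlam1).mul_const (x 0)
      simpa using this
    have hlt : ∀ᶠ t in atTop, lam ^ t * x 0 < K + ε :=
      htend.eventually_lt_const (by positivity)
    obtain ⟨t, ht⟩ := hlt.exists
    exact absurd (lt_of_le_of_lt (hgeo t) ht) (not_lt.2 (hcon t).le)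
  obtain ⟨t₁, ht₁⟩ := hex
  refine Filter.eventually_atTop.2 ⟨t₁, fun t ht => ?_⟩
  induction t, ht using Nat.le_induction with
  | base => exact ht₁
  | succ n hn ih =>
    rw [hrec n]
    exact F_le_of_le hr hK hα hε (hx n) ih (hy n)

lemma fixed_point_unique {r₁ r₂ K₁ K₂ α₁ α₂ x y : ℝ}
    (hr₁ : 0 < r₁) (hr₂ : 0 < r₂) (hK₁ : 0 < K₁) (hK₂ : 0 < K₂)
    (hα₁ : 0 < α₁) (hα₂ : 0 < α₂)
    (hC12 : r₁ / α₁ < K₂) (hC21 : K₁ < r₂ / α₂)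
    (hx : 0 ≤ x) (hy : 0 < y)
    (h1 : F r₁ K₁ α₁ x y = x) (h2 : F r₂ K₂ α₂ y x = y) : x = 0 ∧ y = K₂ := by
  have hA : r₁ < α₁ * K₂ := by rw [div_lt_iff₀ hα₁] at hC12; linarith
  have hB : α₂ * K₁ < r₂ := by rw [lt_div_iff₀ hα₂] at hC21; linarith
  have hs₁ : r₁ / K₁ * K₁ = r₁ := div_mul_cancel₀ r₁ hK₁.ne'
  have hs₂ : r₂ / K₂ * K₂ = r₂ := div_mul_cancel₀ r₂ hK₂.ne'
  have hd₁ : 0 < 1 + r₁ / K₁ * x + α₁ * y := den_pos hr₁ hK₁ hα₁ hx hy.le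
  have hd₂ : 0 < 1 + r₂ / K₂ * y + α₂ * x := den_pos hr₂ hK₂ hα₂ hy.le hx
  unfold F at h1 h2
  rw [div_eq_iff hd₁.ne'] at h1
  rw [div_eq_iff hd₂.ne'] at h2
  have e1 : x * (r₁ - r₁ / K₁ * x - α₁ * y) = 0 := by linear_combination h1
  have e2 : y * (r₂ - r₂ / K₂ * y - α₂ * x) = 0 := by linear_combination h2
  have hline2 : r₂ - r₂ / K₂ * y - α₂ * x = 0 := (mul_eq_zero.1 e2).resolve_left hy.ne'
  rcases mul_eq_zero.1 e1 with hx0 | hline1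
  · subst hx0
    refine ⟨rfl, ?_⟩
    have hyK : r₂ * y = r₂ * K₂ := by linear_combination (-K₂) * hline2 + (-y) * hs₂
    exact mul_left_cancel₀ hr₂.ne' hyK
  · exfalso
    have E1 : r₁ * K₁ = r₁ * x + α₁ * K₁ * y := by
      linear_combination K₁ * hline1 + x * hs₁
    have E2 : r₂ * K₂ = r₂ * y + α₂ * K₂ * x := by
      linear_combination K₂ * hline2 + y * hs₂
    have hy' : 0 < α₁ * K₁ * y := by positivity
    have hxK : x < K₁ := by nlinarith
    have key : (K₁ - x) * (K₁ * r₂ * (α₁ * K₂ - r₁)) + x * (α₁ * K₁ * K₂ * (r₂ - α₂ * K₁)) = 0 := by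
      linear_combination α₁ * K₁ ^ 2 * E2 - r₂ * K₁ * E1
    have t1 : 0 < (K₁ - x) * (K₁ * r₂ * (α₁ * K₂ - r₁)) :=
      mul_pos (by linarith) (mul_pos (mul_pos hK₁ hr₂) (by linarith))
    have t2 : 0 ≤ x * (α₁ * K₁ * K₂ * (r₂ - α₂ * K₁)) :=
      mul_nonneg hx (le_of_lt (mul_pos (show (0:ℝ) < α₁ * K₁ * K₂ by positivity) (by linarith)))
    linarith

end LGaux

open Filter Topology LGaux in
theorem stmt11 (r₁ r₂ K₁ K₂ α₁ α₂ : ℝ)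
    (hr₁ : 0 < r₁) (hr₂ : 0 < r₂) (hK₁ : 0 < K₁) (hK₂ : 0 < K₂)
    (hα₁ : 0 < α₁) (hα₂ : 0 < α₂)
    (hC12 : r₁ / α₁ < K₂) (hC21 : K₁ < r₂ / α₂)
    (X Y : ℕ → ℝ) (hX0 : 0 < X 0) (hY0 : 0 < Y 0)
    (hrec : ∀ t, X (t + 1) = F r₁ K₁ α₁ (X t) (Y t) ∧
                 Y (t + 1) = G r₂ K₂ α₂ (X t) (Y t)) :
    Filter.Tendsto (fun t => (X t, Y t)) Filter.atTop (nhds ((0 : ℝ), K₂)) := by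
  have hXrec : ∀ t, X (t + 1) = F r₁ K₁ α₁ (X t) (Y t) := fun t => (hrec t).1
  have hYrec : ∀ t, Y (t + 1) = F r₂ K₂ α₂ (Y t) (X t) := fun t => (hrec t).2
  have hpos : ∀ t, 0 < X t ∧ 0 < Y t := by
    intro t
    induction t with
    | zero => exact ⟨hX0, hY0⟩
    | succ n ih =>
      constructor
      · rw [hXrec n]; exact F_pos hr₁ hK₁ hα₁ ih.1 ih.2.le
      · rw [hYrec n]; exact F_pos hr₂ hK₂ hα₂ ih.2 ih.1.le
  have hB : α₂ * K₁ < r₂ := by rw [lt_div_iff₀ hα₂] at hC21; linarith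
  set ε₀ : ℝ := (r₂ / α₂ - K₁) / 2 with hε₀def
  have hε₀ : 0 < ε₀ := by rw [hε₀def]; linarith
  have hKε : α₂ * (K₁ + ε₀) < r₂ := by
    have h' : α₂ * (r₂ / α₂) = r₂ := mul_div_cancel₀ r₂ hα₂.ne'
    rw [hε₀def]; nlinarith
  obtain ⟨t₀, ht₀⟩ := Filter.eventually_atTop.1
    (eventually_le hr₁ hK₁ hα₁ (fun t => (hpos t).1.le) (fun t => (hpos t).2.le) hXrec hε₀)
  have hXt₀ : X t₀ ≤ K₁ + ε₀ := ht₀ t₀ le_rfl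
  set M : ℝ := K₂ * (r₂ - α₂ * (K₁ + ε₀)) / r₂ with hMdef
  have hM : 0 < M := div_pos (mul_pos hK₂ (by linarith)) hr₂
  set q₂ : ℝ := min M (Y t₀) with hq₂def
  have hq₂ : 0 < q₂ := lt_min hM (hpos t₀).2
  have hq₂M : q₂ ≤ M := min_le_left _ _
  have hq₂Y : q₂ ≤ Y t₀ := min_le_right _ _
  set Q : ℕ → ℝ × ℝ := fun t => (T r₁ r₂ K₁ K₂ α₁ α₂)^[t] (K₁ + ε₀, q₂) with hQdef
  have hQ0 : Q 0 = (K₁ + ε₀, q₂) := rfl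
  have hQs : ∀ t, (Q (t + 1)).1 = F r₁ K₁ α₁ (Q t).1 (Q t).2 ∧
                  (Q (t + 1)).2 = F r₂ K₂ α₂ (Q t).2 (Q t).1 := by
    intro t
    have hit : Q (t + 1) = T r₁ r₂ K₁ K₂ α₁ α₂ (Q t) := Function.iterate_succ_apply' _ _ _
    rw [hit]; exact ⟨rfl, rfl⟩
  have hbase_cond : r₂ / K₂ * q₂ + α₂ * (K₁ + ε₀) ≤ r₂ := by
    have h1 : r₂ / K₂ * M = r₂ - α₂ * (K₁ + ε₀) := by
      rw [hMdef]; field_simp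
    have h2 : r₂ / K₂ * q₂ ≤ r₂ / K₂ * M :=
      mul_le_mul_of_nonneg_left hq₂M (by positivity)
    linarith
  have hΦ : ∀ t, 0 ≤ (Q t).1 ∧ q₂ ≤ (Q t).2 ∧ (Q (t + 1)).1 ≤ (Q t).1 ∧ (Q t).2 ≤ (Q (t + 1)).2 := by
    intro t
    induction t with
    | zero =>
      refine ⟨by rw [hQ0]; dsimp only; linarith, by rw [hQ0], ?_, ?_⟩
      · rw [(hQs 0).1, hQ0]
        exact F_le_self hr₁ hK₁ hα₁ (by dsimp only; linarith) (by dsimp only; linarith)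
      · rw [(hQs 0).2, hQ0]
        exact F_ge_self hr₂ hK₂ hα₂ (by dsimp only; linarith) (by dsimp only; linarith) hbase_cond
    | succ n ih =>
      obtain ⟨h1, h2, h3, h4⟩ := ih
      have hx1 : 0 ≤ (Q (n + 1)).1 := by
        rw [(hQs n).1]; exact F_nonneg hr₁ hK₁ hα₁ h1 (hq₂.le.trans h2)
      have hy1 : q₂ ≤ (Q (n + 1)).2 := h2.trans h4
      refine ⟨hx1, hy1, ?_, ?_⟩
      · rw [(hQs (n + 1)).1]
        calc F r₁ K₁ α₁ (Q (n + 1)).1 (Q (n + 1)).2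
            ≤ F r₁ K₁ α₁ (Q n).1 (Q n).2 :=
              F_mono hr₁ hK₁ hα₁ hx1 h3 (hq₂.le.trans h2) h4
          _ = (Q (n + 1)).1 := ((hQs n).1).symm
      · rw [(hQs (n + 1)).2]
        calc (Q (n + 1)).2 = F r₂ K₂ α₂ (Q n).2 (Q n).1 := (hQs n).2
          _ ≤ F r₂ K₂ α₂ (Q (n + 1)).2 (Q (n + 1)).1 :=
              F_mono hr₂ hK₂ hα₂ (hq₂.le.trans h2) h4 hx1 h3
  have hQx_anti : Antitone (fun t => (Q t).1) := antitone_nat_of_succ_le (fun t => (hΦ t).2.2.1)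
  have hQy_mono : Monotone (fun t => (Q t).2) := monotone_nat_of_le_succ (fun t => (hΦ t).2.2.2)
  have hQyB : ∀ t, (Q t).2 ≤ max q₂ (K₂ * (1 + r₂) / r₂) := by
    intro t
    cases t with
    | zero => exact le_max_left _ _
    | succ n =>
      rw [(hQs n).2]
      exact le_max_of_le_right (F_bound hr₂ hK₂ hα₂ (hq₂.le.trans (hΦ n).2.1) (hΦ n).1)
  set xs : ℝ := ⨅ t, (Q t).1 with hxsdef
  set ys : ℝ := ⨆ t, (Q t).2 with hysdef
  have hQx_lim : Tendsto (fun t => (Q t).1) atTop (𝓝 xs) :=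
    tendsto_atTop_ciInf hQx_anti ⟨0, by rintro z ⟨t, rfl⟩; exact (hΦ t).1⟩
  have hQy_lim : Tendsto (fun t => (Q t).2) atTop (𝓝 ys) :=
    tendsto_atTop_ciSup hQy_mono ⟨max q₂ (K₂ * (1 + r₂) / r₂), by rintro z ⟨t, rfl⟩; exact hQyB t⟩
  have hxs0 : 0 ≤ xs := ge_of_tendsto' hQx_lim (fun t => (hΦ t).1)
  have hys : q₂ ≤ ys := ge_of_tendsto' hQy_lim (fun t => (hΦ t).2.1)
  have hden1 : (1 + r₁ / K₁ * xs + α₁ * ys) ≠ 0 :=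
    (den_pos hr₁ hK₁ hα₁ hxs0 (hq₂.le.trans hys)).ne'
  have hden2 : (1 + r₂ / K₂ * ys + α₂ * xs) ≠ 0 :=
    (den_pos hr₂ hK₂ hα₂ (hq₂.le.trans hys) hxs0).ne'
  have hFx : Tendsto (fun t => F r₁ K₁ α₁ (Q t).1 (Q t).2) atTop (𝓝 (F r₁ K₁ α₁ xs ys)) := by
    unfold F
    exact (hQx_lim.const_mul (1 + r₁)).div
      ((tendsto_const_nhds.add (hQx_lim.const_mul (r₁ / K₁))).add (hQy_lim.const_mul α₁)) hden1
  have hFy : Tendsto (fun t => F r₂ K₂ α₂ (Q t).2 (Q t).1) atTop (𝓝 (F r₂ K₂ α₂ ys xs)) := by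
    unfold F
    exact (hQy_lim.const_mul (1 + r₂)).div
      ((tendsto_const_nhds.add (hQy_lim.const_mul (r₂ / K₂))).add (hQx_lim.const_mul α₂)) hden2
  have hshiftx : Tendsto (fun t => (Q (t + 1)).1) atTop (𝓝 xs) :=
    hQx_lim.comp (tendsto_add_atTop_nat 1)
  have hshifty : Tendsto (fun t => (Q (t + 1)).2) atTop (𝓝 ys) :=
    hQy_lim.comp (tendsto_add_atTop_nat 1)
  have hfix1 : F r₁ K₁ α₁ xs ys = xs :=
    tendsto_nhds_unique (hFx.congr (fun t => ((hQs t).1).symm)) hshiftx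
  have hfix2 : F r₂ K₂ α₂ ys xs = ys :=
    tendsto_nhds_unique (hFy.congr (fun t => ((hQs t).2).symm)) hshifty
  obtain ⟨hxs_eq, hys_eq⟩ := fixed_point_unique hr₁ hr₂ hK₁ hK₂ hα₁ hα₂ hC12 hC21
    hxs0 (hq₂.trans_le hys) hfix1 hfix2
  have hcomp : ∀ t, X (t₀ + t) ≤ (Q t).1 ∧ (Q t).2 ≤ Y (t₀ + t) := by
    intro t
    induction t with
    | zero =>
      constructor
      · rw [hQ0]; simpa using hXt₀
      · rw [hQ0]; simpa using hq₂Y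
    | succ n ih =>
      have hXn : X (t₀ + (n + 1)) = F r₁ K₁ α₁ (X (t₀ + n)) (Y (t₀ + n)) := hXrec (t₀ + n)
      have hYn : Y (t₀ + (n + 1)) = F r₂ K₂ α₂ (Y (t₀ + n)) (X (t₀ + n)) := hYrec (t₀ + n)
      constructor
      · rw [hXn, (hQs n).1]
        exact F_mono hr₁ hK₁ hα₁ (hpos _).1.le ih.1 (hq₂.le.trans (hΦ n).2.1) ih.2
      · rw [hYn, (hQs n).2]
        exact F_mono hr₂ hK₂ hα₂ (hq₂.le.trans (hΦ n).2.1) ih.2 (hpos _).1.le ih.1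
  have hXlim : Tendsto X atTop (𝓝 0) := by
    have h0 : Tendsto (fun t => (Q t).1) atTop (𝓝 0) := hxs_eq ▸ hQx_lim
    have h1 : Tendsto (fun t => X (t + t₀)) atTop (𝓝 0) := by
      apply squeeze_zero (fun t => (hpos _).1.le) (fun t => ?_) h0
      have hc := (hcomp t).1
      rwa [Nat.add_comm t₀ t] at hc
    exact (tendsto_add_atTop_iff_nat t₀).1 h1
  have hYlim : Tendsto Y atTop (𝓝 K₂) := by
    rw [tendsto_order]
    constructor
    · intro b hb
      have h0 : Tendsto (fun t => (Q t).2) atTop (𝓝 K₂) := hys_eq ▸ hQy_lim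
      obtain ⟨s₀, hs₀⟩ := (h0.eventually (eventually_gt_nhds hb)).exists
      refine Filter.eventually_atTop.2 ⟨t₀ + s₀, fun t ht => ?_⟩
      have h1 : (Q s₀).2 ≤ (Q (t - t₀)).2 := hQy_mono (by omega)
      have h2 : (Q (t - t₀)).2 ≤ Y (t₀ + (t - t₀)) := (hcomp (t - t₀)).2
      have h3 : t₀ + (t - t₀) = t := by omega
      rw [h3] at h2
      linarith
    · intro b hb
      have hev := eventually_le hr₂ hK₂ hα₂ (fun t => (hpos t).2.le) (fun t => (hpos t).1.le)
        hYrec (show (0:ℝ) < (b - K₂) / 2 by linarith)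
      filter_upwards [hev] with t ht
      linarith
  exact hXlim.prodMk_nhds hYlim
end

section
/- For the Leslie–Gower competition map with C₁₂ = C₂₁ = 0 (i.e., r₁/α₁ = K₂ and r₂/α₂ = K₁), the only positive root-curve associated with the nullcline Y = h(X) coincides with the nullcline itself; consequently L_h(X,Y) < 0 for all (X,Y) in R₁ = {(X,Y) : X, Y > 0, Y < h(X)} and L_h(X,Y) > 0 for all (X,Y) in R₂ = {(X,Y) : X, Y > 0, Y > h(X)}. -/
theorem stmt12 (r₁ r₂ K₁ K₂ α₁ α₂ : ℝ)
    (hr₁ : 0 < r₁) (hr₂ : 0 < r₂) (hK₁ : 0 < K₁) (hK₂ : 0 < K₂)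
    (hα₁ : 0 < α₁) (hα₂ : 0 < α₂)
    (hc1 : r₁ / α₁ = K₂) (hc2 : r₂ / α₂ = K₁) :
    (∀ X Y : ℝ, 0 < X → 0 < Y →
        (G r₂ K₂ α₂ X Y - h r₁ K₁ α₁ (F r₁ K₁ α₁ X Y) = 0 ↔ Y = h r₁ K₁ α₁ X)) ∧
    (∀ X Y : ℝ, 0 < X → 0 < Y → Y < h r₁ K₁ α₁ X →
        G r₂ K₂ α₂ X Y - h r₁ K₁ α₁ (F r₁ K₁ α₁ X Y) < 0) ∧
    (∀ X Y : ℝ, 0 < X → 0 < Y → h r₁ K₁ α₁ X < Y →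
        0 < G r₂ K₂ α₂ X Y - h r₁ K₁ α₁ (F r₁ K₁ α₁ X Y)) := by
  have hK₁0 : K₁ ≠ 0 := ne_of_gt hK₁
  have hK₂0 : K₂ ≠ 0 := ne_of_gt hK₂
  have hα₁e : α₁ = r₁ / K₂ := by
    field_simp at hc1 ⊢
    linarith
  have hα₂e : α₂ = r₂ / K₁ := by
    field_simp at hc2 ⊢
    linarith
  subst hα₁e hα₂e
  have key : ∀ X Y : ℝ, 0 < X → 0 < Y →
      G r₂ K₂ (r₂ / K₁) X Y - h r₁ K₁ (r₁ / K₂) (F r₁ K₁ (r₁ / K₂) X Y)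
        = (Y - h r₁ K₁ (r₁ / K₂) X) * (1 + r₁ * Y / K₂ + r₂ * X / K₁)
          / ((1 + r₁ * (X / K₁ + Y / K₂)) * (1 + r₂ * (X / K₁ + Y / K₂))) := by
    intro X Y hX hY
    have hu : 0 < X / K₁ + Y / K₂ := by positivity
    have hD₁ : (0:ℝ) < 1 + r₁ * (X / K₁ + Y / K₂) := by positivity
    have hD₂ : (0:ℝ) < 1 + r₂ * (X / K₁ + Y / K₂) := by positivity
    have hD₁' : (0:ℝ) < 1 + r₁ / K₁ * X + r₁ / K₂ * Y := by
      have : 1 + r₁ / K₁ * X + r₁ / K₂ * Y = 1 + r₁ * (X / K₁ + Y / K₂) := by ring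
      rw [this]; exact hD₁
    have hD₂' : (0:ℝ) < 1 + r₂ / K₂ * Y + r₂ / K₁ * X := by
      have : 1 + r₂ / K₂ * Y + r₂ / K₁ * X = 1 + r₂ * (X / K₁ + Y / K₂) := by ring
      rw [this]; exact hD₂
    unfold F G h
    have h1 := hD₁'.ne'
    have h2 := hD₂'.ne'
    field_simp
    ring
  refine ⟨?_, ?_, ?_⟩
  · intro X Y hX hY
    rw [key X Y hX hY]
    have hD₁ : (0:ℝ) < 1 + r₁ * (X / K₁ + Y / K₂) := by positivity
    have hD₂ : (0:ℝ) < 1 + r₂ * (X / K₁ + Y / K₂) := by positivity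
    have hP : (0:ℝ) < 1 + r₁ * Y / K₂ + r₂ * X / K₁ := by positivity
    rw [div_eq_zero_iff]
    constructor
    · rintro (hz | hz)
      · rcases mul_eq_zero.1 hz with hz | hz
        · linarith [sub_eq_zero.1 hz]
        · exact absurd hz (ne_of_gt hP)
      · exact absurd hz (by positivity)
    · intro hz
      left
      rw [hz, sub_self, zero_mul]
  · intro X Y hX hY hlt
    rw [key X Y hX hY]
    have hD₁ : (0:ℝ) < 1 + r₁ * (X / K₁ + Y / K₂) := by positivity
    have hD₂ : (0:ℝ) < 1 + r₂ * (X / K₁ + Y / K₂) := by positivity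
    have hP : (0:ℝ) < 1 + r₁ * Y / K₂ + r₂ * X / K₁ := by positivity
    apply div_neg_of_neg_of_pos
    · exact mul_neg_of_neg_of_pos (by linarith) hP
    · positivity
  · intro X Y hX hY hlt
    rw [key X Y hX hY]
    have hD₁ : (0:ℝ) < 1 + r₁ * (X / K₁ + Y / K₂) := by positivity
    have hD₂ : (0:ℝ) < 1 + r₂ * (X / K₁ + Y / K₂) := by positivity
    have hP : (0:ℝ) < 1 + r₁ * Y / K₂ + r₂ * X / K₁ := by positivity
    exact div_pos (mul_pos (by linarith) hP) (by positivity)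
end

section
/- For the Leslie–Gower competition map with C₁₂ = C₂₁ = 0, both regions R₁ = {(X,Y) : X, Y > 0, Y < h(X)} and R₂ = {(X,Y) : X, Y > 0, Y > h(X)} are invariant under the map, and every point on the segment E*_X = {(X, h(X)) : 0 ≤ X ≤ K₁} is a fixed point. -/
lemma key (r₁ r₂ K₁ α₁ X Y : ℝ)
    (hr₁ : 0 < r₁) (hr₂ : 0 < r₂) (hK₁ : 0 < K₁) (hα₁ : 0 < α₁)
    (hX : 0 < X) (hY : 0 < Y) :
    h r₁ K₁ α₁ (F r₁ K₁ α₁ X Y) - G r₂ (r₁/α₁) (r₂/K₁) X Y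
      = (h r₁ K₁ α₁ X - Y) * (1 + r₂ * X / K₁ + α₁ * Y)
        / ((1 + r₁ / K₁ * X + α₁ * Y) * (1 + (r₂/(r₁/α₁)) * Y + (r₂/K₁) * X)) := by
  have hd1 : (1 + r₁ / K₁ * X + α₁ * Y) ≠ 0 := by positivity
  have hd2 : (1 + (r₂/(r₁/α₁)) * Y + (r₂/K₁) * X) ≠ 0 := by positivity
  unfold h F G
  field_simp
  ring

theorem stmt13 (r₁ r₂ K₁ K₂ α₁ α₂ : ℝ)
    (hr₁ : 0 < r₁) (hr₂ : 0 < r₂) (hK₁ : 0 < K₁) (hK₂ : 0 < K₂)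
    (hα₁ : 0 < α₁) (hα₂ : 0 < α₂)
    (hc1 : r₁ / α₁ = K₂) (hc2 : r₂ / α₂ = K₁) :
    (∀ X Y : ℝ, 0 < X → 0 < Y → Y < h r₁ K₁ α₁ X →
        0 < F r₁ K₁ α₁ X Y ∧ 0 < G r₂ K₂ α₂ X Y ∧
          G r₂ K₂ α₂ X Y < h r₁ K₁ α₁ (F r₁ K₁ α₁ X Y)) ∧
    (∀ X Y : ℝ, 0 < X → 0 < Y → h r₁ K₁ α₁ X < Y →
        0 < F r₁ K₁ α₁ X Y ∧ 0 < G r₂ K₂ α₂ X Y ∧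
          h r₁ K₁ α₁ (F r₁ K₁ α₁ X Y) < G r₂ K₂ α₂ X Y) ∧
    (∀ X : ℝ, X ∈ Set.Icc 0 K₁ →
        F r₁ K₁ α₁ X (h r₁ K₁ α₁ X) = X ∧
        G r₂ K₂ α₂ X (h r₁ K₁ α₁ X) = h r₁ K₁ α₁ X) := by
  have eK₂ : K₂ = r₁ / α₁ := hc1.symm
  have eα₂ : α₂ = r₂ / K₁ := by
    rw [eq_div_iff hK₁.ne']
    field_simp at hc2
    linarith
  subst eK₂ eα₂
  have hFpos : ∀ X Y : ℝ, 0 < X → 0 < Y → 0 < F r₁ K₁ α₁ X Y := by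
    intro X Y hX hY
    apply div_pos (by positivity)
    positivity
  have hGpos : ∀ X Y : ℝ, 0 < X → 0 < Y → 0 < G r₂ (r₁/α₁) (r₂/K₁) X Y := by
    intro X Y hX hY
    apply div_pos (by positivity)
    positivity
  refine ⟨?_, ?_, ?_⟩
  · intro X Y hX hY hlt
    refine ⟨hFpos X Y hX hY, hGpos X Y hX hY, ?_⟩
    have := key r₁ r₂ K₁ α₁ X Y hr₁ hr₂ hK₁ hα₁ hX hY
    have hpos : 0 < (h r₁ K₁ α₁ X - Y) * (1 + r₂ * X / K₁ + α₁ * Y)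
        / ((1 + r₁ / K₁ * X + α₁ * Y) * (1 + (r₂/(r₁/α₁)) * Y + (r₂/K₁) * X)) := by
      apply div_pos
      · apply mul_pos (by linarith) (by positivity)
      · positivity
    linarith [this ▸ hpos]
  · intro X Y hX hY hlt
    refine ⟨hFpos X Y hX hY, hGpos X Y hX hY, ?_⟩
    have := key r₁ r₂ K₁ α₁ X Y hr₁ hr₂ hK₁ hα₁ hX hY
    have hneg : (h r₁ K₁ α₁ X - Y) * (1 + r₂ * X / K₁ + α₁ * Y)
        / ((1 + r₁ / K₁ * X + α₁ * Y) * (1 + (r₂/(r₁/α₁)) * Y + (r₂/K₁) * X)) < 0 := by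
      apply div_neg_of_neg_of_pos
      · apply mul_neg_of_neg_of_pos (by linarith) (by positivity)
      · positivity
    linarith [this ▸ hneg]
  · intro X hX
    constructor
    · unfold F h
      have hd : 1 + r₁ / K₁ * X + α₁ * (r₁ / (α₁ * K₁) * (K₁ - X)) = 1 + r₁ := by
        field_simp; ring
      rw [hd]
      field_simp
    · unfold G h
      have hd : 1 + r₂ / (r₁ / α₁) * (r₁ / (α₁ * K₁) * (K₁ - X)) + r₂ / K₁ * X = 1 + r₂ := by
        field_simp; ring
      rw [hd]
      field_simp
end

section
/- For the Leslie–Gower competition map with C₁₂ = C₂₁ = 0, every equilibrium (X̂, Ŷ) on the segment E*_X = {(X, h(X)) : 0 ≤ X ≤ K₁} is Lyapunov stable, and every orbit with (X₀, Y₀) ≠ (0,0), X₀, Y₀ ≥ 0 converges to some point of E*_X. -/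
/-! ### scalar inequalities -/

lemma uv_denom_pos {r S : ℝ} (hr : 0 < r) (hS : 0 ≤ S) : 0 < 1 + r * S := by nlinarith

lemma uv_nonneg {r u S : ℝ} (hr : 0 < r) (hu : 0 ≤ u) (hS : 0 ≤ S) :
    0 ≤ (1 + r) * u / (1 + r * S) :=
  div_nonneg (mul_nonneg (by linarith) hu) (uv_denom_pos hr hS).le

lemma uv_monoA {r u S : ℝ} (hr : 0 < r) (hu : 0 ≤ u) (hS0 : 0 ≤ S) (hS : S ≤ 1) :
    u ≤ (1 + r) * u / (1 + r * S) := by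
  rw [le_div_iff₀ (uv_denom_pos hr hS0)]
  nlinarith [mul_nonneg (mul_nonneg hr.le hu) (sub_nonneg.2 hS)]

lemma uv_monoB {r u S : ℝ} (hr : 0 < r) (hu : 0 ≤ u) (hS : 1 ≤ S) :
    (1 + r) * u / (1 + r * S) ≤ u := by
  rw [div_le_iff₀ (uv_denom_pos hr (by linarith))]
  nlinarith [mul_nonneg (mul_nonneg hr.le hu) (sub_nonneg.2 hS)]

lemma uv_sumA {r s u v : ℝ} (hr : 0 < r) (hs : 0 < s) (hu : 0 ≤ u) (hv : 0 ≤ v)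
    (hS : u + v ≤ 1) :
    (1 + r) * u / (1 + r * (u + v)) + (1 + s) * v / (1 + s * (u + v)) ≤ 1 := by
  have h1 := uv_denom_pos hr (show (0:ℝ) ≤ u + v by linarith)
  have h2 := uv_denom_pos hs (show (0:ℝ) ≤ u + v by linarith)
  rw [div_add_div _ _ h1.ne' h2.ne', div_le_one (by positivity)]
  nlinarith [mul_nonneg (sub_nonneg.2 hS) (by positivity : (0:ℝ) ≤ r * v + s * u),
    sub_nonneg.2 hS]

lemma uv_sumB {r s u v : ℝ} (hr : 0 < r) (hs : 0 < s) (hu : 0 ≤ u) (hv : 0 ≤ v)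
    (hS : 1 ≤ u + v) :
    1 ≤ (1 + r) * u / (1 + r * (u + v)) + (1 + s) * v / (1 + s * (u + v)) := by
  have h1 := uv_denom_pos hr (show (0:ℝ) ≤ u + v by linarith)
  have h2 := uv_denom_pos hs (show (0:ℝ) ≤ u + v by linarith)
  rw [div_add_div _ _ h1.ne' h2.ne', le_div_iff₀ (by positivity)]
  nlinarith [mul_nonneg (sub_nonneg.2 hS) (by positivity : (0:ℝ) ≤ r * v + s * u),
    sub_nonneg.2 hS]

/-! ### the map in normalized coordinates -/

lemma T_eq {r₁ r₂ K₁ K₂ α₁ α₂ : ℝ} (hK₁ : 0 < K₁) (hK₂ : 0 < K₂)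
    (hα₁ : 0 < α₁) (hα₂ : 0 < α₂) (hc1 : r₁ / α₁ = K₂) (hc2 : r₂ / α₂ = K₁) (p : ℝ × ℝ) :
    T r₁ r₂ K₁ K₂ α₁ α₂ p =
      ((1 + r₁) * p.1 / (1 + r₁ * (p.1 / K₁ + p.2 / K₂)),
       (1 + r₂) * p.2 / (1 + r₂ * (p.1 / K₁ + p.2 / K₂))) := by
  have h1 : r₁ = α₁ * K₂ := by rw [div_eq_iff hα₁.ne'] at hc1; linarith
  have h2 : r₂ = α₂ * K₁ := by rw [div_eq_iff hα₂.ne'] at hc2; linarith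
  have d1 : 1 + r₁ / K₁ * p.1 + α₁ * p.2 = 1 + r₁ * (p.1 / K₁ + p.2 / K₂) := by
    rw [h1]; field_simp; ring
  have d2 : 1 + r₂ / K₂ * p.2 + α₂ * p.1 = 1 + r₂ * (p.1 / K₁ + p.2 / K₂) := by
    rw [h2]; field_simp; ring
  simp only [T, F, G, Prod.mk.injEq, d1, d2]

noncomputable def US (r₁ r₂ K₁ K₂ α₁ α₂ : ℝ) (p : ℝ × ℝ) (t : ℕ) : ℝ :=
  ((T r₁ r₂ K₁ K₂ α₁ α₂)^[t] p).1 / K₁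

noncomputable def VS (r₁ r₂ K₁ K₂ α₁ α₂ : ℝ) (p : ℝ × ℝ) (t : ℕ) : ℝ :=
  ((T r₁ r₂ K₁ K₂ α₁ α₂)^[t] p).2 / K₂

lemma UV_rec {r₁ r₂ K₁ K₂ α₁ α₂ : ℝ} (hK₁ : 0 < K₁) (hK₂ : 0 < K₂)
    (hα₁ : 0 < α₁) (hα₂ : 0 < α₂) (hc1 : r₁ / α₁ = K₂) (hc2 : r₂ / α₂ = K₁)
    (p : ℝ × ℝ) (t : ℕ) :
    US r₁ r₂ K₁ K₂ α₁ α₂ p (t+1) =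
      (1 + r₁) * US r₁ r₂ K₁ K₂ α₁ α₂ p t /
        (1 + r₁ * (US r₁ r₂ K₁ K₂ α₁ α₂ p t + VS r₁ r₂ K₁ K₂ α₁ α₂ p t)) ∧
    VS r₁ r₂ K₁ K₂ α₁ α₂ p (t+1) =
      (1 + r₂) * VS r₁ r₂ K₁ K₂ α₁ α₂ p t /
        (1 + r₂ * (US r₁ r₂ K₁ K₂ α₁ α₂ p t + VS r₁ r₂ K₁ K₂ α₁ α₂ p t)) := by
  simp only [US, VS, Function.iterate_succ_apply', T_eq hK₁ hK₂ hα₁ hα₂ hc1 hc2]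
  constructor <;> ring

lemma invA {r₁ r₂ K₁ K₂ α₁ α₂ : ℝ}
    (hr₁ : 0 < r₁) (hr₂ : 0 < r₂) (hK₁ : 0 < K₁) (hK₂ : 0 < K₂)
    (hα₁ : 0 < α₁) (hα₂ : 0 < α₂) (hc1 : r₁ / α₁ = K₂) (hc2 : r₂ / α₂ = K₁)
    (p : ℝ × ℝ) (hp1 : 0 ≤ p.1) (hp2 : 0 ≤ p.2) (hS : p.1 / K₁ + p.2 / K₂ ≤ 1) (t : ℕ) :
    0 ≤ US r₁ r₂ K₁ K₂ α₁ α₂ p t ∧ 0 ≤ VS r₁ r₂ K₁ K₂ α₁ α₂ p t ∧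
      US r₁ r₂ K₁ K₂ α₁ α₂ p t + VS r₁ r₂ K₁ K₂ α₁ α₂ p t ≤ 1 ∧
      US r₁ r₂ K₁ K₂ α₁ α₂ p t ≤ US r₁ r₂ K₁ K₂ α₁ α₂ p (t+1) ∧
      VS r₁ r₂ K₁ K₂ α₁ α₂ p t ≤ VS r₁ r₂ K₁ K₂ α₁ α₂ p (t+1) := by
  have base : ∀ s : ℕ, 0 ≤ US r₁ r₂ K₁ K₂ α₁ α₂ p s ∧ 0 ≤ VS r₁ r₂ K₁ K₂ α₁ α₂ p s ∧
      US r₁ r₂ K₁ K₂ α₁ α₂ p s + VS r₁ r₂ K₁ K₂ α₁ α₂ p s ≤ 1 := by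
    intro s
    induction s with
    | zero =>
      simp only [US, VS, Function.iterate_zero_apply]
      exact ⟨div_nonneg hp1 hK₁.le, div_nonneg hp2 hK₂.le, hS⟩
    | succ n ih =>
      obtain ⟨hu, hv, hs⟩ := ih
      obtain ⟨e1, e2⟩ := UV_rec hK₁ hK₂ hα₁ hα₂ hc1 hc2 p n
      rw [e1, e2]
      exact ⟨uv_nonneg hr₁ hu (by linarith), uv_nonneg hr₂ hv (by linarith),
        uv_sumA hr₁ hr₂ hu hv hs⟩
  obtain ⟨hu, hv, hs⟩ := base t
  obtain ⟨e1, e2⟩ := UV_rec hK₁ hK₂ hα₁ hα₂ hc1 hc2 p t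
  refine ⟨hu, hv, hs, ?_, ?_⟩
  · rw [e1]; exact uv_monoA hr₁ hu (by linarith) hs
  · rw [e2]; exact uv_monoA hr₂ hv (by linarith) hs

lemma invB {r₁ r₂ K₁ K₂ α₁ α₂ : ℝ}
    (hr₁ : 0 < r₁) (hr₂ : 0 < r₂) (hK₁ : 0 < K₁) (hK₂ : 0 < K₂)
    (hα₁ : 0 < α₁) (hα₂ : 0 < α₂) (hc1 : r₁ / α₁ = K₂) (hc2 : r₂ / α₂ = K₁)
    (p : ℝ × ℝ) (hp1 : 0 ≤ p.1) (hp2 : 0 ≤ p.2) (hS : 1 ≤ p.1 / K₁ + p.2 / K₂) (t : ℕ) :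
    0 ≤ US r₁ r₂ K₁ K₂ α₁ α₂ p t ∧ 0 ≤ VS r₁ r₂ K₁ K₂ α₁ α₂ p t ∧
      1 ≤ US r₁ r₂ K₁ K₂ α₁ α₂ p t + VS r₁ r₂ K₁ K₂ α₁ α₂ p t ∧
      US r₁ r₂ K₁ K₂ α₁ α₂ p (t+1) ≤ US r₁ r₂ K₁ K₂ α₁ α₂ p t ∧
      VS r₁ r₂ K₁ K₂ α₁ α₂ p (t+1) ≤ VS r₁ r₂ K₁ K₂ α₁ α₂ p t := by
  have base : ∀ s : ℕ, 0 ≤ US r₁ r₂ K₁ K₂ α₁ α₂ p s ∧ 0 ≤ VS r₁ r₂ K₁ K₂ α₁ α₂ p s ∧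
      1 ≤ US r₁ r₂ K₁ K₂ α₁ α₂ p s + VS r₁ r₂ K₁ K₂ α₁ α₂ p s := by
    intro s
    induction s with
    | zero =>
      simp only [US, VS, Function.iterate_zero_apply]
      exact ⟨div_nonneg hp1 hK₁.le, div_nonneg hp2 hK₂.le, hS⟩
    | succ n ih =>
      obtain ⟨hu, hv, hs⟩ := ih
      obtain ⟨e1, e2⟩ := UV_rec hK₁ hK₂ hα₁ hα₂ hc1 hc2 p n
      rw [e1, e2]
      exact ⟨uv_nonneg hr₁ hu (by linarith), uv_nonneg hr₂ hv (by linarith),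
        uv_sumB hr₁ hr₂ hu hv hs⟩
  obtain ⟨hu, hv, hs⟩ := base t
  obtain ⟨e1, e2⟩ := UV_rec hK₁ hK₂ hα₁ hα₂ hc1 hc2 p t
  refine ⟨hu, hv, hs, ?_, ?_⟩
  · rw [e1]; exact uv_monoB hr₁ hu hs
  · rw [e2]; exact uv_monoB hr₂ hv hs

open Filter Topology in
lemma fix_eq {r₁ r₂ K₁ K₂ α₁ α₂ : ℝ}
    (hr₁ : 0 < r₁) (hr₂ : 0 < r₂) (hK₁ : 0 < K₁) (hK₂ : 0 < K₂)
    (hα₁ : 0 < α₁) (hα₂ : 0 < α₂) (hc1 : r₁ / α₁ = K₂) (hc2 : r₂ / α₂ = K₁)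
    (p : ℝ × ℝ) {Us Vs : ℝ}
    (hU : Tendsto (US r₁ r₂ K₁ K₂ α₁ α₂ p) atTop (nhds Us))
    (hV : Tendsto (VS r₁ r₂ K₁ K₂ α₁ α₂ p) atTop (nhds Vs))
    (hU0 : 0 ≤ Us) (hV0 : 0 ≤ Vs) :
    Us * (Us + Vs - 1) = 0 ∧ Vs * (Us + Vs - 1) = 0 := by
  have hD1 : (0:ℝ) < 1 + r₁ * (Us + Vs) := uv_denom_pos hr₁ (by linarith)
  have hD2 : (0:ℝ) < 1 + r₂ * (Us + Vs) := uv_denom_pos hr₂ (by linarith)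
  constructor
  · have h1 : Tendsto (fun t => US r₁ r₂ K₁ K₂ α₁ α₂ p (t+1)) atTop (nhds Us) :=
      (tendsto_add_atTop_iff_nat 1).mpr hU
    have h2 : Tendsto (fun t => (1 + r₁) * US r₁ r₂ K₁ K₂ α₁ α₂ p t /
        (1 + r₁ * (US r₁ r₂ K₁ K₂ α₁ α₂ p t + VS r₁ r₂ K₁ K₂ α₁ α₂ p t))) atTop
        (nhds ((1 + r₁) * Us / (1 + r₁ * (Us + Vs)))) :=
      (tendsto_const_nhds.mul hU).div
        (tendsto_const_nhds.add (tendsto_const_nhds.mul (hU.add hV))) hD1.ne'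
    have heq : Us = (1 + r₁) * Us / (1 + r₁ * (Us + Vs)) := by
      refine tendsto_nhds_unique h1 ?_
      have e : (fun t => US r₁ r₂ K₁ K₂ α₁ α₂ p (t+1)) = fun t =>
          (1 + r₁) * US r₁ r₂ K₁ K₂ α₁ α₂ p t /
            (1 + r₁ * (US r₁ r₂ K₁ K₂ α₁ α₂ p t + VS r₁ r₂ K₁ K₂ α₁ α₂ p t)) :=
        funext fun t => (UV_rec hK₁ hK₂ hα₁ hα₂ hc1 hc2 p t).1
      rw [e]; exact h2
    rw [eq_div_iff hD1.ne'] at heq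
    have hz : r₁ * (Us * (Us + Vs - 1)) = 0 := by linear_combination heq
    exact (mul_eq_zero.mp hz).resolve_left hr₁.ne'
  · have h1 : Tendsto (fun t => VS r₁ r₂ K₁ K₂ α₁ α₂ p (t+1)) atTop (nhds Vs) :=
      (tendsto_add_atTop_iff_nat 1).mpr hV
    have h2 : Tendsto (fun t => (1 + r₂) * VS r₁ r₂ K₁ K₂ α₁ α₂ p t /
        (1 + r₂ * (US r₁ r₂ K₁ K₂ α₁ α₂ p t + VS r₁ r₂ K₁ K₂ α₁ α₂ p t))) atTop
        (nhds ((1 + r₂) * Vs / (1 + r₂ * (Us + Vs)))) :=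
      (tendsto_const_nhds.mul hV).div
        (tendsto_const_nhds.add (tendsto_const_nhds.mul (hU.add hV))) hD2.ne'
    have heq : Vs = (1 + r₂) * Vs / (1 + r₂ * (Us + Vs)) := by
      refine tendsto_nhds_unique h1 ?_
      have e : (fun t => VS r₁ r₂ K₁ K₂ α₁ α₂ p (t+1)) = fun t =>
          (1 + r₂) * VS r₁ r₂ K₁ K₂ α₁ α₂ p t /
            (1 + r₂ * (US r₁ r₂ K₁ K₂ α₁ α₂ p t + VS r₁ r₂ K₁ K₂ α₁ α₂ p t)) :=
        funext fun t => (UV_rec hK₁ hK₂ hα₁ hα₂ hc1 hc2 p t).2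
      rw [e]; exact h2
    rw [eq_div_iff hD2.ne'] at heq
    have hz : r₂ * (Vs * (Us + Vs - 1)) = 0 := by linear_combination heq
    exact (mul_eq_zero.mp hz).resolve_left hr₂.ne'

open Filter Topology in
lemma key_s14 {r₁ r₂ K₁ K₂ α₁ α₂ : ℝ}
    (hr₁ : 0 < r₁) (hr₂ : 0 < r₂) (hK₁ : 0 < K₁) (hK₂ : 0 < K₂)
    (hα₁ : 0 < α₁) (hα₂ : 0 < α₂) (hc1 : r₁ / α₁ = K₂) (hc2 : r₂ / α₂ = K₁)
    (p : ℝ × ℝ) (hp1 : 0 ≤ p.1) (hp2 : 0 ≤ p.2) (hp0 : p ≠ (0, 0)) :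
    ∃ Us Vs : ℝ, 0 ≤ Us ∧ 0 ≤ Vs ∧ Us + Vs = 1 ∧
      Tendsto (US r₁ r₂ K₁ K₂ α₁ α₂ p) atTop (nhds Us) ∧
      Tendsto (VS r₁ r₂ K₁ K₂ α₁ α₂ p) atTop (nhds Vs) := by
  rcases le_total (p.1 / K₁ + p.2 / K₂) 1 with hS | hS
  · -- increasing case
    have inv := invA hr₁ hr₂ hK₁ hK₂ hα₁ hα₂ hc1 hc2 p hp1 hp2 hS
    have monoU : Monotone (US r₁ r₂ K₁ K₂ α₁ α₂ p) :=
      monotone_nat_of_le_succ fun t => (inv t).2.2.2.1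
    have monoV : Monotone (VS r₁ r₂ K₁ K₂ α₁ α₂ p) :=
      monotone_nat_of_le_succ fun t => (inv t).2.2.2.2
    have bU : BddAbove (Set.range (US r₁ r₂ K₁ K₂ α₁ α₂ p)) := by
      refine ⟨1, ?_⟩; rintro _ ⟨t, rfl⟩
      have := inv t; linarith [this.2.1, this.2.2.1]
    have bV : BddAbove (Set.range (VS r₁ r₂ K₁ K₂ α₁ α₂ p)) := by
      refine ⟨1, ?_⟩; rintro _ ⟨t, rfl⟩
      have := inv t; linarith [this.1, this.2.2.1]
    have hU := tendsto_atTop_ciSup monoU bU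
    have hV := tendsto_atTop_ciSup monoV bV
    set Us := ⨆ t, US r₁ r₂ K₁ K₂ α₁ α₂ p t with hUs
    set Vs := ⨆ t, VS r₁ r₂ K₁ K₂ α₁ α₂ p t with hVs
    have hU0 : 0 ≤ Us := le_trans (inv 0).1 (le_ciSup bU 0)
    have hV0 : 0 ≤ Vs := le_trans (inv 0).2.1 (le_ciSup bV 0)
    obtain ⟨e1, e2⟩ := fix_eq hr₁ hr₂ hK₁ hK₂ hα₁ hα₂ hc1 hc2 p hU hV hU0 hV0
    by_cases hone : Us + Vs = 1
    · exact ⟨Us, Vs, hU0, hV0, hone, hU, hV⟩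
    · exfalso
      have hUz : Us = 0 :=
        (mul_eq_zero.mp e1).resolve_right (fun hc => hone (by linarith [sub_eq_zero.mp hc]))
      have hVz : Vs = 0 :=
        (mul_eq_zero.mp e2).resolve_right (fun hc => hone (by linarith [sub_eq_zero.mp hc]))
      have h01 : US r₁ r₂ K₁ K₂ α₁ α₂ p 0 ≤ 0 := hUz ▸ le_ciSup bU 0
      have h02 : VS r₁ r₂ K₁ K₂ α₁ α₂ p 0 ≤ 0 := hVz ▸ le_ciSup bV 0
      simp only [US, VS, Function.iterate_zero_apply] at h01 h02
      apply hp0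
      have hx : p.1 = 0 := le_antisymm (by
        have := (div_le_iff₀ hK₁).mp h01; linarith) hp1
      have hy : p.2 = 0 := le_antisymm (by
        have := (div_le_iff₀ hK₂).mp h02; linarith) hp2
      exact Prod.ext hx hy
  · -- decreasing case
    have inv := invB hr₁ hr₂ hK₁ hK₂ hα₁ hα₂ hc1 hc2 p hp1 hp2 hS
    have monoU : Antitone (US r₁ r₂ K₁ K₂ α₁ α₂ p) :=
      antitone_nat_of_succ_le fun t => (inv t).2.2.2.1
    have monoV : Antitone (VS r₁ r₂ K₁ K₂ α₁ α₂ p) :=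
      antitone_nat_of_succ_le fun t => (inv t).2.2.2.2
    have bU : BddBelow (Set.range (US r₁ r₂ K₁ K₂ α₁ α₂ p)) := by
      refine ⟨0, ?_⟩; rintro _ ⟨t, rfl⟩; exact (inv t).1
    have bV : BddBelow (Set.range (VS r₁ r₂ K₁ K₂ α₁ α₂ p)) := by
      refine ⟨0, ?_⟩; rintro _ ⟨t, rfl⟩; exact (inv t).2.1
    have hU := tendsto_atTop_ciInf monoU bU
    have hV := tendsto_atTop_ciInf monoV bV
    set Us := ⨅ t, US r₁ r₂ K₁ K₂ α₁ α₂ p t with hUs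
    set Vs := ⨅ t, VS r₁ r₂ K₁ K₂ α₁ α₂ p t with hVs
    have hU0 : 0 ≤ Us := le_ciInf fun t => (inv t).1
    have hV0 : 0 ≤ Vs := le_ciInf fun t => (inv t).2.1
    obtain ⟨e1, e2⟩ := fix_eq hr₁ hr₂ hK₁ hK₂ hα₁ hα₂ hc1 hc2 p hU hV hU0 hV0
    by_cases hone : Us + Vs = 1
    · exact ⟨Us, Vs, hU0, hV0, hone, hU, hV⟩
    · exfalso
      have hUz : Us = 0 :=
        (mul_eq_zero.mp e1).resolve_right (fun hc => hone (by linarith [sub_eq_zero.mp hc]))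
      have hVz : Vs = 0 :=
        (mul_eq_zero.mp e2).resolve_right (fun hc => hone (by linarith [sub_eq_zero.mp hc]))
      have hge : 1 ≤ Us + Vs :=
        ge_of_tendsto (hU.add hV) (Filter.Eventually.of_forall fun t => (inv t).2.2.1)
      rw [hUz, hVz] at hge; linarith

lemma h_val {r₁ K₁ K₂ α₁ : ℝ} (hK₁ : 0 < K₁) (hα₁ : 0 < α₁) (hc1 : r₁ / α₁ = K₂)
    {Us Vs : ℝ} (hSum : Us + Vs = 1) : h r₁ K₁ α₁ (K₁ * Us) = K₂ * Vs := by
  have h1 : r₁ = α₁ * K₂ := by rw [div_eq_iff hα₁.ne'] at hc1; linarith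
  simp only [h, h1]
  field_simp
  linear_combination (-K₂) * hSum

open Filter Topology in
lemma part2 {r₁ r₂ K₁ K₂ α₁ α₂ : ℝ}
    (hr₁ : 0 < r₁) (hr₂ : 0 < r₂) (hK₁ : 0 < K₁) (hK₂ : 0 < K₂)
    (hα₁ : 0 < α₁) (hα₂ : 0 < α₂) (hc1 : r₁ / α₁ = K₂) (hc2 : r₂ / α₂ = K₁)
    (p : ℝ × ℝ) (hp1 : 0 ≤ p.1) (hp2 : 0 ≤ p.2) (hp0 : p ≠ (0, 0)) :
    ∃ Xhat ∈ Set.Icc (0 : ℝ) K₁,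
      Tendsto (fun t => (T r₁ r₂ K₁ K₂ α₁ α₂)^[t] p) atTop
        (nhds (Xhat, h r₁ K₁ α₁ Xhat)) := by
  obtain ⟨Us, Vs, hU0, hV0, hSum, hU, hV⟩ :=
    key_s14 hr₁ hr₂ hK₁ hK₂ hα₁ hα₂ hc1 hc2 p hp1 hp2 hp0
  refine ⟨K₁ * Us, ⟨by positivity, by nlinarith⟩, ?_⟩
  rw [h_val hK₁ hα₁ hc1 hSum]
  have hfun : (fun t => (T r₁ r₂ K₁ K₂ α₁ α₂)^[t] p) =
      fun t => (K₁ * US r₁ r₂ K₁ K₂ α₁ α₂ p t, K₂ * VS r₁ r₂ K₁ K₂ α₁ α₂ p t) := by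
    funext t
    refine Prod.ext ?_ ?_
    · simp only [US]; field_simp
    · simp only [VS]; field_simp
  rw [hfun]
  exact (tendsto_const_nhds.mul hU).prodMk_nhds (tendsto_const_nhds.mul hV)

set_option maxHeartbeats 2000000 in
lemma part1 {r₁ r₂ K₁ K₂ α₁ α₂ : ℝ}
    (hr₁ : 0 < r₁) (hr₂ : 0 < r₂) (hK₁ : 0 < K₁) (hK₂ : 0 < K₂)
    (hα₁ : 0 < α₁) (hα₂ : 0 < α₂) (hc1 : r₁ / α₁ = K₂) (hc2 : r₂ / α₂ = K₁)
    (Xhat : ℝ) (hXh : Xhat ∈ Set.Icc (0 : ℝ) K₁) (ε : ℝ) (hε : 0 < ε) :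
    ∃ δ > (0 : ℝ), ∀ p : ℝ × ℝ, 0 ≤ p.1 → 0 ≤ p.2 →
      dist p (Xhat, h r₁ K₁ α₁ Xhat) < δ →
      ∀ t : ℕ, dist ((T r₁ r₂ K₁ K₂ α₁ α₂)^[t] p) (Xhat, h r₁ K₁ α₁ Xhat) < ε := by
  obtain ⟨hX0, hXK⟩ := hXh
  set Uh : ℝ := Xhat / K₁ with hUh
  set Vh : ℝ := 1 - Xhat / K₁ with hVh
  have hXe : K₁ * Uh = Xhat := by rw [hUh]; field_simp
  have hUhVh : Uh + Vh = 1 := by rw [hUh, hVh]; ring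
  have hUh0 : 0 ≤ Uh := div_nonneg hX0 hK₁.le
  have hVh0 : 0 ≤ Vh := by rw [hVh]; have := (div_le_one hK₁).mpr hXK; linarith [this]
  have hYh : h r₁ K₁ α₁ Xhat = K₂ * Vh := by
    have := h_val hK₁ hα₁ hc1 (Us := Uh) (Vs := Vh) hUhVh
    rwa [hXe] at this
  refine ⟨min ε (min (ε * K₂ / K₁) (ε * K₁ / K₂)), by positivity, ?_⟩
  set δ : ℝ := min ε (min (ε * K₂ / K₁) (ε * K₁ / K₂)) with hδdef
  have hδ1 : δ ≤ ε := min_le_left _ _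
  have hδ2 : δ * K₁ ≤ ε * K₂ := by
    have : δ ≤ ε * K₂ / K₁ := le_trans (min_le_right _ _) (min_le_left _ _)
    exact (le_div_iff₀ hK₁).mp this
  have hδ3 : δ * K₂ ≤ ε * K₁ := by
    have : δ ≤ ε * K₁ / K₂ := le_trans (min_le_right _ _) (min_le_right _ _)
    exact (le_div_iff₀ hK₂).mp this
  clear_value δ Uh Vh
  intro p hp1 hp2 hd t
  rw [Prod.dist_eq] at hd
  have ha : |p.1 - Xhat| < δ := by
    have := lt_of_le_of_lt (le_max_left _ _) hd
    rwa [Real.dist_eq] at this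
  have hb : |p.2 - K₂ * Vh| < δ := by
    have := lt_of_le_of_lt (le_max_right _ _) hd
    rwa [Real.dist_eq, hYh] at this
  rw [abs_lt] at ha hb
  have hcomp1 : ((T r₁ r₂ K₁ K₂ α₁ α₂)^[t] p).1 = K₁ * US r₁ r₂ K₁ K₂ α₁ α₂ p t := by
    simp only [US]; field_simp
  have hcomp2 : ((T r₁ r₂ K₁ K₂ α₁ α₂)^[t] p).2 = K₂ * VS r₁ r₂ K₁ K₂ α₁ α₂ p t := by
    simp only [VS]; field_simp
  rw [Prod.dist_eq]
  dsimp only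
  rw [Real.dist_eq, Real.dist_eq, hcomp1, hcomp2, hYh]
  set a : ℝ := US r₁ r₂ K₁ K₂ α₁ α₂ p t with hadef
  set b : ℝ := VS r₁ r₂ K₁ K₂ α₁ α₂ p t with hbdef
  clear_value a b
  have hU00 : US r₁ r₂ K₁ K₂ α₁ α₂ p 0 = p.1 / K₁ := by
    simp only [US, Function.iterate_zero_apply]
  have hV00 : VS r₁ r₂ K₁ K₂ α₁ α₂ p 0 = p.2 / K₂ := by
    simp only [VS, Function.iterate_zero_apply]
  rcases le_total (p.1 / K₁ + p.2 / K₂) 1 with hS | hS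
  · -- increasing case
    have inv := invA hr₁ hr₂ hK₁ hK₂ hα₁ hα₂ hc1 hc2 p hp1 hp2 hS
    have monoU : Monotone (US r₁ r₂ K₁ K₂ α₁ α₂ p) :=
      monotone_nat_of_le_succ fun s => (inv s).2.2.2.1
    have monoV : Monotone (VS r₁ r₂ K₁ K₂ α₁ α₂ p) :=
      monotone_nat_of_le_succ fun s => (inv s).2.2.2.2
    have hua : p.1 / K₁ ≤ a := by
      rw [hadef, ← hU00]; exact monoU (Nat.zero_le t)
    have hvb : p.2 / K₂ ≤ b := by
      rw [hbdef, ← hV00]; exact monoV (Nat.zero_le t)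
    have hua' : p.1 ≤ K₁ * a := by
      have := (div_le_iff₀ hK₁).mp hua; linarith
    have hvb' : p.2 ≤ K₂ * b := by
      have := (div_le_iff₀ hK₂).mp hvb; linarith
    obtain ⟨ha0, hb0, hab, -, -⟩ := inv t
    have h7 : K₁ * Uh + K₁ * Vh = K₁ := by linear_combination K₁ * hUhVh
    have h8 : K₂ * Uh + K₂ * Vh = K₂ := by linear_combination K₂ * hUhVh
    apply max_lt <;> rw [abs_lt] <;> constructor
    · linarith only [ha.1, hua', hδ1]
    · have h2 : K₂ * Vh - K₂ * b < δ := by linarith only [hb.1, hvb']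
      have h4 : K₂ * (K₁ * Vh - K₁ * b) < K₂ * ε := by
        calc K₂ * (K₁ * Vh - K₁ * b) = K₁ * (K₂ * Vh - K₂ * b) := by ring
          _ < K₁ * δ := mul_lt_mul_of_pos_left h2 hK₁
          _ = δ * K₁ := by ring
          _ ≤ ε * K₂ := hδ2
          _ = K₂ * ε := by ring
      have h5 : K₁ * Vh - K₁ * b < ε := lt_of_mul_lt_mul_left h4 hK₂.le
      have h6 : K₁ * a ≤ K₁ * (1 - b) := mul_le_mul_of_nonneg_left (by rw [hadef, hbdef]; linarith only [hab]) hK₁.le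
      have h6' : K₁ * (1 - b) = K₁ - K₁ * b := by ring
      linarith only [h5, h6, h6', hXe, h7]
    · linarith only [hb.1, hvb', hδ1]
    · have h2 : K₁ * Uh - K₁ * a < δ := by linarith only [ha.1, hua', hXe]
      have h4 : K₁ * (K₂ * Uh - K₂ * a) < K₁ * ε := by
        calc K₁ * (K₂ * Uh - K₂ * a) = K₂ * (K₁ * Uh - K₁ * a) := by ring
          _ < K₂ * δ := mul_lt_mul_of_pos_left h2 hK₂
          _ = δ * K₂ := by ring
          _ ≤ ε * K₁ := hδ3
          _ = K₁ * ε := by ring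
      have h5 : K₂ * Uh - K₂ * a < ε := lt_of_mul_lt_mul_left h4 hK₁.le
      have h6 : K₂ * b ≤ K₂ * (1 - a) := mul_le_mul_of_nonneg_left (by rw [hadef, hbdef]; linarith only [hab]) hK₂.le
      have h6' : K₂ * (1 - a) = K₂ - K₂ * a := by ring
      linarith only [h5, h6, h6', h8]
  · -- decreasing case
    have inv := invB hr₁ hr₂ hK₁ hK₂ hα₁ hα₂ hc1 hc2 p hp1 hp2 hS
    have monoU : Antitone (US r₁ r₂ K₁ K₂ α₁ α₂ p) :=
      antitone_nat_of_succ_le fun s => (inv s).2.2.2.1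
    have monoV : Antitone (VS r₁ r₂ K₁ K₂ α₁ α₂ p) :=
      antitone_nat_of_succ_le fun s => (inv s).2.2.2.2
    have hua : a ≤ p.1 / K₁ := by
      rw [hadef, ← hU00]; exact monoU (Nat.zero_le t)
    have hvb : b ≤ p.2 / K₂ := by
      rw [hbdef, ← hV00]; exact monoV (Nat.zero_le t)
    have hua' : K₁ * a ≤ p.1 := by
      have := (le_div_iff₀ hK₁).mp hua; linarith
    have hvb' : K₂ * b ≤ p.2 := by
      have := (le_div_iff₀ hK₂).mp hvb; linarith
    obtain ⟨ha0, hb0, hab, -, -⟩ := inv t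
    have h7 : K₁ * Uh + K₁ * Vh = K₁ := by linear_combination K₁ * hUhVh
    have h8 : K₂ * Uh + K₂ * Vh = K₂ := by linear_combination K₂ * hUhVh
    apply max_lt <;> rw [abs_lt] <;> constructor
    · have h2 : K₂ * b - K₂ * Vh < δ := by linarith only [hb.2, hvb']
      have h4 : K₂ * (K₁ * b - K₁ * Vh) < K₂ * ε := by
        calc K₂ * (K₁ * b - K₁ * Vh) = K₁ * (K₂ * b - K₂ * Vh) := by ring
          _ < K₁ * δ := mul_lt_mul_of_pos_left h2 hK₁
          _ = δ * K₁ := by ring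
          _ ≤ ε * K₂ := hδ2
          _ = K₂ * ε := by ring
      have h5 : K₁ * b - K₁ * Vh < ε := lt_of_mul_lt_mul_left h4 hK₂.le
      have h6 : K₁ * (1 - b) ≤ K₁ * a := mul_le_mul_of_nonneg_left (by rw [hadef, hbdef]; linarith only [hab]) hK₁.le
      have h6' : K₁ * (1 - b) = K₁ - K₁ * b := by ring
      linarith only [h5, h6, h6', hXe, h7]
    · linarith only [ha.2, hua', hδ1]
    · have h2 : K₁ * a - K₁ * Uh < δ := by linarith only [ha.2, hua', hXe]
      have h4 : K₁ * (K₂ * a - K₂ * Uh) < K₁ * ε := by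
        calc K₁ * (K₂ * a - K₂ * Uh) = K₂ * (K₁ * a - K₁ * Uh) := by ring
          _ < K₂ * δ := mul_lt_mul_of_pos_left h2 hK₂
          _ = δ * K₂ := by ring
          _ ≤ ε * K₁ := hδ3
          _ = K₁ * ε := by ring
      have h5 : K₂ * a - K₂ * Uh < ε := lt_of_mul_lt_mul_left h4 hK₁.le
      have h6 : K₂ * (1 - a) ≤ K₂ * b := mul_le_mul_of_nonneg_left (by rw [hadef, hbdef]; linarith only [hab]) hK₂.le
      have h6' : K₂ * (1 - a) = K₂ - K₂ * a := by ring
      linarith only [h5, h6, h6', h8]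
    · linarith only [hb.2, hvb', hδ1]

theorem stmt14 (r₁ r₂ K₁ K₂ α₁ α₂ : ℝ)
    (hr₁ : 0 < r₁) (hr₂ : 0 < r₂) (hK₁ : 0 < K₁) (hK₂ : 0 < K₂)
    (hα₁ : 0 < α₁) (hα₂ : 0 < α₂)
    (hc1 : r₁ / α₁ = K₂) (hc2 : r₂ / α₂ = K₁) :
    (∀ Xhat ∈ Set.Icc (0 : ℝ) K₁, ∀ ε > (0 : ℝ), ∃ δ > (0 : ℝ),
        ∀ p : ℝ × ℝ, 0 ≤ p.1 → 0 ≤ p.2 →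
          dist p (Xhat, h r₁ K₁ α₁ Xhat) < δ →
          ∀ t : ℕ, dist ((T r₁ r₂ K₁ K₂ α₁ α₂)^[t] p) (Xhat, h r₁ K₁ α₁ Xhat) < ε) ∧
    (∀ p : ℝ × ℝ, 0 ≤ p.1 → 0 ≤ p.2 → p ≠ (0, 0) →
        ∃ Xhat ∈ Set.Icc (0 : ℝ) K₁,
          Filter.Tendsto (fun t => (T r₁ r₂ K₁ K₂ α₁ α₂)^[t] p) Filter.atTop
            (nhds (Xhat, h r₁ K₁ α₁ Xhat))) := by
  constructor
  · intro Xhat hXh ε hε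
    exact part1 hr₁ hr₂ hK₁ hK₂ hα₁ hα₂ hc1 hc2 Xhat hXh ε hε
  · intro p hp1 hp2 hp0
    exact part2 hr₁ hr₂ hK₁ hK₂ hα₁ hα₂ hc1 hc2 p hp1 hp2 hp0
end

section
/- For the Leslie–Gower competition map with C₁₂ · C₂₁ > 0, if (X̄, Ȳ) lies in both root-sets S_h and S_k and satisfies 0 < X̄ ≤ X*, 0 < Ȳ ≤ Y* (or X̄ ≥ X*, Ȳ ≥ Y*), then (X̄, Ȳ) = E* = (X*, Y*), the unique coexistence equilibrium. -/
set_option maxHeartbeats 1000000 in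
theorem stmt15 (r₁ r₂ K₁ K₂ α₁ α₂ : ℝ)
    (hr₁ : 0 < r₁) (hr₂ : 0 < r₂) (hK₁ : 0 < K₁) (hK₂ : 0 < K₂)
    (hα₁ : 0 < α₁) (hα₂ : 0 < α₂)
    (hC : (r₁ / α₁ - K₂) * (r₂ / α₂ - K₁) > 0)
    (Xs Ys : ℝ)
    (hXs : Xs = r₂ * K₁ * (α₁ * K₂ - r₁) / (α₁ * α₂ * K₁ * K₂ - r₁ * r₂))
    (hYs : Ys = r₁ * K₂ * (α₂ * K₁ - r₂) / (α₁ * α₂ * K₁ * K₂ - r₁ * r₂))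
    (Xbar Ybar : ℝ)
    (hSh : G r₂ K₂ α₂ Xbar Ybar - h r₁ K₁ α₁ (F r₁ K₁ α₁ Xbar Ybar) = 0)
    (hSk : G r₂ K₂ α₂ Xbar Ybar - k r₂ K₂ α₂ (F r₁ K₁ α₁ Xbar Ybar) = 0)
    (hloc : (0 < Xbar ∧ Xbar ≤ Xs ∧ 0 < Ybar ∧ Ybar ≤ Ys) ∨ (Xs ≤ Xbar ∧ Ys ≤ Ybar)) :
    Xbar = Xs ∧ Ybar = Ys := by
  -- sign analysis
  have hfac := mul_pos_iff.mp hC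
  have key : (α₁ * K₂ < r₁ ∧ α₂ * K₁ < r₂ ∧ α₁ * α₂ * K₁ * K₂ - r₁ * r₂ < 0) ∨
      (r₁ < α₁ * K₂ ∧ r₂ < α₂ * K₁ ∧ 0 < α₁ * α₂ * K₁ * K₂ - r₁ * r₂) := by
    rcases hfac with ⟨h1, h2⟩ | ⟨h1, h2⟩
    · left
      have h1' : K₂ * α₁ < r₁ := (lt_div_iff₀ hα₁).mp (by linarith : K₂ < r₁ / α₁)
      have h2' : K₁ * α₂ < r₂ := (lt_div_iff₀ hα₂).mp (by linarith : K₁ < r₂ / α₂)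
      refine ⟨by linarith, by linarith, ?_⟩
      nlinarith [mul_lt_mul'' h1' h2' (by positivity : (0:ℝ) ≤ K₂ * α₁) (by positivity : (0:ℝ) ≤ K₁ * α₂)]
    · right
      have h1' : r₁ < K₂ * α₁ := (div_lt_iff₀ hα₁).mp (by linarith : r₁ / α₁ < K₂)
      have h2' : r₂ < K₁ * α₂ := (div_lt_iff₀ hα₂).mp (by linarith : r₂ / α₂ < K₁)
      refine ⟨by linarith, by linarith, ?_⟩
      nlinarith [mul_lt_mul'' h1' h2' (le_of_lt hr₁) (le_of_lt hr₂)]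
  have hc : α₁ * α₂ * K₁ * K₂ - r₁ * r₂ ≠ 0 := by
    rcases key with ⟨_, _, h3⟩ | ⟨_, _, h3⟩
    · exact ne_of_lt h3
    · exact ne_of_gt h3
  -- scaled defining identities for Xs, Ys
  have hXsc : Xs * (α₁ * α₂ * K₁ * K₂ - r₁ * r₂) = r₂ * K₁ * (α₁ * K₂ - r₁) := by
    rw [hXs, div_mul_cancel₀ _ hc]
  have hYsc : Ys * (α₁ * α₂ * K₁ * K₂ - r₁ * r₂) = r₁ * K₂ * (α₂ * K₁ - r₂) := by
    rw [hYs, div_mul_cancel₀ _ hc]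
  have hXs0 : 0 < Xs := by
    rw [hXs]
    rcases key with ⟨h1, h2, h3⟩ | ⟨h1, h2, h3⟩
    · apply div_pos_of_neg_of_neg _ h3
      have : 0 < r₂ * K₁ := mul_pos hr₂ hK₁
      nlinarith
    · exact div_pos (mul_pos (mul_pos hr₂ hK₁) (by linarith)) h3
  have hYs0 : 0 < Ys := by
    rw [hYs]
    rcases key with ⟨h1, h2, h3⟩ | ⟨h1, h2, h3⟩
    · apply div_pos_of_neg_of_neg _ h3
      have : 0 < r₁ * K₂ := mul_pos hr₁ hK₂
      nlinarith
    · exact div_pos (mul_pos (mul_pos hr₁ hK₂) (by linarith)) h3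
  have hXb : 0 < Xbar := by
    rcases hloc with ⟨h1, _⟩ | ⟨h1, _⟩ <;> linarith
  have hYb : 0 < Ybar := by
    rcases hloc with ⟨_, _, h1, _⟩ | ⟨_, h1⟩ <;> linarith
  -- equilibrium identities (polynomial form)
  have e1 : r₁ * Xs + α₁ * Ys * K₁ = r₁ * K₁ := by
    apply mul_right_cancel₀ hc
    linear_combination r₁ * hXsc + α₁ * K₁ * hYsc
  have e2 : r₂ * Ys + α₂ * Xs * K₂ = r₂ * K₂ := by
    apply mul_right_cancel₀ hc
    linear_combination r₂ * hYsc + α₂ * K₂ * hXsc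
  -- denominators positive
  have hd1 : (0:ℝ) < 1 + r₁ / K₁ * Xbar + α₁ * Ybar := by
    have : 0 < r₁ / K₁ := div_pos hr₁ hK₁
    nlinarith
  have hd2 : (0:ℝ) < 1 + r₂ / K₂ * Ybar + α₂ * Xbar := by
    have : 0 < r₂ / K₂ := div_pos hr₂ hK₂
    nlinarith
  -- make the F-value opaque
  obtain ⟨Fv, hFv⟩ : ∃ v, F r₁ K₁ α₁ Xbar Ybar = v := ⟨_, rfl⟩
  rw [hFv] at hSh hSk
  have heq : h r₁ K₁ α₁ Fv = k r₂ K₂ α₂ Fv := by linarith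
  unfold h k at heq
  have hF : Fv = Xs := by
    rw [hXs, eq_div_iff hc]
    field_simp at heq
    linear_combination heq
  -- h(Xs) = Ys
  have hhXsYs : h r₁ K₁ α₁ Xs = Ys := by
    unfold h
    rw [div_mul_eq_mul_div, div_eq_iff (by positivity : α₁ * K₁ ≠ 0)]
    linear_combination -e1
  have hG : G r₂ K₂ α₂ Xbar Ybar = Ys := by
    have hGh : G r₂ K₂ α₂ Xbar Ybar = h r₁ K₁ α₁ Fv := by linarith
    rw [hGh, hF, hhXsYs]
  -- clear denominators in the fixed-point equations
  have hF' : (1 + r₁) * Xbar = Xs * (1 + r₁ / K₁ * Xbar + α₁ * Ybar) := by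
    have h0 := hFv
    unfold F at h0
    rw [div_eq_iff (ne_of_gt hd1)] at h0
    rw [hF] at h0
    linarith [h0]
  have hG' : (1 + r₂) * Ybar = Ys * (1 + r₂ / K₂ * Ybar + α₂ * Xbar) := by
    have h0 := hG
    unfold G at h0
    rw [div_eq_iff (ne_of_gt hd2)] at h0
    linarith [h0]
  -- the two linear relations
  have hK₁' : K₁ ≠ 0 := ne_of_gt hK₁
  have hK₂' : K₂ ≠ 0 := ne_of_gt hK₂
  have h3 : r₁ / K₁ * Xbar * K₁ = r₁ * Xbar := by field_simp
  have h4 : r₂ / K₂ * Ybar * K₂ = r₂ * Ybar := by field_simp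
  have hF2 : (1 + r₁) * Xbar * K₁ = Xs * (K₁ + r₁ * Xbar + α₁ * Ybar * K₁) := by
    linear_combination K₁ * hF' + Xs * h3
  have hG2 : (1 + r₂) * Ybar * K₂ = Ys * (K₂ + r₂ * Ybar + α₂ * Xbar * K₂) := by
    linear_combination K₂ * hG' + Ys * h4
  have hA : (1 + α₁ * Ys) * (Xbar - Xs) = α₁ * Xs * (Ybar - Ys) := by
    apply mul_left_cancel₀ hK₁'
    linear_combination hF2 + Xbar * e1
  have hB : (1 + α₂ * Xs) * (Ybar - Ys) = α₂ * Ys * (Xbar - Xs) := by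
    apply mul_left_cancel₀ hK₂'
    linear_combination hG2 + Ybar * e2
  have huv : (1 + α₁ * Ys + α₂ * Xs) * ((Xbar - Xs) * (Ybar - Ys)) = 0 := by
    linear_combination ((1 + α₂ * Xs) * (Ybar - Ys)) * hA + (α₁ * Xs * (Ybar - Ys)) * hB
  have hco : (0:ℝ) < 1 + α₁ * Ys + α₂ * Xs := by nlinarith
  have huv0 : (Xbar - Xs) * (Ybar - Ys) = 0 := by
    rcases mul_eq_zero.mp huv with h' | h'
    · linarith
    · exact h'
  rcases mul_eq_zero.mp huv0 with h' | h'
  · have hx : Xbar = Xs := by linarith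
    refine ⟨hx, ?_⟩
    have hz : α₁ * Xs * (Ybar - Ys) = 0 := by rw [← hA, h']; ring
    have hαXs : α₁ * Xs ≠ 0 := by positivity
    have := (mul_eq_zero.mp hz).resolve_left hαXs
    linarith
  · have hy : Ybar = Ys := by linarith
    refine ⟨?_, hy⟩
    have hz : (1 + α₁ * Ys) * (Xbar - Xs) = 0 := by rw [hA, h']; ring
    have h1 : (1 + α₁ * Ys) ≠ 0 := by positivity
    have := (mul_eq_zero.mp hz).resolve_left h1
    linarith
end

section
/- For the Leslie–Gower competition map with C₁₂ < 0 and C₂₁ < 0, the regions R₂ = {(X,Y) : X, Y > 0, k(X) ≤ Y ≤ h(X)} \ {E*} and R₄ = {(X,Y) : X, Y > 0, h(X) ≤ Y ≤ k(X)} \ {E*} are each positively invariant under the map. -/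
lemma h_iff (r K α X Y : ℝ) (hK : 0 < K) (hα : 0 < α) :
    (Y ≤ h r K α X ↔ r * X + α * K * Y ≤ r * K) := by
  unfold h
  rw [div_mul_eq_mul_div, le_div_iff₀ (by positivity : (0:ℝ) < α * K)]
  constructor <;> intro hh <;> nlinarith

lemma h_iff' (r K α X Y : ℝ) (hK : 0 < K) (hα : 0 < α) :
    (h r K α X ≤ Y ↔ r * K ≤ r * X + α * K * Y) := by
  unfold h
  rw [div_mul_eq_mul_div, div_le_iff₀ (by positivity : (0:ℝ) < α * K)]
  constructor <;> intro hh <;> nlinarith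

lemma k_iff (r K α X Y : ℝ) (hr : 0 < r) :
    (k r K α X ≤ Y ↔ r * K ≤ α * K * X + r * Y) := by
  unfold k
  rw [div_mul_eq_mul_div, div_le_iff₀ (by positivity : (0:ℝ) < r)]
  constructor <;> intro hh <;> nlinarith

lemma k_iff' (r K α X Y : ℝ) (hr : 0 < r) :
    (Y ≤ k r K α X ↔ α * K * X + r * Y ≤ r * K) := by
  unfold k
  rw [div_mul_eq_mul_div, le_div_iff₀ (by positivity : (0:ℝ) < r)]
  constructor <;> intro hh <;> nlinarith

lemma F_eq (r K α X Y : ℝ) (hr : 0 < r) (hK : 0 < K) (hα : 0 < α)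
    (hX : 0 ≤ X) (hY : 0 ≤ Y) :
    F r K α X Y = (1 + r) * X * K / (K + r * X + α * K * Y) := by
  unfold F
  rw [div_eq_div_iff (by positivity) (by positivity)]
  field_simp

lemma G_eq (r K α X Y : ℝ) (hr : 0 < r) (hK : 0 < K) (hα : 0 < α)
    (hX : 0 ≤ X) (hY : 0 ≤ Y) :
    G r K α X Y = (1 + r) * Y * K / (K + r * Y + α * K * X) := by
  unfold G
  rw [div_eq_div_iff (by positivity) (by positivity)]
  field_simp

set_option maxHeartbeats 1000000 in
theorem stmt16 (r₁ r₂ K₁ K₂ α₁ α₂ : ℝ)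
    (hr₁ : 0 < r₁) (hr₂ : 0 < r₂) (hK₁ : 0 < K₁) (hK₂ : 0 < K₂)
    (hα₁ : 0 < α₁) (hα₂ : 0 < α₂)
    (hC12 : r₁ / α₁ - K₂ < 0) (hC21 : r₂ / α₂ - K₁ < 0)
    (Xs Ys : ℝ)
    (hXs : Xs = r₂ * K₁ * (α₁ * K₂ - r₁) / (α₁ * α₂ * K₁ * K₂ - r₁ * r₂))
    (hYs : Ys = r₁ * K₂ * (α₂ * K₁ - r₂) / (α₁ * α₂ * K₁ * K₂ - r₁ * r₂)) :
    (∀ X Y : ℝ, 0 < X → 0 < Y → k r₂ K₂ α₂ X ≤ Y → Y ≤ h r₁ K₁ α₁ X →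
        (X, Y) ≠ (Xs, Ys) →
        0 < F r₁ K₁ α₁ X Y ∧ 0 < G r₂ K₂ α₂ X Y ∧
          k r₂ K₂ α₂ (F r₁ K₁ α₁ X Y) ≤ G r₂ K₂ α₂ X Y ∧
          G r₂ K₂ α₂ X Y ≤ h r₁ K₁ α₁ (F r₁ K₁ α₁ X Y) ∧
          (F r₁ K₁ α₁ X Y, G r₂ K₂ α₂ X Y) ≠ (Xs, Ys)) ∧
    (∀ X Y : ℝ, 0 < X → 0 < Y → h r₁ K₁ α₁ X ≤ Y → Y ≤ k r₂ K₂ α₂ X →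
        (X, Y) ≠ (Xs, Ys) →
        0 < F r₁ K₁ α₁ X Y ∧ 0 < G r₂ K₂ α₂ X Y ∧
          h r₁ K₁ α₁ (F r₁ K₁ α₁ X Y) ≤ G r₂ K₂ α₂ X Y ∧
          G r₂ K₂ α₂ X Y ≤ k r₂ K₂ α₂ (F r₁ K₁ α₁ X Y) ∧
          (F r₁ K₁ α₁ X Y, G r₂ K₂ α₂ X Y) ≠ (Xs, Ys)) := by
  have hr1a : r₁ < α₁ * K₂ := by
    have := (div_lt_iff₀ hα₁).mp (by linarith : r₁ / α₁ < K₂); linarith [mul_comm K₂ α₁]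
  have hr2a : r₂ < α₂ * K₁ := by
    have := (div_lt_iff₀ hα₂).mp (by linarith : r₂ / α₂ < K₁); linarith [mul_comm K₁ α₂]
  have hDen : 0 < α₁ * α₂ * K₁ * K₂ - r₁ * r₂ := by nlinarith
  -- the equilibrium lies on both isoclines
  have hhXs : h r₁ K₁ α₁ Xs = Ys := by
    rw [hXs, hYs]; unfold h
    rw [div_mul_eq_mul_div, div_eq_div_iff (by positivity) hDen.ne']
    rw [mul_assoc, sub_mul, div_mul_cancel₀ _ hDen.ne']
    ring
  have hkXs : k r₂ K₂ α₂ Xs = Ys := by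
    rw [hXs, hYs]; unfold k
    rw [div_mul_eq_mul_div, div_eq_div_iff hr₂.ne' hDen.ne']
    rw [mul_assoc, sub_mul, mul_assoc α₂, div_mul_cancel₀ _ hDen.ne']
    ring
  -- ordering of the isoclines
  have hcross₁ : ∀ X : ℝ, k r₂ K₂ α₂ X ≤ h r₁ K₁ α₁ X → Xs ≤ X := by
    intro X hkh
    unfold h k at hkh
    rw [div_mul_eq_mul_div, div_mul_eq_mul_div,
      div_le_div_iff₀ hr₂ (by positivity : (0:ℝ) < α₁ * K₁)] at hkh
    rw [hXs, div_le_iff₀ hDen]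
    nlinarith
  have hcross₂ : ∀ X : ℝ, h r₁ K₁ α₁ X ≤ k r₂ K₂ α₂ X → X ≤ Xs := by
    intro X hhk
    unfold h k at hhk
    rw [div_mul_eq_mul_div, div_mul_eq_mul_div,
      div_le_div_iff₀ (by positivity : (0:ℝ) < α₁ * K₁) hr₂] at hhk
    rw [hXs, le_div_iff₀ hDen]
    nlinarith
  constructor
  · -- region R₂ : k(X) ≤ Y ≤ h(X)
    intro X Y hX hY hkY hYh hne
    have hFe := F_eq r₁ K₁ α₁ X Y hr₁ hK₁ hα₁ hX.le hY.le
    have hGe := G_eq r₂ K₂ α₂ X Y hr₂ hK₂ hα₂ hX.le hY.le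
    have hM₁ : 0 < K₁ + r₁ * X + α₁ * K₁ * Y := by positivity
    have hM₂ : 0 < K₂ + r₂ * Y + α₂ * K₂ * X := by positivity
    have hb₁ : r₁ * X + α₁ * K₁ * Y ≤ r₁ * K₁ := (h_iff r₁ K₁ α₁ X Y hK₁ hα₁).mp hYh
    have hb₂ : r₂ * K₂ ≤ α₂ * K₂ * X + r₂ * Y := (k_iff r₂ K₂ α₂ X Y hr₂).mp hkY
    have hFpos : 0 < F r₁ K₁ α₁ X Y := by rw [hFe]; positivity
    have hGpos : 0 < G r₂ K₂ α₂ X Y := by rw [hGe]; positivity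
    -- X ≤ F
    have hXF : X ≤ F r₁ K₁ α₁ X Y := by
      rw [hFe, le_div_iff₀ hM₁]; nlinarith
    -- G ≤ Y
    have hGY : G r₂ K₂ α₂ X Y ≤ Y := by
      rw [hGe, div_le_iff₀ hM₂]; nlinarith
    refine ⟨hFpos, hGpos, ?_, ?_, ?_⟩
    · rw [k_iff r₂ K₂ α₂ _ _ hr₂]
      have key : r₂ * K₂ ≤ α₂ * K₂ * X + r₂ * G r₂ K₂ α₂ X Y := by
        rw [hGe, ← sub_nonneg]
        have e : α₂ * K₂ * X + r₂ * ((1 + r₂) * Y * K₂ / (K₂ + r₂ * Y + α₂ * K₂ * X)) - r₂ * K₂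
            = (r₂ * (1 + r₂) * Y * K₂
              - (r₂ * K₂ - α₂ * K₂ * X) * (K₂ + r₂ * Y + α₂ * K₂ * X)) / (K₂ + r₂ * Y + α₂ * K₂ * X) := by
          field_simp
          ring
        rw [e]
        apply div_nonneg _ hM₂.le
        nlinarith [mul_nonneg (by positivity : (0:ℝ) ≤ K₂ + α₂ * K₂ * X)
          (by linarith : (0:ℝ) ≤ α₂ * K₂ * X + r₂ * Y - r₂ * K₂)]
      linarith [mul_le_mul_of_nonneg_left hXF (by positivity : (0:ℝ) ≤ α₂ * K₂)]
    · rw [h_iff r₁ K₁ α₁ _ _ hK₁ hα₁]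
      have key : r₁ * F r₁ K₁ α₁ X Y + α₁ * K₁ * Y ≤ r₁ * K₁ := by
        rw [hFe, ← sub_nonneg]
        have : r₁ * K₁ - (r₁ * ((1 + r₁) * X * K₁ / (K₁ + r₁ * X + α₁ * K₁ * Y)) + α₁ * K₁ * Y)
            = ((r₁ * K₁ - α₁ * K₁ * Y) * (K₁ + r₁ * X + α₁ * K₁ * Y)
              - r₁ * (1 + r₁) * X * K₁) / (K₁ + r₁ * X + α₁ * K₁ * Y) := by
          field_simp
          ring
        rw [this]
        apply div_nonneg _ hM₁.le
        nlinarith [mul_nonneg (by positivity : (0:ℝ) ≤ K₁ + α₁ * K₁ * Y)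
          (by linarith : (0:ℝ) ≤ r₁ * K₁ - r₁ * X - α₁ * K₁ * Y)]
      linarith [mul_le_mul_of_nonneg_left hGY (by positivity : (0:ℝ) ≤ α₁ * K₁)]
    · intro hEq
      have hF : F r₁ K₁ α₁ X Y = Xs := (Prod.mk.injEq _ _ _ _ ▸ hEq).1
      have hXle : X ≤ Xs := hF ▸ hXF
      have hXge : Xs ≤ X := hcross₁ X (le_trans hkY hYh)
      have hXeq : X = Xs := le_antisymm hXle hXge
      have hYeq : Y = Ys := by
        rw [hXeq] at hkY hYh
        rw [hkXs] at hkY; rw [hhXs] at hYh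
        linarith
      exact hne (by rw [hXeq, hYeq])
  · -- region R₄ : h(X) ≤ Y ≤ k(X)
    intro X Y hX hY hhY hYk hne
    have hFe := F_eq r₁ K₁ α₁ X Y hr₁ hK₁ hα₁ hX.le hY.le
    have hGe := G_eq r₂ K₂ α₂ X Y hr₂ hK₂ hα₂ hX.le hY.le
    have hM₁ : 0 < K₁ + r₁ * X + α₁ * K₁ * Y := by positivity
    have hM₂ : 0 < K₂ + r₂ * Y + α₂ * K₂ * X := by positivity
    have hb₁ : r₁ * K₁ ≤ r₁ * X + α₁ * K₁ * Y := (h_iff' r₁ K₁ α₁ X Y hK₁ hα₁).mp hhY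
    have hb₂ : α₂ * K₂ * X + r₂ * Y ≤ r₂ * K₂ := (k_iff' r₂ K₂ α₂ X Y hr₂).mp hYk
    have hFpos : 0 < F r₁ K₁ α₁ X Y := by rw [hFe]; positivity
    have hGpos : 0 < G r₂ K₂ α₂ X Y := by rw [hGe]; positivity
    have hFX : F r₁ K₁ α₁ X Y ≤ X := by
      rw [hFe, div_le_iff₀ hM₁]; nlinarith
    have hYG : Y ≤ G r₂ K₂ α₂ X Y := by
      rw [hGe, le_div_iff₀ hM₂]; nlinarith
    refine ⟨hFpos, hGpos, ?_, ?_, ?_⟩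
    · rw [h_iff' r₁ K₁ α₁ _ _ hK₁ hα₁]
      have key : r₁ * K₁ ≤ r₁ * F r₁ K₁ α₁ X Y + α₁ * K₁ * Y := by
        rw [hFe, ← sub_nonneg]
        have : r₁ * ((1 + r₁) * X * K₁ / (K₁ + r₁ * X + α₁ * K₁ * Y)) + α₁ * K₁ * Y - r₁ * K₁
            = (r₁ * (1 + r₁) * X * K₁
              - (r₁ * K₁ - α₁ * K₁ * Y) * (K₁ + r₁ * X + α₁ * K₁ * Y)) / (K₁ + r₁ * X + α₁ * K₁ * Y) := by
          field_simp
          ring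
        rw [this]
        apply div_nonneg _ hM₁.le
        nlinarith [mul_nonneg (by positivity : (0:ℝ) ≤ K₁ + α₁ * K₁ * Y)
          (by linarith : (0:ℝ) ≤ r₁ * X + α₁ * K₁ * Y - r₁ * K₁)]
      linarith [mul_le_mul_of_nonneg_left hYG (by positivity : (0:ℝ) ≤ α₁ * K₁)]
    · rw [k_iff' r₂ K₂ α₂ _ _ hr₂]
      have key : α₂ * K₂ * X + r₂ * G r₂ K₂ α₂ X Y ≤ r₂ * K₂ := by
        rw [hGe, ← sub_nonneg]
        have e : r₂ * K₂ - (α₂ * K₂ * X + r₂ * ((1 + r₂) * Y * K₂ / (K₂ + r₂ * Y + α₂ * K₂ * X)))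
            = ((r₂ * K₂ - α₂ * K₂ * X) * (K₂ + r₂ * Y + α₂ * K₂ * X)
              - r₂ * (1 + r₂) * Y * K₂) / (K₂ + r₂ * Y + α₂ * K₂ * X) := by
          field_simp
          ring
        rw [e]
        apply div_nonneg _ hM₂.le
        nlinarith [mul_nonneg (by positivity : (0:ℝ) ≤ K₂ + α₂ * K₂ * X)
          (by linarith : (0:ℝ) ≤ r₂ * K₂ - α₂ * K₂ * X - r₂ * Y)]
      linarith [mul_le_mul_of_nonneg_left hFX (by positivity : (0:ℝ) ≤ α₂ * K₂)]
    · intro hEq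
      have hF : F r₁ K₁ α₁ X Y = Xs := (Prod.mk.injEq _ _ _ _ ▸ hEq).1
      have hXge : Xs ≤ X := hF ▸ hFX
      have hXle : X ≤ Xs := hcross₂ X (le_trans hhY hYk)
      have hXeq : X = Xs := le_antisymm hXle hXge
      have hYeq : Y = Ys := by
        rw [hXeq] at hhY hYk
        rw [hkXs] at hYk; rw [hhXs] at hhY
        linarith
      exact hne (by rw [hXeq, hYeq])
end

section
/- For the Leslie–Gower competition map with C₁₂ > 0 and C₂₁ > 0, the regions R₂ = {(X,Y) : X, Y > 0, h(X) ≤ Y ≤ k(X)} \ {E*} and R₄ = {(X,Y) : X, Y > 0, k(X) ≤ Y ≤ h(X)} \ {E*} are each positively invariant, and the coexistence equilibrium E* is globally asymptotically stable with respect to orbits with X₀, Y₀ > 0. -/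
open Filter Topology


section
variable {r₁ r₂ K₁ K₂ α₁ α₂ X Y : ℝ}

lemma denom1_pos (hr₁ : 0 < r₁) (hK₁ : 0 < K₁) (hα₁ : 0 < α₁) (hX : 0 ≤ X) (hY : 0 ≤ Y) :
    0 < 1 + r₁ / K₁ * X + α₁ * Y := by positivity

lemma F_pos (hr₁ : 0 < r₁) (hK₁ : 0 < K₁) (hα₁ : 0 < α₁) (hX : 0 < X) (hY : 0 ≤ Y) :
    0 < F r₁ K₁ α₁ X Y := by
  unfold F
  apply div_pos (by nlinarith) (denom1_pos hr₁ hK₁ hα₁ hX.le hY)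

lemma G_pos (hr₂ : 0 < r₂) (hK₂ : 0 < K₂) (hα₂ : 0 < α₂) (hX : 0 ≤ X) (hY : 0 < Y) :
    0 < G r₂ K₂ α₂ X Y := by
  unfold G
  apply div_pos (by nlinarith)
  positivity

lemma h_le_iff (hr₁ : 0 < r₁) (hK₁ : 0 < K₁) (hα₁ : 0 < α₁) :
    h r₁ K₁ α₁ X ≤ Y ↔ r₁ ≤ r₁ / K₁ * X + α₁ * Y := by
  unfold h
  rw [div_mul_eq_mul_div, div_le_iff₀ (by positivity)]
  have e : r₁ / K₁ * X * K₁ = r₁ * X := by field_simp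
  constructor <;> intro hh <;> nlinarith [hh, e, hK₁]

lemma le_h_iff (hr₁ : 0 < r₁) (hK₁ : 0 < K₁) (hα₁ : 0 < α₁) :
    Y ≤ h r₁ K₁ α₁ X ↔ r₁ / K₁ * X + α₁ * Y ≤ r₁ := by
  unfold h
  rw [div_mul_eq_mul_div, le_div_iff₀ (by positivity)]
  have e : r₁ / K₁ * X * K₁ = r₁ * X := by field_simp
  constructor <;> intro hh <;> nlinarith [hh, e, hK₁]

lemma le_k_iff (hr₂ : 0 < r₂) (hK₂ : 0 < K₂) (hα₂ : 0 < α₂) :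
    Y ≤ k r₂ K₂ α₂ X ↔ r₂ / K₂ * Y + α₂ * X ≤ r₂ := by
  unfold k
  rw [div_mul_eq_mul_div, le_div_iff₀ hr₂]
  have e : r₂ / K₂ * Y * K₂ = r₂ * Y := by field_simp
  constructor <;> intro hh <;> nlinarith [hh, e, hK₂, hr₂, mul_pos hK₂ hr₂]

lemma k_le_iff (hr₂ : 0 < r₂) (hK₂ : 0 < K₂) (hα₂ : 0 < α₂) :
    k r₂ K₂ α₂ X ≤ Y ↔ r₂ ≤ r₂ / K₂ * Y + α₂ * X := by
  unfold k
  rw [div_mul_eq_mul_div, div_le_iff₀ hr₂]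
  have e : r₂ / K₂ * Y * K₂ = r₂ * Y := by field_simp
  constructor <;> intro hh <;> nlinarith [hh, e, hK₂, hr₂, mul_pos hK₂ hr₂]
end

section
variable {r₁ r₂ K₁ K₂ α₁ α₂ X Y : ℝ}

lemma F_le_self (hr₁ : 0 < r₁) (hK₁ : 0 < K₁) (hα₁ : 0 < α₁) (hX : 0 < X) (hY : 0 ≤ Y)
    (h1 : r₁ ≤ r₁ / K₁ * X + α₁ * Y) : F r₁ K₁ α₁ X Y ≤ X := by
  unfold F
  rw [div_le_iff₀ (denom1_pos hr₁ hK₁ hα₁ hX.le hY)]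
  nlinarith [mul_nonneg hX.le (sub_nonneg.2 h1)]

lemma F_ge_self (hr₁ : 0 < r₁) (hK₁ : 0 < K₁) (hα₁ : 0 < α₁) (hX : 0 < X) (hY : 0 ≤ Y)
    (h1 : r₁ / K₁ * X + α₁ * Y ≤ r₁) : X ≤ F r₁ K₁ α₁ X Y := by
  unfold F
  rw [le_div_iff₀ (denom1_pos hr₁ hK₁ hα₁ hX.le hY)]
  nlinarith [mul_nonneg hX.le (sub_nonneg.2 h1)]

lemma G_le_self (hr₂ : 0 < r₂) (hK₂ : 0 < K₂) (hα₂ : 0 < α₂) (hX : 0 ≤ X) (hY : 0 < Y)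
    (h2 : r₂ ≤ r₂ / K₂ * Y + α₂ * X) : G r₂ K₂ α₂ X Y ≤ Y := by
  unfold G
  rw [div_le_iff₀ (by positivity)]
  nlinarith [mul_nonneg hY.le (sub_nonneg.2 h2)]

lemma G_ge_self (hr₂ : 0 < r₂) (hK₂ : 0 < K₂) (hα₂ : 0 < α₂) (hX : 0 ≤ X) (hY : 0 < Y)
    (h2 : r₂ / K₂ * Y + α₂ * X ≤ r₂) : Y ≤ G r₂ K₂ α₂ X Y := by
  unfold G
  rw [le_div_iff₀ (by positivity)]
  nlinarith [mul_nonneg hY.le (sub_nonneg.2 h2)]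

/-- In R₂ (σ₁ ≥ 0, σ₂ ≤ 0), the new point satisfies σ₁ ≥ 0. -/
lemma sig1_new_ge (hr₁ : 0 < r₁) (hr₂ : 0 < r₂) (hK₁ : 0 < K₁) (hK₂ : 0 < K₂)
    (hα₁ : 0 < α₁) (hα₂ : 0 < α₂) (hX : 0 < X) (hY : 0 < Y)
    (h1 : r₁ ≤ r₁ / K₁ * X + α₁ * Y) (h2 : r₂ / K₂ * Y + α₂ * X ≤ r₂) :
    r₁ ≤ r₁ / K₁ * F r₁ K₁ α₁ X Y + α₁ * G r₂ K₂ α₂ X Y := by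
  have hG := G_ge_self hr₂ hK₂ hα₂ hX.le hY h2
  have hD₁ := denom1_pos hr₁ hK₁ hα₁ hX.le hY.le
  have key : r₁ - α₁ * Y ≤ r₁ / K₁ * F r₁ K₁ α₁ X Y := by
    unfold F
    rw [← mul_div_assoc, le_div_iff₀ hD₁]
    nlinarith [mul_nonneg (mul_nonneg hα₁.le hY.le) (sub_nonneg.2 h1), sub_nonneg.2 h1]
  nlinarith [mul_le_mul_of_nonneg_left hG hα₁.le]

/-- In R₂ (σ₁ ≥ 0, σ₂ ≤ 0), the new point satisfies σ₂ ≤ 0. -/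
lemma sig2_new_le (hr₁ : 0 < r₁) (hr₂ : 0 < r₂) (hK₁ : 0 < K₁) (hK₂ : 0 < K₂)
    (hα₁ : 0 < α₁) (hα₂ : 0 < α₂) (hX : 0 < X) (hY : 0 < Y)
    (h1 : r₁ ≤ r₁ / K₁ * X + α₁ * Y) (h2 : r₂ / K₂ * Y + α₂ * X ≤ r₂) :
    r₂ / K₂ * G r₂ K₂ α₂ X Y + α₂ * F r₁ K₁ α₁ X Y ≤ r₂ := by
  have hF := F_le_self hr₁ hK₁ hα₁ hX hY.le h1
  have hD₂ : (0:ℝ) < 1 + r₂ / K₂ * Y + α₂ * X := by positivity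
  have key : r₂ / K₂ * G r₂ K₂ α₂ X Y ≤ r₂ - α₂ * X := by
    unfold G
    rw [← mul_div_assoc, div_le_iff₀ hD₂]
    nlinarith [mul_nonneg (mul_nonneg hα₂.le hX.le) (sub_nonneg.2 h2), sub_nonneg.2 h2]
  nlinarith [mul_le_mul_of_nonneg_left hF hα₂.le]

/-- In R₄ (σ₁ ≤ 0, σ₂ ≥ 0), the new point satisfies σ₁ ≤ 0. -/
lemma sig1_new_le (hr₁ : 0 < r₁) (hr₂ : 0 < r₂) (hK₁ : 0 < K₁) (hK₂ : 0 < K₂)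
    (hα₁ : 0 < α₁) (hα₂ : 0 < α₂) (hX : 0 < X) (hY : 0 < Y)
    (h1 : r₁ / K₁ * X + α₁ * Y ≤ r₁) (h2 : r₂ ≤ r₂ / K₂ * Y + α₂ * X) :
    r₁ / K₁ * F r₁ K₁ α₁ X Y + α₁ * G r₂ K₂ α₂ X Y ≤ r₁ := by
  have hG := G_le_self hr₂ hK₂ hα₂ hX.le hY h2
  have hD₁ := denom1_pos hr₁ hK₁ hα₁ hX.le hY.le
  have key : r₁ / K₁ * F r₁ K₁ α₁ X Y ≤ r₁ - α₁ * Y := by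
    unfold F
    rw [← mul_div_assoc, div_le_iff₀ hD₁]
    nlinarith [mul_nonneg (mul_nonneg hα₁.le hY.le) (sub_nonneg.2 h1), sub_nonneg.2 h1]
  nlinarith [mul_le_mul_of_nonneg_left hG hα₁.le]

/-- In R₄ (σ₁ ≤ 0, σ₂ ≥ 0), the new point satisfies σ₂ ≥ 0. -/
lemma sig2_new_ge (hr₁ : 0 < r₁) (hr₂ : 0 < r₂) (hK₁ : 0 < K₁) (hK₂ : 0 < K₂)
    (hα₁ : 0 < α₁) (hα₂ : 0 < α₂) (hX : 0 < X) (hY : 0 < Y)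
    (h1 : r₁ / K₁ * X + α₁ * Y ≤ r₁) (h2 : r₂ ≤ r₂ / K₂ * Y + α₂ * X) :
    r₂ ≤ r₂ / K₂ * G r₂ K₂ α₂ X Y + α₂ * F r₁ K₁ α₁ X Y := by
  have hF := F_ge_self hr₁ hK₁ hα₁ hX hY.le h1
  have hD₂ : (0:ℝ) < 1 + r₂ / K₂ * Y + α₂ * X := by positivity
  have key : r₂ - α₂ * X ≤ r₂ / K₂ * G r₂ K₂ α₂ X Y := by
    unfold G
    rw [← mul_div_assoc, le_div_iff₀ hD₂]
    nlinarith [mul_nonneg (mul_nonneg hα₂.le hX.le) (sub_nonneg.2 h2), sub_nonneg.2 h2]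
  nlinarith [mul_le_mul_of_nonneg_left hF hα₂.le]
end

section
variable {r₁ r₂ K₁ K₂ α₁ α₂ Xs Ys X Y : ℝ}

lemma aK2_lt (hα₁ : 0 < α₁) (hC12 : 0 < r₁ / α₁ - K₂) : α₁ * K₂ < r₁ := by
  have := (lt_div_iff₀' hα₁).1 (by linarith : K₂ < r₁ / α₁)
  linarith

lemma delta_neg (hr₁ : 0 < r₁) (hr₂ : 0 < r₂) (hK₁ : 0 < K₁) (hK₂ : 0 < K₂)
    (hα₁ : 0 < α₁) (hα₂ : 0 < α₂)
    (hC12 : 0 < r₁ / α₁ - K₂) (hC21 : 0 < r₂ / α₂ - K₁) :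
    α₁ * α₂ * K₁ * K₂ - r₁ * r₂ < 0 := by
  have h1 := aK2_lt hα₁ hC12
  have h2 := aK2_lt hα₂ hC21
  nlinarith [mul_pos hα₁ hK₂, mul_pos hα₂ hK₁]

lemma Xs_pos (hr₁ : 0 < r₁) (hr₂ : 0 < r₂) (hK₁ : 0 < K₁) (hK₂ : 0 < K₂)
    (hα₁ : 0 < α₁) (hα₂ : 0 < α₂)
    (hC12 : 0 < r₁ / α₁ - K₂) (hC21 : 0 < r₂ / α₂ - K₁)
    (hXs : Xs = r₂ * K₁ * (α₁ * K₂ - r₁) / (α₁ * α₂ * K₁ * K₂ - r₁ * r₂)) : 0 < Xs := by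
  rw [hXs]
  apply div_pos_of_neg_of_neg
  · nlinarith [aK2_lt hα₁ hC12, mul_pos hr₂ hK₁]
  · exact delta_neg hr₁ hr₂ hK₁ hK₂ hα₁ hα₂ hC12 hC21

lemma Ys_pos (hr₁ : 0 < r₁) (hr₂ : 0 < r₂) (hK₁ : 0 < K₁) (hK₂ : 0 < K₂)
    (hα₁ : 0 < α₁) (hα₂ : 0 < α₂)
    (hC12 : 0 < r₁ / α₁ - K₂) (hC21 : 0 < r₂ / α₂ - K₁)
    (hYs : Ys = r₁ * K₂ * (α₂ * K₁ - r₂) / (α₁ * α₂ * K₁ * K₂ - r₁ * r₂)) : 0 < Ys := by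
  rw [hYs]
  apply div_pos_of_neg_of_neg
  · nlinarith [aK2_lt hα₂ hC21, mul_pos hr₁ hK₂]
  · exact delta_neg hr₁ hr₂ hK₁ hK₂ hα₁ hα₂ hC12 hC21

lemma eqXs (hr₁ : 0 < r₁) (hr₂ : 0 < r₂) (hK₁ : 0 < K₁) (hK₂ : 0 < K₂)
    (hα₁ : 0 < α₁) (hα₂ : 0 < α₂)
    (hC12 : 0 < r₁ / α₁ - K₂) (hC21 : 0 < r₂ / α₂ - K₁)
    (hXs : Xs = r₂ * K₁ * (α₁ * K₂ - r₁) / (α₁ * α₂ * K₁ * K₂ - r₁ * r₂))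
    (hYs : Ys = r₁ * K₂ * (α₂ * K₁ - r₂) / (α₁ * α₂ * K₁ * K₂ - r₁ * r₂)) :
    r₁ / K₁ * Xs + α₁ * Ys = r₁ := by
  have hΔ : α₁ * α₂ * K₁ * K₂ - r₁ * r₂ ≠ 0 :=
    ne_of_lt (delta_neg hr₁ hr₂ hK₁ hK₂ hα₁ hα₂ hC12 hC21)
  subst hXs hYs
  rw [div_mul_div_comm, mul_div_assoc', div_add_div _ _ (mul_ne_zero hK₁.ne' hΔ) hΔ,
    div_eq_iff (mul_ne_zero (mul_ne_zero hK₁.ne' hΔ) hΔ)]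
  ring

lemma eqYs (hr₁ : 0 < r₁) (hr₂ : 0 < r₂) (hK₁ : 0 < K₁) (hK₂ : 0 < K₂)
    (hα₁ : 0 < α₁) (hα₂ : 0 < α₂)
    (hC12 : 0 < r₁ / α₁ - K₂) (hC21 : 0 < r₂ / α₂ - K₁)
    (hXs : Xs = r₂ * K₁ * (α₁ * K₂ - r₁) / (α₁ * α₂ * K₁ * K₂ - r₁ * r₂))
    (hYs : Ys = r₁ * K₂ * (α₂ * K₁ - r₂) / (α₁ * α₂ * K₁ * K₂ - r₁ * r₂)) :
    r₂ / K₂ * Ys + α₂ * Xs = r₂ := by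
  have hΔ : α₁ * α₂ * K₁ * K₂ - r₁ * r₂ ≠ 0 :=
    ne_of_lt (delta_neg hr₁ hr₂ hK₁ hK₂ hα₁ hα₂ hC12 hC21)
  subst hXs hYs
  rw [div_mul_div_comm, mul_div_assoc', div_add_div _ _ (mul_ne_zero hK₂.ne' hΔ) hΔ,
    div_eq_iff (mul_ne_zero (mul_ne_zero hK₂.ne' hΔ) hΔ)]
  ring

/-- uniqueness of solutions of the nullcline linear system -/
lemma nullcline_unique (hr₁ : 0 < r₁) (hr₂ : 0 < r₂) (hK₁ : 0 < K₁) (hK₂ : 0 < K₂)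
    (hα₁ : 0 < α₁) (hα₂ : 0 < α₂)
    (hC12 : 0 < r₁ / α₁ - K₂) (hC21 : 0 < r₂ / α₂ - K₁)
    (hXs : Xs = r₂ * K₁ * (α₁ * K₂ - r₁) / (α₁ * α₂ * K₁ * K₂ - r₁ * r₂))
    (hYs : Ys = r₁ * K₂ * (α₂ * K₁ - r₂) / (α₁ * α₂ * K₁ * K₂ - r₁ * r₂))
    (e1 : r₁ / K₁ * X + α₁ * Y = r₁) (e2 : r₂ / K₂ * Y + α₂ * X = r₂) :
    X = Xs ∧ Y = Ys := by
  have hE1 := eqXs hr₁ hr₂ hK₁ hK₂ hα₁ hα₂ hC12 hC21 hXs hYs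
  have hE2 := eqYs hr₁ hr₂ hK₁ hK₂ hα₁ hα₂ hC12 hC21 hXs hYs
  have hdet : 0 < r₁ / K₁ * (r₂ / K₂) - α₁ * α₂ := by
    have h1 := aK2_lt hα₁ hC12
    have h2 := aK2_lt hα₂ hC21
    rw [show r₁ / K₁ * (r₂ / K₂) = r₁ * r₂ / (K₁ * K₂) by ring, sub_pos,
      lt_div_iff₀ (mul_pos hK₁ hK₂)]
    nlinarith [mul_pos hα₁ hK₂, mul_pos hα₂ hK₁]
  have key : (X - Xs) * (r₁ / K₁ * (r₂ / K₂) - α₁ * α₂) = 0 := by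
    linear_combination (r₂ / K₂) * e1 - (r₂ / K₂) * hE1 - α₁ * e2 + α₁ * hE2
  have hX : X = Xs := by
    rcases mul_eq_zero.1 key with h | h
    · linarith [sub_eq_zero.1 h]
    · exact absurd h (ne_of_gt hdet)
  refine ⟨hX, ?_⟩
  subst hX
  have : α₁ * Y = α₁ * Ys := by linarith
  exact mul_left_cancel₀ (ne_of_gt hα₁) this
end

section
variable {r₁ r₂ K₁ K₂ α₁ α₂ Xs Ys X Y X' Y' x s : ℝ}

lemma eqXs' (hr₁ : 0 < r₁) (hr₂ : 0 < r₂) (hK₁ : 0 < K₁) (hK₂ : 0 < K₂)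
    (hα₁ : 0 < α₁) (hα₂ : 0 < α₂)
    (hC12 : 0 < r₁ / α₁ - K₂) (hC21 : 0 < r₂ / α₂ - K₁)
    (hXs : Xs = r₂ * K₁ * (α₁ * K₂ - r₁) / (α₁ * α₂ * K₁ * K₂ - r₁ * r₂))
    (hYs : Ys = r₁ * K₂ * (α₂ * K₁ - r₂) / (α₁ * α₂ * K₁ * K₂ - r₁ * r₂)) :
    r₁ * Xs + α₁ * K₁ * Ys = r₁ * K₁ := by
  have hΔ : α₁ * α₂ * K₁ * K₂ - r₁ * r₂ ≠ 0 :=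
    ne_of_lt (delta_neg hr₁ hr₂ hK₁ hK₂ hα₁ hα₂ hC12 hC21)
  subst hXs hYs; rw [mul_div_assoc', mul_div_assoc', ← add_div, div_eq_iff hΔ]; ring

lemma eqYs' (hr₁ : 0 < r₁) (hr₂ : 0 < r₂) (hK₁ : 0 < K₁) (hK₂ : 0 < K₂)
    (hα₁ : 0 < α₁) (hα₂ : 0 < α₂)
    (hC12 : 0 < r₁ / α₁ - K₂) (hC21 : 0 < r₂ / α₂ - K₁)
    (hXs : Xs = r₂ * K₁ * (α₁ * K₂ - r₁) / (α₁ * α₂ * K₁ * K₂ - r₁ * r₂))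
    (hYs : Ys = r₁ * K₂ * (α₂ * K₁ - r₂) / (α₁ * α₂ * K₁ * K₂ - r₁ * r₂)) :
    r₂ * Ys + α₂ * K₂ * Xs = r₂ * K₂ := by
  have hΔ : α₁ * α₂ * K₁ * K₂ - r₁ * r₂ ≠ 0 :=
    ne_of_lt (delta_neg hr₁ hr₂ hK₁ hK₂ hα₁ hα₂ hC12 hC21)
  subst hXs hYs; rw [mul_div_assoc', mul_div_assoc', ← add_div, div_eq_iff hΔ]; ring

lemma h_Xs (hr₁ : 0 < r₁) (hr₂ : 0 < r₂) (hK₁ : 0 < K₁) (hK₂ : 0 < K₂)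
    (hα₁ : 0 < α₁) (hα₂ : 0 < α₂)
    (hC12 : 0 < r₁ / α₁ - K₂) (hC21 : 0 < r₂ / α₂ - K₁)
    (hXs : Xs = r₂ * K₁ * (α₁ * K₂ - r₁) / (α₁ * α₂ * K₁ * K₂ - r₁ * r₂))
    (hYs : Ys = r₁ * K₂ * (α₂ * K₁ - r₂) / (α₁ * α₂ * K₁ * K₂ - r₁ * r₂)) :
    h r₁ K₁ α₁ Xs = Ys := by
  have e := eqXs' hr₁ hr₂ hK₁ hK₂ hα₁ hα₂ hC12 hC21 hXs hYs
  unfold h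
  rw [div_mul_eq_mul_div, div_eq_iff (by positivity)]
  linear_combination -e

lemma k_Xs (hr₁ : 0 < r₁) (hr₂ : 0 < r₂) (hK₁ : 0 < K₁) (hK₂ : 0 < K₂)
    (hα₁ : 0 < α₁) (hα₂ : 0 < α₂)
    (hC12 : 0 < r₁ / α₁ - K₂) (hC21 : 0 < r₂ / α₂ - K₁)
    (hXs : Xs = r₂ * K₁ * (α₁ * K₂ - r₁) / (α₁ * α₂ * K₁ * K₂ - r₁ * r₂))
    (hYs : Ys = r₁ * K₂ * (α₂ * K₁ - r₂) / (α₁ * α₂ * K₁ * K₂ - r₁ * r₂)) :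
    k r₂ K₂ α₂ Xs = Ys := by
  have e := eqYs' hr₁ hr₂ hK₁ hK₂ hα₁ hα₂ hC12 hC21 hXs hYs
  unfold k
  rw [div_mul_eq_mul_div, div_eq_iff (ne_of_gt hr₂)]
  linear_combination -e

lemma hk_diff (hr₁ : 0 < r₁) (hr₂ : 0 < r₂) (hK₁ : 0 < K₁) (hK₂ : 0 < K₂)
    (hα₁ : 0 < α₁) (hα₂ : 0 < α₂)
    (hC12 : 0 < r₁ / α₁ - K₂) (hC21 : 0 < r₂ / α₂ - K₁)
    (hXs : Xs = r₂ * K₁ * (α₁ * K₂ - r₁) / (α₁ * α₂ * K₁ * K₂ - r₁ * r₂)) (x : ℝ) :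
    h r₁ K₁ α₁ x - k r₂ K₂ α₂ x
      = (r₁ * r₂ - α₁ * α₂ * K₁ * K₂) / (α₁ * K₁ * r₂) * (Xs - x) := by
  have hΔ : α₁ * α₂ * K₁ * K₂ - r₁ * r₂ ≠ 0 :=
    ne_of_lt (delta_neg hr₁ hr₂ hK₁ hK₂ hα₁ hα₂ hC12 hC21)
  subst hXs
  unfold h k
  rw [div_sub' hΔ, div_mul_div_comm, div_mul_eq_mul_div, div_mul_eq_mul_div,
    div_sub_div _ _ (by positivity) hr₂.ne',
    div_eq_div_iff (by positivity) (mul_ne_zero (by positivity) hΔ)]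
  ring

lemma hk_coeff_pos (hr₁ : 0 < r₁) (hr₂ : 0 < r₂) (hK₁ : 0 < K₁) (hK₂ : 0 < K₂)
    (hα₁ : 0 < α₁) (hα₂ : 0 < α₂)
    (hC12 : 0 < r₁ / α₁ - K₂) (hC21 : 0 < r₂ / α₂ - K₁) :
    0 < (r₁ * r₂ - α₁ * α₂ * K₁ * K₂) / (α₁ * K₁ * r₂) := by
  apply div_pos _ (by positivity)
  have := delta_neg hr₁ hr₂ hK₁ hK₂ hα₁ hα₂ hC12 hC21
  linarith

lemma x_ge_Xs_of_R2 (hr₁ : 0 < r₁) (hr₂ : 0 < r₂) (hK₁ : 0 < K₁) (hK₂ : 0 < K₂)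
    (hα₁ : 0 < α₁) (hα₂ : 0 < α₂)
    (hC12 : 0 < r₁ / α₁ - K₂) (hC21 : 0 < r₂ / α₂ - K₁)
    (hXs : Xs = r₂ * K₁ * (α₁ * K₂ - r₁) / (α₁ * α₂ * K₁ * K₂ - r₁ * r₂))
    (hle : h r₁ K₁ α₁ x ≤ k r₂ K₂ α₂ x) : Xs ≤ x := by
  have hd := hk_diff hr₁ hr₂ hK₁ hK₂ hα₁ hα₂ hC12 hC21 hXs x
  have hc := hk_coeff_pos hr₁ hr₂ hK₁ hK₂ hα₁ hα₂ hC12 hC21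
  nlinarith

lemma x_le_Xs_of_R4 (hr₁ : 0 < r₁) (hr₂ : 0 < r₂) (hK₁ : 0 < K₁) (hK₂ : 0 < K₂)
    (hα₁ : 0 < α₁) (hα₂ : 0 < α₂)
    (hC12 : 0 < r₁ / α₁ - K₂) (hC21 : 0 < r₂ / α₂ - K₁)
    (hXs : Xs = r₂ * K₁ * (α₁ * K₂ - r₁) / (α₁ * α₂ * K₁ * K₂ - r₁ * r₂))
    (hle : k r₂ K₂ α₂ x ≤ h r₁ K₁ α₁ x) : x ≤ Xs := by
  have hd := hk_diff hr₁ hr₂ hK₁ hK₂ hα₁ hα₂ hC12 hC21 hXs x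
  have hc := hk_coeff_pos hr₁ hr₂ hK₁ hK₂ hα₁ hα₂ hC12 hC21
  nlinarith

lemma k_anti (hr₂ : 0 < r₂) (hK₂ : 0 < K₂) (hα₂ : 0 < α₂) (hxy : X ≤ X') :
    k r₂ K₂ α₂ X' ≤ k r₂ K₂ α₂ X := by
  unfold k
  have hc : (0:ℝ) < K₂ / r₂ := by positivity
  nlinarith [mul_nonneg (mul_nonneg hc.le hα₂.le) (sub_nonneg.2 hxy)]

lemma h_anti (hr₁ : 0 < r₁) (hK₁ : 0 < K₁) (hα₁ : 0 < α₁) (hxy : X ≤ X') :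
    h r₁ K₁ α₁ X' ≤ h r₁ K₁ α₁ X := by
  unfold h
  have hc : (0:ℝ) < r₁ / (α₁ * K₁) := by positivity
  nlinarith [mul_nonneg hc.le (sub_nonneg.2 hxy)]

lemma h_lin : h r₁ K₁ α₁ (Xs - s) = h r₁ K₁ α₁ Xs + r₁ / (α₁ * K₁) * s := by
  unfold h; ring

lemma k_lin : k r₂ K₂ α₂ (Xs + s) = k r₂ K₂ α₂ Xs - α₂ * K₂ / r₂ * s := by
  unfold k; ring

lemma dXs_lt (hr₁ : 0 < r₁) (hr₂ : 0 < r₂) (hK₁ : 0 < K₁) (hK₂ : 0 < K₂)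
    (hα₁ : 0 < α₁) (hα₂ : 0 < α₂)
    (hC12 : 0 < r₁ / α₁ - K₂) (hC21 : 0 < r₂ / α₂ - K₁)
    (hXs : Xs = r₂ * K₁ * (α₁ * K₂ - r₁) / (α₁ * α₂ * K₁ * K₂ - r₁ * r₂))
    (hYs : Ys = r₁ * K₂ * (α₂ * K₁ - r₂) / (α₁ * α₂ * K₁ * K₂ - r₁ * r₂)) :
    α₂ * Xs < r₂ := by
  have e := eqYs hr₁ hr₂ hK₁ hK₂ hα₁ hα₂ hC12 hC21 hXs hYs
  have hY := Ys_pos hr₁ hr₂ hK₁ hK₂ hα₁ hα₂ hC12 hC21 hYs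
  nlinarith [mul_pos (div_pos hr₂ hK₂) hY]

lemma F_fix (hr₁ : 0 < r₁) (hK₁ : 0 < K₁) (hα₁ : 0 < α₁)
    (e : r₁ / K₁ * Xs + α₁ * Ys = r₁) : F r₁ K₁ α₁ Xs Ys = Xs := by
  unfold F
  rw [div_eq_iff (by rw [show (1:ℝ) + r₁ / K₁ * Xs + α₁ * Ys = 1 + r₁ from by linarith]; positivity)]
  linear_combination -Xs * e

lemma G_fix (hr₂ : 0 < r₂) (hK₂ : 0 < K₂) (hα₂ : 0 < α₂)
    (e : r₂ / K₂ * Ys + α₂ * Xs = r₂) : G r₂ K₂ α₂ Xs Ys = Ys := by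
  unfold G
  rw [div_eq_iff (by rw [show (1:ℝ) + r₂ / K₂ * Ys + α₂ * Xs = 1 + r₂ from by linarith]; positivity)]
  linear_combination -Ys * e

lemma F_mono (hr₁ : 0 < r₁) (hK₁ : 0 < K₁) (hα₁ : 0 < α₁)
    (hX : 0 ≤ X) (hXX : X ≤ X') (hY' : 0 ≤ Y') (hYY : Y' ≤ Y) :
    F r₁ K₁ α₁ X Y ≤ F r₁ K₁ α₁ X' Y' := by
  have hX' : (0:ℝ) ≤ X' := hX.trans hXX
  have hY : (0:ℝ) ≤ Y := hY'.trans hYY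
  unfold F
  rw [div_le_div_iff₀ (denom1_pos hr₁ hK₁ hα₁ hX hY) (denom1_pos hr₁ hK₁ hα₁ hX' hY')]
  have key : α₁ * (X * Y') ≤ α₁ * (X' * Y) :=
    mul_le_mul_of_nonneg_left (mul_le_mul hXX hYY hY' hX') hα₁.le
  nlinarith [mul_nonneg (by linarith : (0:ℝ) ≤ 1 + r₁)
    (by linarith : (0:ℝ) ≤ (X' - X) + (α₁ * (X' * Y) - α₁ * (X * Y')))]

lemma G_anti (hr₂ : 0 < r₂) (hK₂ : 0 < K₂) (hα₂ : 0 < α₂)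
    (hX' : 0 ≤ X') (hXX : X' ≤ X) (hY : 0 ≤ Y) (hYY : Y ≤ Y') :
    G r₂ K₂ α₂ X Y ≤ G r₂ K₂ α₂ X' Y' := by
  have hX : (0:ℝ) ≤ X := hX'.trans hXX
  have hY' : (0:ℝ) ≤ Y' := hY.trans hYY
  unfold G
  rw [div_le_div_iff₀ (by positivity : (0:ℝ) < 1 + r₂ / K₂ * Y + α₂ * X)
    (by positivity : (0:ℝ) < 1 + r₂ / K₂ * Y' + α₂ * X')]
  have key : α₂ * (X' * Y) ≤ α₂ * (X * Y') :=
    mul_le_mul_of_nonneg_left (mul_le_mul hXX hYY hY hX) hα₂.le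
  nlinarith [mul_nonneg (by linarith : (0:ℝ) ≤ 1 + r₂)
    (by linarith : (0:ℝ) ≤ (Y' - Y) + (α₂ * (X * Y') - α₂ * (X' * Y)))]
end

section
variable {r₁ r₂ K₁ K₂ α₁ α₂ Xs Ys X Y : ℝ}

lemma preimage_Es (hr₁ : 0 < r₁) (hr₂ : 0 < r₂) (hK₁ : 0 < K₁) (hK₂ : 0 < K₂)
    (hα₁ : 0 < α₁) (hα₂ : 0 < α₂)
    (hC12 : 0 < r₁ / α₁ - K₂) (hC21 : 0 < r₂ / α₂ - K₁)
    (hXs : Xs = r₂ * K₁ * (α₁ * K₂ - r₁) / (α₁ * α₂ * K₁ * K₂ - r₁ * r₂))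
    (hYs : Ys = r₁ * K₂ * (α₂ * K₁ - r₂) / (α₁ * α₂ * K₁ * K₂ - r₁ * r₂))
    (hX : 0 < X) (hY : 0 < Y)
    (hF : F r₁ K₁ α₁ X Y = Xs) (hG : G r₂ K₂ α₂ X Y = Ys) : X = Xs ∧ Y = Ys := by
  have hXsp := Xs_pos hr₁ hr₂ hK₁ hK₂ hα₁ hα₂ hC12 hC21 hXs
  have hYsp := Ys_pos hr₁ hr₂ hK₁ hK₂ hα₁ hα₂ hC12 hC21 hYs
  have hE1 := eqXs hr₁ hr₂ hK₁ hK₂ hα₁ hα₂ hC12 hC21 hXs hYs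
  have hE2 := eqYs hr₁ hr₂ hK₁ hK₂ hα₁ hα₂ hC12 hC21 hXs hYs
  have d1 := denom1_pos hr₁ hK₁ hα₁ hX.le hY.le
  have d2 : (0:ℝ) < 1 + r₂ / K₂ * Y + α₂ * X := by positivity
  have e1 : (1 + r₁) * X = Xs * (1 + r₁ / K₁ * X + α₁ * Y) := by
    have := hF; unfold F at this
    exact (div_eq_iff (ne_of_gt d1)).1 this
  have e2 : (1 + r₂) * Y = Ys * (1 + r₂ / K₂ * Y + α₂ * X) := by
    have := hG; unfold G at this
    exact (div_eq_iff (ne_of_gt d2)).1 this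
  have hfac : (0:ℝ) < 1 + α₁ * Ys + α₂ * Xs := by positivity
  have key : X * (1 + α₁ * Ys + α₂ * Xs) = Xs * (1 + α₁ * Ys + α₂ * Xs) := by
    linear_combination (1 + α₂ * Xs) * e1 + (1 + α₂ * Xs) * X * hE1 + α₁ * Xs * e2
      + α₁ * Xs * Y * hE2
  have hXX : X = Xs := mul_right_cancel₀ (ne_of_gt hfac) key
  refine ⟨hXX, ?_⟩
  subst hXX
  have step : α₁ * Y = α₁ * Ys := by
    have := mul_left_cancel₀ (ne_of_gt hX)
      (show X * (1 + r₁ / K₁ * X + α₁ * Y) = X * (1 + r₁ / K₁ * X + α₁ * Ys) from by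
        linear_combination -e1 - X * hE1)
    linarith
  exact mul_left_cancel₀ (ne_of_gt hα₁) step

lemma R2_orbit (hr₁ : 0 < r₁) (hr₂ : 0 < r₂) (hK₁ : 0 < K₁) (hK₂ : 0 < K₂)
    (hα₁ : 0 < α₁) (hα₂ : 0 < α₂)
    (hC12 : 0 < r₁ / α₁ - K₂) (hC21 : 0 < r₂ / α₂ - K₁)
    (hXs : Xs = r₂ * K₁ * (α₁ * K₂ - r₁) / (α₁ * α₂ * K₁ * K₂ - r₁ * r₂))
    (hYs : Ys = r₁ * K₂ * (α₂ * K₁ - r₂) / (α₁ * α₂ * K₁ * K₂ - r₁ * r₂))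
    (p : ℝ × ℝ) (hp1 : 0 < p.1) (hp2 : 0 < p.2)
    (h1 : r₁ ≤ r₁ / K₁ * p.1 + α₁ * p.2) (h2 : r₂ / K₂ * p.2 + α₂ * p.1 ≤ r₂) :
    (∀ t : ℕ, Xs ≤ ((T r₁ r₂ K₁ K₂ α₁ α₂)^[t] p).1 ∧ ((T r₁ r₂ K₁ K₂ α₁ α₂)^[t] p).1 ≤ p.1 ∧
      p.2 ≤ ((T r₁ r₂ K₁ K₂ α₁ α₂)^[t] p).2 ∧ ((T r₁ r₂ K₁ K₂ α₁ α₂)^[t] p).2 ≤ Ys) ∧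
    Tendsto (fun t => (T r₁ r₂ K₁ K₂ α₁ α₂)^[t] p) atTop (𝓝 (Xs, Ys)) := by
  have hXsp := Xs_pos hr₁ hr₂ hK₁ hK₂ hα₁ hα₂ hC12 hC21 hXs
  have hYsp := Ys_pos hr₁ hr₂ hK₁ hK₂ hα₁ hα₂ hC12 hC21 hYs
  set Tm := T r₁ r₂ K₁ K₂ α₁ α₂ with hTm
  set Xt : ℕ → ℝ := fun t => (Tm^[t] p).1 with hXt
  set Yt : ℕ → ℝ := fun t => (Tm^[t] p).2 with hYt
  have hstep1 : ∀ t, Tm^[t+1] p = Tm (Tm^[t] p) := fun t => Function.iterate_succ_apply' Tm t p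
  have hF1 : ∀ t, Xt (t+1) = F r₁ K₁ α₁ (Xt t) (Yt t) := by
    intro t; simp only [hXt, hYt, hstep1 t, hTm, T, Function.iterate_succ_apply']
  have hG1 : ∀ t, Yt (t+1) = G r₂ K₂ α₂ (Xt t) (Yt t) := by
    intro t; simp only [hXt, hYt, hstep1 t, hTm, T, Function.iterate_succ_apply']
  -- invariant
  have hP : ∀ t, 0 < Xt t ∧ 0 < Yt t ∧ r₁ ≤ r₁ / K₁ * Xt t + α₁ * Yt t ∧
      r₂ / K₂ * Yt t + α₂ * Xt t ≤ r₂ := by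
    intro t
    induction t with
    | zero => exact ⟨hp1, hp2, h1, h2⟩
    | succ t ih =>
      obtain ⟨hx, hy, i1, i2⟩ := ih
      rw [hF1 t, hG1 t]
      exact ⟨F_pos hr₁ hK₁ hα₁ hx hy.le, G_pos hr₂ hK₂ hα₂ hx.le hy,
        sig1_new_ge hr₁ hr₂ hK₁ hK₂ hα₁ hα₂ hx hy i1 i2,
        sig2_new_le hr₁ hr₂ hK₁ hK₂ hα₁ hα₂ hx hy i1 i2⟩
  have hXanti : Antitone Xt := by
    apply antitone_nat_of_succ_le
    intro t
    obtain ⟨hx, hy, i1, i2⟩ := hP t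
    rw [hF1 t]
    exact F_le_self hr₁ hK₁ hα₁ hx hy.le i1
  have hYmono : Monotone Yt := by
    apply monotone_nat_of_le_succ
    intro t
    obtain ⟨hx, hy, i1, i2⟩ := hP t
    rw [hG1 t]
    exact G_ge_self hr₂ hK₂ hα₂ hx.le hy i2
  have hXlow : ∀ t, Xs ≤ Xt t := by
    intro t
    obtain ⟨hx, hy, i1, i2⟩ := hP t
    refine x_ge_Xs_of_R2 hr₁ hr₂ hK₁ hK₂ hα₁ hα₂ hC12 hC21 hXs ?_
    calc h r₁ K₁ α₁ (Xt t) ≤ Yt t := (h_le_iff hr₁ hK₁ hα₁).2 i1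
    _ ≤ k r₂ K₂ α₂ (Xt t) := (le_k_iff hr₂ hK₂ hα₂).2 i2
  have hYup : ∀ t, Yt t ≤ Ys := by
    intro t
    obtain ⟨hx, hy, i1, i2⟩ := hP t
    calc Yt t ≤ k r₂ K₂ α₂ (Xt t) := (le_k_iff hr₂ hK₂ hα₂).2 i2
    _ ≤ k r₂ K₂ α₂ Xs := k_anti hr₂ hK₂ hα₂ (hXlow t)
    _ = Ys := k_Xs hr₁ hr₂ hK₁ hK₂ hα₁ hα₂ hC12 hC21 hXs hYs
  have hbounds : ∀ t, Xs ≤ Xt t ∧ Xt t ≤ p.1 ∧ p.2 ≤ Yt t ∧ Yt t ≤ Ys := by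
    intro t
    exact ⟨hXlow t, hXanti (Nat.zero_le t), hYmono (Nat.zero_le t),
      hYup t⟩
  refine ⟨hbounds, ?_⟩
  -- convergence
  have hbb : BddBelow (Set.range Xt) := ⟨Xs, by rintro _ ⟨t, rfl⟩; exact hXlow t⟩
  have hba : BddAbove (Set.range Yt) := ⟨Ys, by rintro _ ⟨t, rfl⟩; exact hYup t⟩
  set xb := ⨅ t, Xt t with hxb
  set yb := ⨆ t, Yt t with hyb
  have hXlim : Tendsto Xt atTop (𝓝 xb) := tendsto_atTop_ciInf hXanti hbb
  have hYlim : Tendsto Yt atTop (𝓝 yb) := tendsto_atTop_ciSup hYmono hba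
  have hxbge : Xs ≤ xb := le_ciInf hXlow
  have hybge : p.2 ≤ yb := le_ciSup hba 0
  have hxbpos : 0 < xb := lt_of_lt_of_le hXsp hxbge
  have hybpos : 0 < yb := lt_of_lt_of_le hp2 hybge
  have hdb : (0:ℝ) < 1 + r₁ / K₁ * xb + α₁ * yb := by positivity
  have hdb2 : (0:ℝ) < 1 + r₂ / K₂ * yb + α₂ * xb := by positivity
  have hshift : Tendsto (fun t => Xt (t + 1)) atTop (𝓝 xb) :=
    hXlim.comp (tendsto_add_atTop_nat 1)
  have hshiftY : Tendsto (fun t => Yt (t + 1)) atTop (𝓝 yb) :=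
    hYlim.comp (tendsto_add_atTop_nat 1)
  have hcont : Tendsto (fun t => F r₁ K₁ α₁ (Xt t) (Yt t)) atTop (𝓝 (F r₁ K₁ α₁ xb yb)) := by
    unfold F
    exact Tendsto.div ((tendsto_const_nhds.mul hXlim))
      ((tendsto_const_nhds.add ((tendsto_const_nhds.mul hXlim))).add
        ((tendsto_const_nhds.mul hYlim))) (ne_of_gt hdb)
  have hcontG : Tendsto (fun t => G r₂ K₂ α₂ (Xt t) (Yt t)) atTop (𝓝 (G r₂ K₂ α₂ xb yb)) := by
    unfold G
    exact Tendsto.div ((tendsto_const_nhds.mul hYlim))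
      ((tendsto_const_nhds.add ((tendsto_const_nhds.mul hYlim))).add
        ((tendsto_const_nhds.mul hXlim))) (ne_of_gt hdb2)
  have hFeq : F r₁ K₁ α₁ xb yb = xb := by
    apply tendsto_nhds_unique _ hshift
    have : (fun t => Xt (t + 1)) = fun t => F r₁ K₁ α₁ (Xt t) (Yt t) := funext hF1
    rw [this]; exact hcont
  have hGeq : G r₂ K₂ α₂ xb yb = yb := by
    apply tendsto_nhds_unique _ hshiftY
    have : (fun t => Yt (t + 1)) = fun t => G r₂ K₂ α₂ (Xt t) (Yt t) := funext hG1
    rw [this]; exact hcontG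
  have e1 : r₁ / K₁ * xb + α₁ * yb = r₁ := by
    have h0 : (1 + r₁) * xb = xb * (1 + r₁ / K₁ * xb + α₁ * yb) := by
      have := hFeq; unfold F at this
      exact (div_eq_iff (ne_of_gt hdb)).1 this
    have := mul_left_cancel₀ (ne_of_gt hxbpos)
      (show xb * (1 + r₁) = xb * (1 + r₁ / K₁ * xb + α₁ * yb) from by linarith [h0])
    linarith
  have e2 : r₂ / K₂ * yb + α₂ * xb = r₂ := by
    have h0 : (1 + r₂) * yb = yb * (1 + r₂ / K₂ * yb + α₂ * xb) := by
      have := hGeq; unfold G at this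
      exact (div_eq_iff (ne_of_gt hdb2)).1 this
    have := mul_left_cancel₀ (ne_of_gt hybpos)
      (show yb * (1 + r₂) = yb * (1 + r₂ / K₂ * yb + α₂ * xb) from by linarith [h0])
    linarith
  obtain ⟨hxx, hyy⟩ := nullcline_unique hr₁ hr₂ hK₁ hK₂ hα₁ hα₂ hC12 hC21 hXs hYs e1 e2
  have : (fun t => Tm^[t] p) = fun t => (Xt t, Yt t) := by
    funext t; simp [hXt, hYt]
  rw [this]
  rw [hxx] at hXlim
  rw [hyy] at hYlim
  exact hXlim.prodMk_nhds hYlim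
end

section
variable {r₁ r₂ K₁ K₂ α₁ α₂ Xs Ys X Y : ℝ}

lemma R4_orbit (hr₁ : 0 < r₁) (hr₂ : 0 < r₂) (hK₁ : 0 < K₁) (hK₂ : 0 < K₂)
    (hα₁ : 0 < α₁) (hα₂ : 0 < α₂)
    (hC12 : 0 < r₁ / α₁ - K₂) (hC21 : 0 < r₂ / α₂ - K₁)
    (hXs : Xs = r₂ * K₁ * (α₁ * K₂ - r₁) / (α₁ * α₂ * K₁ * K₂ - r₁ * r₂))
    (hYs : Ys = r₁ * K₂ * (α₂ * K₁ - r₂) / (α₁ * α₂ * K₁ * K₂ - r₁ * r₂))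
    (p : ℝ × ℝ) (hp1 : 0 < p.1) (hp2 : 0 < p.2)
    (h1 : r₁ / K₁ * p.1 + α₁ * p.2 ≤ r₁) (h2 : r₂ ≤ r₂ / K₂ * p.2 + α₂ * p.1) :
    (∀ t : ℕ, p.1 ≤ ((T r₁ r₂ K₁ K₂ α₁ α₂)^[t] p).1 ∧ ((T r₁ r₂ K₁ K₂ α₁ α₂)^[t] p).1 ≤ Xs ∧
      Ys ≤ ((T r₁ r₂ K₁ K₂ α₁ α₂)^[t] p).2 ∧ ((T r₁ r₂ K₁ K₂ α₁ α₂)^[t] p).2 ≤ p.2) ∧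
    Tendsto (fun t => (T r₁ r₂ K₁ K₂ α₁ α₂)^[t] p) atTop (𝓝 (Xs, Ys)) := by
  have hXsp := Xs_pos hr₁ hr₂ hK₁ hK₂ hα₁ hα₂ hC12 hC21 hXs
  have hYsp := Ys_pos hr₁ hr₂ hK₁ hK₂ hα₁ hα₂ hC12 hC21 hYs
  set Tm := T r₁ r₂ K₁ K₂ α₁ α₂ with hTm
  set Xt : ℕ → ℝ := fun t => (Tm^[t] p).1 with hXt
  set Yt : ℕ → ℝ := fun t => (Tm^[t] p).2 with hYt
  have hstep1 : ∀ t, Tm^[t+1] p = Tm (Tm^[t] p) := fun t => Function.iterate_succ_apply' Tm t p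
  have hF1 : ∀ t, Xt (t+1) = F r₁ K₁ α₁ (Xt t) (Yt t) := by
    intro t; simp only [hXt, hYt, hstep1 t, hTm, T, Function.iterate_succ_apply']
  have hG1 : ∀ t, Yt (t+1) = G r₂ K₂ α₂ (Xt t) (Yt t) := by
    intro t; simp only [hXt, hYt, hstep1 t, hTm, T, Function.iterate_succ_apply']
  have hP : ∀ t, 0 < Xt t ∧ 0 < Yt t ∧ r₁ / K₁ * Xt t + α₁ * Yt t ≤ r₁ ∧
      r₂ ≤ r₂ / K₂ * Yt t + α₂ * Xt t := by
    intro t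
    induction t with
    | zero => exact ⟨hp1, hp2, h1, h2⟩
    | succ t ih =>
      obtain ⟨hx, hy, i1, i2⟩ := ih
      rw [hF1 t, hG1 t]
      exact ⟨F_pos hr₁ hK₁ hα₁ hx hy.le, G_pos hr₂ hK₂ hα₂ hx.le hy,
        sig1_new_le hr₁ hr₂ hK₁ hK₂ hα₁ hα₂ hx hy i1 i2,
        sig2_new_ge hr₁ hr₂ hK₁ hK₂ hα₁ hα₂ hx hy i1 i2⟩
  have hXmono : Monotone Xt := by
    apply monotone_nat_of_le_succ
    intro t
    obtain ⟨hx, hy, i1, i2⟩ := hP t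
    rw [hF1 t]
    exact F_ge_self hr₁ hK₁ hα₁ hx hy.le i1
  have hYanti : Antitone Yt := by
    apply antitone_nat_of_succ_le
    intro t
    obtain ⟨hx, hy, i1, i2⟩ := hP t
    rw [hG1 t]
    exact G_le_self hr₂ hK₂ hα₂ hx.le hy i2
  have hXup : ∀ t, Xt t ≤ Xs := by
    intro t
    obtain ⟨hx, hy, i1, i2⟩ := hP t
    refine x_le_Xs_of_R4 hr₁ hr₂ hK₁ hK₂ hα₁ hα₂ hC12 hC21 hXs ?_
    calc k r₂ K₂ α₂ (Xt t) ≤ Yt t := (k_le_iff hr₂ hK₂ hα₂).2 i2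
    _ ≤ h r₁ K₁ α₁ (Xt t) := (le_h_iff hr₁ hK₁ hα₁).2 i1
  have hYlow : ∀ t, Ys ≤ Yt t := by
    intro t
    obtain ⟨hx, hy, i1, i2⟩ := hP t
    calc Ys = k r₂ K₂ α₂ Xs := (k_Xs hr₁ hr₂ hK₁ hK₂ hα₁ hα₂ hC12 hC21 hXs hYs).symm
    _ ≤ k r₂ K₂ α₂ (Xt t) := k_anti hr₂ hK₂ hα₂ (hXup t)
    _ ≤ Yt t := (k_le_iff hr₂ hK₂ hα₂).2 i2
  have hbounds : ∀ t, p.1 ≤ Xt t ∧ Xt t ≤ Xs ∧ Ys ≤ Yt t ∧ Yt t ≤ p.2 := by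
    intro t
    exact ⟨hXmono (Nat.zero_le t), hXup t, hYlow t,
      hYanti (Nat.zero_le t)⟩
  refine ⟨hbounds, ?_⟩
  have hba : BddAbove (Set.range Xt) := ⟨Xs, by rintro _ ⟨t, rfl⟩; exact hXup t⟩
  have hbb : BddBelow (Set.range Yt) := ⟨Ys, by rintro _ ⟨t, rfl⟩; exact hYlow t⟩
  set xb := ⨆ t, Xt t with hxb
  set yb := ⨅ t, Yt t with hyb
  have hXlim : Tendsto Xt atTop (𝓝 xb) := tendsto_atTop_ciSup hXmono hba
  have hYlim : Tendsto Yt atTop (𝓝 yb) := tendsto_atTop_ciInf hYanti hbb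
  have hxbge : p.1 ≤ xb := le_ciSup hba 0
  have hybge : Ys ≤ yb := le_ciInf hYlow
  have hxbpos : 0 < xb := lt_of_lt_of_le hp1 hxbge
  have hybpos : 0 < yb := lt_of_lt_of_le hYsp hybge
  have hdb : (0:ℝ) < 1 + r₁ / K₁ * xb + α₁ * yb := by positivity
  have hdb2 : (0:ℝ) < 1 + r₂ / K₂ * yb + α₂ * xb := by positivity
  have hshift : Tendsto (fun t => Xt (t + 1)) atTop (𝓝 xb) :=
    hXlim.comp (tendsto_add_atTop_nat 1)
  have hshiftY : Tendsto (fun t => Yt (t + 1)) atTop (𝓝 yb) :=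
    hYlim.comp (tendsto_add_atTop_nat 1)
  have hcont : Tendsto (fun t => F r₁ K₁ α₁ (Xt t) (Yt t)) atTop (𝓝 (F r₁ K₁ α₁ xb yb)) := by
    unfold F
    exact Tendsto.div ((tendsto_const_nhds.mul hXlim))
      ((tendsto_const_nhds.add ((tendsto_const_nhds.mul hXlim))).add
        ((tendsto_const_nhds.mul hYlim))) (ne_of_gt hdb)
  have hcontG : Tendsto (fun t => G r₂ K₂ α₂ (Xt t) (Yt t)) atTop (𝓝 (G r₂ K₂ α₂ xb yb)) := by
    unfold G
    exact Tendsto.div ((tendsto_const_nhds.mul hYlim))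
      ((tendsto_const_nhds.add ((tendsto_const_nhds.mul hYlim))).add
        ((tendsto_const_nhds.mul hXlim))) (ne_of_gt hdb2)
  have hFeq : F r₁ K₁ α₁ xb yb = xb := by
    apply tendsto_nhds_unique _ hshift
    have : (fun t => Xt (t + 1)) = fun t => F r₁ K₁ α₁ (Xt t) (Yt t) := funext hF1
    rw [this]; exact hcont
  have hGeq : G r₂ K₂ α₂ xb yb = yb := by
    apply tendsto_nhds_unique _ hshiftY
    have : (fun t => Yt (t + 1)) = fun t => G r₂ K₂ α₂ (Xt t) (Yt t) := funext hG1
    rw [this]; exact hcontG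
  have e1 : r₁ / K₁ * xb + α₁ * yb = r₁ := by
    have h0 : (1 + r₁) * xb = xb * (1 + r₁ / K₁ * xb + α₁ * yb) := by
      have := hFeq; unfold F at this
      exact (div_eq_iff (ne_of_gt hdb)).1 this
    have := mul_left_cancel₀ (ne_of_gt hxbpos)
      (show xb * (1 + r₁) = xb * (1 + r₁ / K₁ * xb + α₁ * yb) from by linarith [h0])
    linarith
  have e2 : r₂ / K₂ * yb + α₂ * xb = r₂ := by
    have h0 : (1 + r₂) * yb = yb * (1 + r₂ / K₂ * yb + α₂ * xb) := by
      have := hGeq; unfold G at this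
      exact (div_eq_iff (ne_of_gt hdb2)).1 this
    have := mul_left_cancel₀ (ne_of_gt hybpos)
      (show yb * (1 + r₂) = yb * (1 + r₂ / K₂ * yb + α₂ * xb) from by linarith [h0])
    linarith
  obtain ⟨hxx, hyy⟩ := nullcline_unique hr₁ hr₂ hK₁ hK₂ hα₁ hα₂ hC12 hC21 hXs hYs e1 e2
  have : (fun t => Tm^[t] p) = fun t => (Xt t, Yt t) := by
    funext t; simp [hXt, hYt]
  rw [this]
  rw [hxx] at hXlim
  rw [hyy] at hYlim
  exact hXlim.prodMk_nhds hYlim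
end

section
variable {r₁ r₂ K₁ K₂ α₁ α₂ X Y M C δ : ℝ}

lemma orbit_pos (hr₁ : 0 < r₁) (hr₂ : 0 < r₂) (hK₁ : 0 < K₁) (hK₂ : 0 < K₂)
    (hα₁ : 0 < α₁) (hα₂ : 0 < α₂) (p : ℝ × ℝ) (hp1 : 0 < p.1) (hp2 : 0 < p.2) (t : ℕ) :
    0 < ((T r₁ r₂ K₁ K₂ α₁ α₂)^[t] p).1 ∧ 0 < ((T r₁ r₂ K₁ K₂ α₁ α₂)^[t] p).2 := by
  induction t with
  | zero => exact ⟨hp1, hp2⟩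
  | succ t ih =>
    rw [Function.iterate_succ_apply']
    exact ⟨F_pos hr₁ hK₁ hα₁ ih.1 ih.2.le, G_pos hr₂ hK₂ hα₂ ih.1.le ih.2⟩

/-- order-sandwich is preserved by the map -/
lemma orbit_sandwich (hr₁ : 0 < r₁) (hr₂ : 0 < r₂) (hK₁ : 0 < K₁) (hK₂ : 0 < K₂)
    (hα₁ : 0 < α₁) (hα₂ : 0 < α₂) (a b p : ℝ × ℝ)
    (ha1 : 0 < a.1) (ha2 : 0 < a.2) (hb1 : 0 < b.1) (hb2 : 0 < b.2)
    (hp1 : 0 < p.1) (hp2 : 0 < p.2)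
    (o1 : a.1 ≤ p.1) (o2 : p.1 ≤ b.1) (o3 : b.2 ≤ p.2) (o4 : p.2 ≤ a.2) (t : ℕ) :
    ((T r₁ r₂ K₁ K₂ α₁ α₂)^[t] a).1 ≤ ((T r₁ r₂ K₁ K₂ α₁ α₂)^[t] p).1 ∧
    ((T r₁ r₂ K₁ K₂ α₁ α₂)^[t] p).1 ≤ ((T r₁ r₂ K₁ K₂ α₁ α₂)^[t] b).1 ∧
    ((T r₁ r₂ K₁ K₂ α₁ α₂)^[t] b).2 ≤ ((T r₁ r₂ K₁ K₂ α₁ α₂)^[t] p).2 ∧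
    ((T r₁ r₂ K₁ K₂ α₁ α₂)^[t] p).2 ≤ ((T r₁ r₂ K₁ K₂ α₁ α₂)^[t] a).2 := by
  induction t with
  | zero => exact ⟨o1, o2, o3, o4⟩
  | succ t ih =>
    obtain ⟨i1, i2, i3, i4⟩ := ih
    obtain ⟨pa1, pa2⟩ := orbit_pos hr₁ hr₂ hK₁ hK₂ hα₁ hα₂ a ha1 ha2 t
    obtain ⟨pb1, pb2⟩ := orbit_pos hr₁ hr₂ hK₁ hK₂ hα₁ hα₂ b hb1 hb2 t
    obtain ⟨pp1, pp2⟩ := orbit_pos hr₁ hr₂ hK₁ hK₂ hα₁ hα₂ p hp1 hp2 t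
    simp only [Function.iterate_succ_apply', T]
    refine ⟨F_mono hr₁ hK₁ hα₁ pa1.le i1 pp2.le i4,
      F_mono hr₁ hK₁ hα₁ pp1.le i2 pb2.le i3,
      G_anti hr₂ hK₂ hα₂ pp1.le i2 pb2.le i3,
      G_anti hr₂ hK₂ hα₂ pa1.le i1 pp2.le i4⟩

/-- abstract eventual-bound lemma -/
lemma eventually_le_of_dec {f : ℕ → ℝ} (hδ : 0 < δ) (hC : ∀ t, f t ≤ C)
    (hstay : ∀ t, f t ≤ M → f (t + 1) ≤ M)
    (hdec : ∀ t, M ≤ f t → f (t + 1) ≤ f t - δ) :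
    ∃ N, ∀ t ≥ N, f t ≤ M := by
  have hex : ∃ N, f N ≤ M := by
    by_contra hc
    push_neg at hc
    have hiter : ∀ j : ℕ, f j ≤ C - j * δ := by
      intro j
      induction j with
      | zero => simpa using hC 0
      | succ j ih =>
        have := hdec j (hc j).le
        push_cast
        nlinarith
    obtain ⟨j, hj⟩ := exists_nat_gt ((C - M) / δ)
    have h2 : (C - M) < j * δ := by
      rw [div_lt_iff₀ hδ] at hj
      linarith
    have := hiter j
    have := hc j
    linarith
  obtain ⟨N, hN⟩ := hex
  refine ⟨N, fun t ht => ?_⟩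
  obtain ⟨s, rfl⟩ := Nat.exists_eq_add_of_le ht
  clear ht
  induction s with
  | zero => simpa using hN
  | succ s ih => exact hstay (N + s) ih

-- one-dimensional bounds for G
lemma G_le_B (hr₂ : 0 < r₂) (hK₂ : 0 < K₂) (hα₂ : 0 < α₂) (hX : 0 ≤ X) (hY : 0 < Y) :
    G r₂ K₂ α₂ X Y ≤ K₂ * (1 + r₂) / r₂ := by
  unfold G
  have hD : (0:ℝ) < 1 + r₂ / K₂ * Y + α₂ * X := by positivity
  rw [div_le_div_iff₀ hD hr₂]
  have e2 : K₂ * (1 + r₂) * (r₂ / K₂ * Y) = (1 + r₂) * r₂ * Y := by field_simp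
  nlinarith [e2, mul_nonneg (mul_nonneg hK₂.le (by linarith : (0:ℝ) ≤ 1 + r₂))
    (mul_nonneg hα₂.le hX), mul_pos hK₂ (by linarith : (0:ℝ) < 1 + r₂)]

lemma G_stay (hr₂ : 0 < r₂) (hK₂ : 0 < K₂) (hα₂ : 0 < α₂) (hX : 0 ≤ X) (hY : 0 < Y)
    (hM : K₂ ≤ M) (hYM : Y ≤ M) : G r₂ K₂ α₂ X Y ≤ M := by
  unfold G
  have hD : (0:ℝ) < 1 + r₂ / K₂ * Y + α₂ * X := by positivity
  rw [div_le_iff₀ hD]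
  have e : r₂ / K₂ * K₂ = r₂ := by field_simp
  have hMpos : 0 < M := lt_of_lt_of_le hK₂ hM
  nlinarith [mul_nonneg (mul_nonneg hα₂.le hX) hMpos.le,
    mul_nonneg (mul_nonneg (div_pos hr₂ hK₂).le hY.le) (sub_nonneg.2 hM)]

lemma G_dec (hr₂ : 0 < r₂) (hK₂ : 0 < K₂) (hα₂ : 0 < α₂) (hX : 0 ≤ X)
    (hM : K₂ ≤ M) (hY1 : M ≤ Y) (hY2 : Y ≤ C)
    (hδ : δ = r₂ / K₂ * M * (M - K₂) / (1 + r₂ / K₂ * C)) :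
    G r₂ K₂ α₂ X Y ≤ Y - δ := by
  have hMpos : 0 < M := lt_of_lt_of_le hK₂ hM
  have hYpos : 0 < Y := lt_of_lt_of_le hMpos hY1
  have hCpos : 0 < C := lt_of_lt_of_le hYpos hY2
  have hden : (0:ℝ) < 1 + r₂ / K₂ * C := by positivity
  have hδ0 : 0 ≤ δ := by
    rw [hδ]
    exact div_nonneg (mul_nonneg (by positivity) (sub_nonneg.2 hM)) hden.le
  have hδle : δ * (1 + r₂ / K₂ * C) = r₂ / K₂ * M * (M - K₂) := by
    rw [hδ]; field_simp
  have hc : (0:ℝ) < r₂ / K₂ := by positivity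
  have key1 : r₂ / K₂ * M * (M - K₂) ≤ r₂ / K₂ * Y * (Y - K₂) := by
    nlinarith [mul_nonneg (mul_nonneg hc.le (sub_nonneg.2 hY1))
      (by linarith : (0:ℝ) ≤ Y + M - K₂)]
  have key2 : δ * (1 + r₂ / K₂ * Y) ≤ δ * (1 + r₂ / K₂ * C) := by
    nlinarith [mul_nonneg (mul_nonneg hδ0 hc.le) (sub_nonneg.2 hY2)]
  have m1 : M * (M - K₂) ≤ Y * C :=
    mul_le_mul hY1 (by linarith) (by linarith) (by linarith)
  have hYδ : 0 ≤ Y - δ := by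
    nlinarith [mul_le_mul_of_nonneg_left m1 hc.le, hδle,
      mul_nonneg hc.le hCpos.le, hYpos.le]
  unfold G
  have hD : (0:ℝ) < 1 + r₂ / K₂ * Y + α₂ * X := by positivity
  rw [div_le_iff₀ hD]
  have e : r₂ / K₂ * K₂ = r₂ := by field_simp
  nlinarith [mul_nonneg hYδ (mul_nonneg hα₂.le hX)]

-- mirrored for F
lemma F_le_B (hr₁ : 0 < r₁) (hK₁ : 0 < K₁) (hα₁ : 0 < α₁) (hY : 0 ≤ Y) (hX : 0 < X) :
    F r₁ K₁ α₁ X Y ≤ K₁ * (1 + r₁) / r₁ := by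
  unfold F
  have hD : (0:ℝ) < 1 + r₁ / K₁ * X + α₁ * Y := by positivity
  rw [div_le_div_iff₀ hD hr₁]
  have e2 : K₁ * (1 + r₁) * (r₁ / K₁ * X) = (1 + r₁) * r₁ * X := by field_simp
  nlinarith [e2, mul_nonneg (mul_nonneg hK₁.le (by linarith : (0:ℝ) ≤ 1 + r₁))
    (mul_nonneg hα₁.le hY), mul_pos hK₁ (by linarith : (0:ℝ) < 1 + r₁)]

lemma F_stay (hr₁ : 0 < r₁) (hK₁ : 0 < K₁) (hα₁ : 0 < α₁) (hY : 0 ≤ Y) (hX : 0 < X)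
    (hM : K₁ ≤ M) (hXM : X ≤ M) : F r₁ K₁ α₁ X Y ≤ M := by
  unfold F
  have hD : (0:ℝ) < 1 + r₁ / K₁ * X + α₁ * Y := by positivity
  rw [div_le_iff₀ hD]
  have e : r₁ / K₁ * K₁ = r₁ := by field_simp
  have hMpos : 0 < M := lt_of_lt_of_le hK₁ hM
  nlinarith [mul_nonneg (mul_nonneg hα₁.le hY) hMpos.le,
    mul_nonneg (mul_nonneg (div_pos hr₁ hK₁).le hX.le) (sub_nonneg.2 hM)]

lemma F_dec (hr₁ : 0 < r₁) (hK₁ : 0 < K₁) (hα₁ : 0 < α₁) (hY : 0 ≤ Y)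
    (hM : K₁ ≤ M) (hX1 : M ≤ X) (hX2 : X ≤ C)
    (hδ : δ = r₁ / K₁ * M * (M - K₁) / (1 + r₁ / K₁ * C)) :
    F r₁ K₁ α₁ X Y ≤ X - δ := by
  have hMpos : 0 < M := lt_of_lt_of_le hK₁ hM
  have hXpos : 0 < X := lt_of_lt_of_le hMpos hX1
  have hCpos : 0 < C := lt_of_lt_of_le hXpos hX2
  have hden : (0:ℝ) < 1 + r₁ / K₁ * C := by positivity
  have hδ0 : 0 ≤ δ := by
    rw [hδ]
    exact div_nonneg (mul_nonneg (by positivity) (sub_nonneg.2 hM)) hden.le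
  have hδle : δ * (1 + r₁ / K₁ * C) = r₁ / K₁ * M * (M - K₁) := by
    rw [hδ]; field_simp
  have hc : (0:ℝ) < r₁ / K₁ := by positivity
  have key1 : r₁ / K₁ * M * (M - K₁) ≤ r₁ / K₁ * X * (X - K₁) := by
    nlinarith [mul_nonneg (mul_nonneg hc.le (sub_nonneg.2 hX1))
      (by linarith : (0:ℝ) ≤ X + M - K₁)]
  have key2 : δ * (1 + r₁ / K₁ * X) ≤ δ * (1 + r₁ / K₁ * C) := by
    nlinarith [mul_nonneg (mul_nonneg hδ0 hc.le) (sub_nonneg.2 hX2)]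
  have m1 : M * (M - K₁) ≤ X * C :=
    mul_le_mul hX1 (by linarith) (by linarith) (by linarith)
  have hXδ : 0 ≤ X - δ := by
    nlinarith [mul_le_mul_of_nonneg_left m1 hc.le, hδle,
      mul_nonneg hc.le hCpos.le, hXpos.le]
  unfold F
  have hD : (0:ℝ) < 1 + r₁ / K₁ * X + α₁ * Y := by positivity
  rw [div_le_iff₀ hD]
  have e : r₁ / K₁ * K₁ = r₁ := by field_simp
  nlinarith [mul_nonneg hXδ (mul_nonneg hα₁.le hY)]
end

section
variable {r₁ r₂ K₁ K₂ α₁ α₂ : ℝ}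

lemma orbit_eventual (hr₁ : 0 < r₁) (hr₂ : 0 < r₂) (hK₁ : 0 < K₁) (hK₂ : 0 < K₂)
    (hα₁ : 0 < α₁) (hα₂ : 0 < α₂)
    (hC12 : 0 < r₁ / α₁ - K₂) (hC21 : 0 < r₂ / α₂ - K₁)
    (p : ℝ × ℝ) (hp1 : 0 < p.1) (hp2 : 0 < p.2) :
    ∃ N, ∀ t ≥ N, ((T r₁ r₂ K₁ K₂ α₁ α₂)^[t] p).1 ≤ (K₁ + r₂ / α₂) / 2 ∧
      ((T r₁ r₂ K₁ K₂ α₁ α₂)^[t] p).2 ≤ (K₂ + r₁ / α₁) / 2 := by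
  set Tm := T r₁ r₂ K₁ K₂ α₁ α₂ with hTm
  set Xt : ℕ → ℝ := fun t => (Tm^[t] p).1 with hXt
  set Yt : ℕ → ℝ := fun t => (Tm^[t] p).2 with hYt
  have hpos : ∀ t, 0 < Xt t ∧ 0 < Yt t := fun t =>
    orbit_pos hr₁ hr₂ hK₁ hK₂ hα₁ hα₂ p hp1 hp2 t
  have hF1 : ∀ t, Xt (t+1) = F r₁ K₁ α₁ (Xt t) (Yt t) := by
    intro t
    simp only [hXt, hYt, Function.iterate_succ_apply' Tm t p, hTm, T, Function.iterate_succ_apply']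
  have hG1 : ∀ t, Yt (t+1) = G r₂ K₂ α₂ (Xt t) (Yt t) := by
    intro t
    simp only [hXt, hYt, Function.iterate_succ_apply' Tm t p, hTm, T, Function.iterate_succ_apply']
  set M₁ := (K₁ + r₂ / α₂) / 2 with hM₁d
  set M₂ := (K₂ + r₁ / α₁) / 2 with hM₂d
  have hM₁ : K₁ < M₁ := by rw [hM₁d]; linarith
  have hM₂ : K₂ < M₂ := by rw [hM₂d]; linarith
  set CX := max p.1 (K₁ * (1 + r₁) / r₁) with hCXd
  set CY := max p.2 (K₂ * (1 + r₂) / r₂) with hCYd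
  have hCX : ∀ t, Xt t ≤ CX := by
    intro t
    cases t with
    | zero => exact le_max_left _ _
    | succ t =>
      rw [hF1 t]
      exact le_trans (F_le_B hr₁ hK₁ hα₁ (hpos t).2.le (hpos t).1) (le_max_right _ _)
  have hCY : ∀ t, Yt t ≤ CY := by
    intro t
    cases t with
    | zero => exact le_max_left _ _
    | succ t =>
      rw [hG1 t]
      exact le_trans (G_le_B hr₂ hK₂ hα₂ (hpos t).1.le (hpos t).2) (le_max_right _ _)
  have hCXpos : 0 < CX := lt_of_lt_of_le hp1 (le_max_left _ _)
  have hCYpos : 0 < CY := lt_of_lt_of_le hp2 (le_max_left _ _)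
  have hδX : (0:ℝ) < r₁ / K₁ * M₁ * (M₁ - K₁) / (1 + r₁ / K₁ * CX) := by
    apply div_pos _ (by positivity)
    apply mul_pos (by positivity) (by linarith)
  have hδY : (0:ℝ) < r₂ / K₂ * M₂ * (M₂ - K₂) / (1 + r₂ / K₂ * CY) := by
    apply div_pos _ (by positivity)
    apply mul_pos (by positivity) (by linarith)
  obtain ⟨N₁, hN₁⟩ := eventually_le_of_dec hδX hCX
    (fun t ht => by
      rw [hF1 t]
      exact F_stay hr₁ hK₁ hα₁ (hpos t).2.le (hpos t).1 hM₁.le ht)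
    (fun t ht => by
      rw [hF1 t]
      exact F_dec hr₁ hK₁ hα₁ (hpos t).2.le hM₁.le ht (hCX t) rfl)
  obtain ⟨N₂, hN₂⟩ := eventually_le_of_dec hδY hCY
    (fun t ht => by
      rw [hG1 t]
      exact G_stay hr₂ hK₂ hα₂ (hpos t).1.le (hpos t).2 hM₂.le ht)
    (fun t ht => by
      rw [hG1 t]
      exact G_dec hr₂ hK₂ hα₂ (hpos t).1.le hM₂.le ht (hCY t) rfl)
  exact ⟨max N₁ N₂, fun t ht =>
    ⟨hN₁ t (le_trans (le_max_left _ _) ht), hN₂ t (le_trans (le_max_right _ _) ht)⟩⟩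
end

section
lemma h_inv {r₁ K₁ α₁ Y : ℝ} (hr₁ : 0 < r₁) (hK₁ : 0 < K₁) (hα₁ : 0 < α₁) :
    h r₁ K₁ α₁ (K₁ * (r₁ - α₁ * Y) / r₁) = Y := by
  unfold h; field_simp; ring

lemma k_inv {r₂ K₂ α₂ Y : ℝ} (hr₂ : 0 < r₂) (hK₂ : 0 < K₂) (hα₂ : 0 < α₂) :
    k r₂ K₂ α₂ (r₂ * (K₂ - Y) / (α₂ * K₂)) = Y := by
  unfold k; field_simp; ring

set_option maxHeartbeats 2000000 in
theorem stmt17 (r₁ r₂ K₁ K₂ α₁ α₂ : ℝ)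
    (hr₁ : 0 < r₁) (hr₂ : 0 < r₂) (hK₁ : 0 < K₁) (hK₂ : 0 < K₂)
    (hα₁ : 0 < α₁) (hα₂ : 0 < α₂)
    (hC12 : 0 < r₁ / α₁ - K₂) (hC21 : 0 < r₂ / α₂ - K₁)
    (Xs Ys : ℝ)
    (hXs : Xs = r₂ * K₁ * (α₁ * K₂ - r₁) / (α₁ * α₂ * K₁ * K₂ - r₁ * r₂))
    (hYs : Ys = r₁ * K₂ * (α₂ * K₁ - r₂) / (α₁ * α₂ * K₁ * K₂ - r₁ * r₂)) :
    (∀ X Y : ℝ, 0 < X → 0 < Y → h r₁ K₁ α₁ X ≤ Y → Y ≤ k r₂ K₂ α₂ X →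
        (X, Y) ≠ (Xs, Ys) →
        0 < F r₁ K₁ α₁ X Y ∧ 0 < G r₂ K₂ α₂ X Y ∧
          h r₁ K₁ α₁ (F r₁ K₁ α₁ X Y) ≤ G r₂ K₂ α₂ X Y ∧
          G r₂ K₂ α₂ X Y ≤ k r₂ K₂ α₂ (F r₁ K₁ α₁ X Y) ∧
          (F r₁ K₁ α₁ X Y, G r₂ K₂ α₂ X Y) ≠ (Xs, Ys)) ∧
    (∀ X Y : ℝ, 0 < X → 0 < Y → k r₂ K₂ α₂ X ≤ Y → Y ≤ h r₁ K₁ α₁ X →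
        (X, Y) ≠ (Xs, Ys) →
        0 < F r₁ K₁ α₁ X Y ∧ 0 < G r₂ K₂ α₂ X Y ∧
          k r₂ K₂ α₂ (F r₁ K₁ α₁ X Y) ≤ G r₂ K₂ α₂ X Y ∧
          G r₂ K₂ α₂ X Y ≤ h r₁ K₁ α₁ (F r₁ K₁ α₁ X Y) ∧
          (F r₁ K₁ α₁ X Y, G r₂ K₂ α₂ X Y) ≠ (Xs, Ys)) ∧
    (∀ ε > (0 : ℝ), ∃ δ > (0 : ℝ), ∀ p : ℝ × ℝ, 0 < p.1 → 0 < p.2 →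
        dist p (Xs, Ys) < δ →
        ∀ t : ℕ, dist ((T r₁ r₂ K₁ K₂ α₁ α₂)^[t] p) (Xs, Ys) < ε) ∧
    (∀ p : ℝ × ℝ, 0 < p.1 → 0 < p.2 →
        Filter.Tendsto (fun t => (T r₁ r₂ K₁ K₂ α₁ α₂)^[t] p) Filter.atTop
          (nhds (Xs, Ys))) := by
  have hXsp := Xs_pos hr₁ hr₂ hK₁ hK₂ hα₁ hα₂ hC12 hC21 hXs
  have hYsp := Ys_pos hr₁ hr₂ hK₁ hK₂ hα₁ hα₂ hC12 hC21 hYs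
  have hcoeff := hk_coeff_pos hr₁ hr₂ hK₁ hK₂ hα₁ hα₂ hC12 hC21
  refine ⟨?_, ?_, ?_, ?_⟩
  · -- R₂ invariance
    intro X Y hX hY hh hkk hne
    have i1 : r₁ ≤ r₁ / K₁ * X + α₁ * Y := (h_le_iff hr₁ hK₁ hα₁).1 hh
    have i2 : r₂ / K₂ * Y + α₂ * X ≤ r₂ := (le_k_iff hr₂ hK₂ hα₂).1 hkk
    refine ⟨F_pos hr₁ hK₁ hα₁ hX hY.le, G_pos hr₂ hK₂ hα₂ hX.le hY,
      (h_le_iff hr₁ hK₁ hα₁).2 (sig1_new_ge hr₁ hr₂ hK₁ hK₂ hα₁ hα₂ hX hY i1 i2),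
      (le_k_iff hr₂ hK₂ hα₂).2 (sig2_new_le hr₁ hr₂ hK₁ hK₂ hα₁ hα₂ hX hY i1 i2), ?_⟩
    intro heq
    rw [Prod.mk.injEq] at heq
    obtain ⟨hXX, hYY⟩ := preimage_Es hr₁ hr₂ hK₁ hK₂ hα₁ hα₂ hC12 hC21 hXs hYs hX hY
      heq.1 heq.2
    exact hne (by rw [Prod.mk.injEq]; exact ⟨hXX, hYY⟩)
  · -- R₄ invariance
    intro X Y hX hY hkk hh hne
    have i1 : r₁ / K₁ * X + α₁ * Y ≤ r₁ := (le_h_iff hr₁ hK₁ hα₁).1 hh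
    have i2 : r₂ ≤ r₂ / K₂ * Y + α₂ * X := (k_le_iff hr₂ hK₂ hα₂).1 hkk
    refine ⟨F_pos hr₁ hK₁ hα₁ hX hY.le, G_pos hr₂ hK₂ hα₂ hX.le hY,
      (k_le_iff hr₂ hK₂ hα₂).2 (sig2_new_ge hr₁ hr₂ hK₁ hK₂ hα₁ hα₂ hX hY i1 i2),
      (le_h_iff hr₁ hK₁ hα₁).2 (sig1_new_le hr₁ hr₂ hK₁ hK₂ hα₁ hα₂ hX hY i1 i2), ?_⟩
    intro heq
    rw [Prod.mk.injEq] at heq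
    obtain ⟨hXX, hYY⟩ := preimage_Es hr₁ hr₂ hK₁ hK₂ hα₁ hα₂ hC12 hC21 hXs hYs hX hY
      heq.1 heq.2
    exact hne (by rw [Prod.mk.injEq]; exact ⟨hXX, hYY⟩)
  · -- stability
    intro ε hε
    set c₁ := r₁ / (α₁ * K₁) with hc₁d
    set c₂ := α₂ * K₂ / r₂ with hc₂d
    have hc₁ : 0 < c₁ := by rw [hc₁d]; positivity
    have hc₂ : 0 < c₂ := by rw [hc₂d]; positivity
    set s := min (Xs / 2) (min (Ys / (2 * c₂)) (ε / (2 * (1 + c₁ + c₂)))) with hsd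
    have hs0 : 0 < s := lt_min (by positivity) (lt_min (by positivity) (by positivity))
    have hs1 : s ≤ Xs / 2 := min_le_left _ _
    have hs2 : s ≤ Ys / (2 * c₂) := le_trans (min_le_right _ _) (min_le_left _ _)
    have hs3 : s ≤ ε / (2 * (1 + c₁ + c₂)) := le_trans (min_le_right _ _) (min_le_right _ _)
    have hc2s : c₂ * s ≤ Ys / 2 := by
      have h0 := mul_le_mul_of_nonneg_left hs2 hc₂.le
      have e : c₂ * (Ys / (2 * c₂)) = Ys / 2 := by field_simp
      linarith [e ▸ h0]
    have hsε : s * (2 * (1 + c₁ + c₂)) ≤ ε := by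
      have := (le_div_iff₀ (by positivity : (0:ℝ) < 2 * (1 + c₁ + c₂))).1 hs3
      linarith
    have hsεlt : s < ε := by nlinarith
    have hc1slt : c₁ * s < ε := by nlinarith
    have hc2slt : c₂ * s < ε := by nlinarith
    have ha1 : 0 < Xs - s := by linarith
    have ha2 : 0 < Ys + c₁ * s := by nlinarith
    have hb1 : 0 < Xs + s := by linarith
    have hb2 : 0 < Ys - c₂ * s := by linarith
    have hha : h r₁ K₁ α₁ (Xs - s) = Ys + c₁ * s := by
      rw [h_lin, h_Xs hr₁ hr₂ hK₁ hK₂ hα₁ hα₂ hC12 hC21 hXs hYs, hc₁d]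
    have hkb : k r₂ K₂ α₂ (Xs + s) = Ys - c₂ * s := by
      rw [k_lin, k_Xs hr₁ hr₂ hK₁ hK₂ hα₁ hα₂ hC12 hC21 hXs hYs, hc₂d]
    have hkha : k r₂ K₂ α₂ (Xs - s) ≤ h r₁ K₁ α₁ (Xs - s) := by
      have hd := hk_diff hr₁ hr₂ hK₁ hK₂ hα₁ hα₂ hC12 hC21 hXs (Xs - s)
      have hnn := mul_nonneg hcoeff.le (by linarith : (0:ℝ) ≤ Xs - (Xs - s))
      linarith
    have hhkb : h r₁ K₁ α₁ (Xs + s) ≤ k r₂ K₂ α₂ (Xs + s) := by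
      have hd := hk_diff hr₁ hr₂ hK₁ hK₂ hα₁ hα₂ hC12 hC21 hXs (Xs + s)
      have hnn := mul_nonneg hcoeff.le (by linarith : (0:ℝ) ≤ (Xs + s) - Xs)
      have hnn2 : (r₁ * r₂ - α₁ * α₂ * K₁ * K₂) / (α₁ * K₁ * r₂) * (Xs - (Xs + s)) ≤ 0 := by
        nlinarith
      linarith
    set a : ℝ × ℝ := (Xs - s, Ys + c₁ * s) with had
    set b : ℝ × ℝ := (Xs + s, Ys - c₂ * s) with hbd
    have haR1 : r₁ / K₁ * a.1 + α₁ * a.2 ≤ r₁ :=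
      (le_h_iff hr₁ hK₁ hα₁).1 (le_of_eq hha.symm)
    have haR2 : r₂ ≤ r₂ / K₂ * a.2 + α₂ * a.1 :=
      (k_le_iff hr₂ hK₂ hα₂).1 (le_trans hkha (le_of_eq hha))
    have hbR2 : r₂ / K₂ * b.2 + α₂ * b.1 ≤ r₂ :=
      (le_k_iff hr₂ hK₂ hα₂).1 (le_of_eq hkb.symm)
    have hbR1 : r₁ ≤ r₁ / K₁ * b.1 + α₁ * b.2 :=
      (h_le_iff hr₁ hK₁ hα₁).1 (le_trans hhkb (le_of_eq hkb))
    obtain ⟨hAb, -⟩ := R4_orbit hr₁ hr₂ hK₁ hK₂ hα₁ hα₂ hC12 hC21 hXs hYs a ha1 ha2 haR1 haR2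
    obtain ⟨hBb, -⟩ := R2_orbit hr₁ hr₂ hK₁ hK₂ hα₁ hα₂ hC12 hC21 hXs hYs b hb1 hb2 hbR1 hbR2
    refine ⟨min s (min (c₁ * s) (c₂ * s)), lt_min hs0 (lt_min (by positivity) (by positivity)),
      ?_⟩
    intro p hp1 hp2 hdist t
    rw [Prod.dist_eq] at hdist
    have hd1 : |p.1 - Xs| < s := by
      have := lt_of_le_of_lt (le_max_left (dist p.1 Xs) (dist p.2 Ys)) hdist
      rw [Real.dist_eq] at this
      exact lt_of_lt_of_le this (min_le_left _ _)
    have hd2 : |p.2 - Ys| < min (c₁ * s) (c₂ * s) := by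
      have := lt_of_le_of_lt (le_max_right (dist p.1 Xs) (dist p.2 Ys)) hdist
      rw [Real.dist_eq] at this
      exact lt_of_lt_of_le this (min_le_right _ _)
    have hp1l : Xs - s ≤ p.1 := by have := (abs_lt.1 hd1).1; linarith
    have hp1u : p.1 ≤ Xs + s := by have := (abs_lt.1 hd1).2; linarith
    have hp2l : Ys - c₂ * s ≤ p.2 := by
      have := (abs_lt.1 (lt_of_lt_of_le hd2 (min_le_right _ _))).1; linarith
    have hp2u : p.2 ≤ Ys + c₁ * s := by
      have := (abs_lt.1 (lt_of_lt_of_le hd2 (min_le_left _ _))).2; linarith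
    obtain ⟨s1, s2, s3, s4⟩ := orbit_sandwich hr₁ hr₂ hK₁ hK₂ hα₁ hα₂ a b p ha1 ha2 hb1 hb2
      hp1 hp2 hp1l hp1u hp2l hp2u t
    obtain ⟨A1, A2, A3, A4⟩ := hAb t
    obtain ⟨B1, B2, B3, B4⟩ := hBb t
    rw [Prod.dist_eq]
    apply max_lt
    · rw [Real.dist_eq, abs_lt]
      constructor
      · simp only [had] at A1; linarith
      · simp only [hbd] at B2; linarith
    · rw [Real.dist_eq, abs_lt]
      constructor
      · simp only [hbd] at B3; linarith
      · simp only [had] at A4; linarith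
  · -- global attraction
    intro p hp1 hp2
    set Tm := T r₁ r₂ K₁ K₂ α₁ α₂ with hTmd
    obtain ⟨N, hN⟩ := orbit_eventual hr₁ hr₂ hK₁ hK₂ hα₁ hα₂ hC12 hC21 p hp1 hp2
    set q := Tm^[N] p with hqd
    obtain ⟨hq1, hq2⟩ := orbit_pos hr₁ hr₂ hK₁ hK₂ hα₁ hα₂ p hp1 hp2 N
    obtain ⟨hqM₁, hqM₂⟩ := hN N le_rfl
    have hM₁lt : (K₁ + r₂ / α₂) / 2 < r₂ / α₂ := by linarith
    have hM₂lt : (K₂ + r₁ / α₁) / 2 < r₁ / α₁ := by linarith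
    have hq2lt : α₁ * q.2 < r₁ := by
      have h0 : q.2 < r₁ / α₁ := lt_of_le_of_lt hqM₂ hM₂lt
      exact (lt_div_iff₀' hα₁).1 h0
    have hq1lt : q.1 < r₂ / α₂ := lt_of_le_of_lt hqM₁ hM₁lt
    -- point a in R₄
    set xbar := K₁ * (r₁ - α₁ * q.2) / r₁ with hxbard
    have hxbarpos : 0 < xbar := div_pos (mul_pos hK₁ (by linarith)) hr₁
    have hm0 : 0 < min q.1 (min Xs xbar) := lt_min hq1 (lt_min hXsp hxbarpos)
    set xa := min q.1 (min Xs xbar) / 2 with hxad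
    have hxa0 : 0 < xa := by rw [hxad]; linarith
    have hxaq : xa ≤ q.1 := by
      have := min_le_left q.1 (min Xs xbar); rw [hxad]; linarith
    have hxaXs : xa ≤ Xs := by
      have h0 := le_trans (min_le_right q.1 (min Xs xbar)) (min_le_left Xs xbar)
      rw [hxad]; linarith
    have hxaxbar : xa ≤ xbar := by
      have h0 := le_trans (min_le_right q.1 (min Xs xbar)) (min_le_right Xs xbar)
      rw [hxad]; linarith
    have hhxa : q.2 ≤ h r₁ K₁ α₁ xa := by
      have := h_anti hr₁ hK₁ hα₁ hxaxbar
      rw [h_inv hr₁ hK₁ hα₁] at this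
      exact this
    set a : ℝ × ℝ := (xa, h r₁ K₁ α₁ xa) with had
    have ha2 : 0 < a.2 := lt_of_lt_of_le hq2 hhxa
    have haR1 : r₁ / K₁ * a.1 + α₁ * a.2 ≤ r₁ := (le_h_iff hr₁ hK₁ hα₁).1 le_rfl
    have haR2 : r₂ ≤ r₂ / K₂ * a.2 + α₂ * a.1 := by
      apply (k_le_iff hr₂ hK₂ hα₂).1
      have hd := hk_diff hr₁ hr₂ hK₁ hK₂ hα₁ hα₂ hC12 hC21 hXs xa
      show k r₂ K₂ α₂ xa ≤ h r₁ K₁ α₁ xa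
      have hnn := mul_nonneg hcoeff.le (by linarith : (0:ℝ) ≤ Xs - xa)
      linarith
    -- point b in R₂
    set xlow := r₂ * (K₂ - q.2) / (α₂ * K₂) with hxlowd
    have hxlowlt : xlow < r₂ / α₂ := by
      rw [hxlowd, div_lt_div_iff₀ (by positivity) hα₂]
      have := mul_pos (mul_pos hr₂ hq2) hα₂
      nlinarith
    have hXslt : Xs < r₂ / α₂ := by
      have := dXs_lt hr₁ hr₂ hK₁ hK₂ hα₁ hα₂ hC12 hC21 hXs hYs
      exact (lt_div_iff₀' hα₂).2 this
    set mx := max q.1 (max Xs xlow) with hmxd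
    have hmxlt : mx < r₂ / α₂ := max_lt hq1lt (max_lt hXslt hxlowlt)
    set xb := (mx + r₂ / α₂) / 2 with hxbd
    have hmxxb : mx ≤ xb := by rw [hxbd]; linarith
    have hxblt : xb < r₂ / α₂ := by rw [hxbd]; linarith
    have hxbpos : 0 < xb := by
      have := le_max_left q.1 (max Xs xlow)
      rw [hxbd]; have h0 : 0 < mx := lt_of_lt_of_le hq1 this; linarith [hmxlt]
    have hxbXs : Xs ≤ xb := le_trans (le_trans (le_max_left Xs xlow) (le_max_right _ _)) hmxxb
    have hxbxlow : xlow ≤ xb := le_trans (le_trans (le_max_right Xs xlow) (le_max_right _ _)) hmxxb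
    have hαxb : α₂ * xb < r₂ := (lt_div_iff₀' hα₂).1 hxblt
    set b : ℝ × ℝ := (xb, k r₂ K₂ α₂ xb) with hbd
    have hb2 : 0 < b.2 := by
      show 0 < k r₂ K₂ α₂ xb
      unfold k
      exact mul_pos (div_pos hK₂ hr₂) (by linarith)
    have hkxb : k r₂ K₂ α₂ xb ≤ q.2 := by
      have := k_anti hr₂ hK₂ hα₂ hxbxlow
      rw [k_inv hr₂ hK₂ hα₂] at this
      exact this
    have hbR2 : r₂ / K₂ * b.2 + α₂ * b.1 ≤ r₂ := (le_k_iff hr₂ hK₂ hα₂).1 le_rfl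
    have hbR1 : r₁ ≤ r₁ / K₁ * b.1 + α₁ * b.2 := by
      apply (h_le_iff hr₁ hK₁ hα₁).1
      have hd := hk_diff hr₁ hr₂ hK₁ hK₂ hα₁ hα₂ hC12 hC21 hXs xb
      show h r₁ K₁ α₁ xb ≤ k r₂ K₂ α₂ xb
      have hnn : (r₁ * r₂ - α₁ * α₂ * K₁ * K₂) / (α₁ * K₁ * r₂) * (Xs - xb) ≤ 0 := by
        nlinarith
      linarith
    obtain ⟨hAb, hAt⟩ := R4_orbit hr₁ hr₂ hK₁ hK₂ hα₁ hα₂ hC12 hC21 hXs hYs a hxa0 ha2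
      haR1 haR2
    obtain ⟨hBb, hBt⟩ := R2_orbit hr₁ hr₂ hK₁ hK₂ hα₁ hα₂ hC12 hC21 hXs hYs b hxbpos hb2
      hbR1 hbR2
    have hsand := orbit_sandwich hr₁ hr₂ hK₁ hK₂ hα₁ hα₂ a b q hxa0 ha2 hxbpos hb2 hq1 hq2
      hxaq (le_trans (le_max_left _ _) hmxxb) hkxb hhxa
    have hA1 : Tendsto (fun t => (Tm^[t] a).1) atTop (𝓝 Xs) :=
      (continuous_fst.tendsto (Xs, Ys)).comp hAt
    have hB1 : Tendsto (fun t => (Tm^[t] b).1) atTop (𝓝 Xs) :=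
      (continuous_fst.tendsto (Xs, Ys)).comp hBt
    have hA2 : Tendsto (fun t => (Tm^[t] a).2) atTop (𝓝 Ys) :=
      (continuous_snd.tendsto (Xs, Ys)).comp hAt
    have hB2 : Tendsto (fun t => (Tm^[t] b).2) atTop (𝓝 Ys) :=
      (continuous_snd.tendsto (Xs, Ys)).comp hBt
    have hQ1 : Tendsto (fun t => (Tm^[t] q).1) atTop (𝓝 Xs) :=
      tendsto_of_tendsto_of_tendsto_of_le_of_le hA1 hB1
        (fun t => (hsand t).1) (fun t => (hsand t).2.1)
    have hQ2 : Tendsto (fun t => (Tm^[t] q).2) atTop (𝓝 Ys) :=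
      tendsto_of_tendsto_of_tendsto_of_le_of_le hB2 hA2
        (fun t => (hsand t).2.2.1) (fun t => (hsand t).2.2.2)
    have hQ : Tendsto (fun t => Tm^[t] q) atTop (𝓝 (Xs, Ys)) := by
      have := hQ1.prodMk_nhds hQ2
      convert this using 1
    rw [← tendsto_add_atTop_iff_nat N]
    have : (fun t => Tm^[t + N] p) = fun t => Tm^[t] q := by
      funext t
      rw [hqd, ← Function.iterate_add_apply]
    rw [this]
    exact hQ
end
end
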